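/- arXiv:1105.5313 — 4 statements merged into one kernel-verified Lean document; each statement's English description precedes it below -/
import Mathlib

section
/- For every order-preserving non-decreasing transformation α of {1,...,n}, among all permutations w with left-to-right maximum function α_w = α, the unique 321-avoiding one is the unique minimal element with respect to the Bruhat order; moreover the set {w : α_w = α} contains a unique 312-avoiding permutation, and that permutation is the unique Bruhat-maximal element of the set. -/
open Pointwise

/-- The simple transposition `(i, i+1)` in the symmetric group on `Fin n`. -/
def simpleT {n : ℕ} (i : Fin (n - 1)) : Equiv.Perm (Fin n) :=
  Equiv.swap ⟨i.1, by have := i.2; omega⟩ ⟨i.1 + 1, by have := i.2; omega⟩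

/-- Defining relations of the 0-Hecke monoid. -/
def heckeRels (n : ℕ) : Set (FreeMonoid (Fin (n - 1)) × FreeMonoid (Fin (n - 1))) :=
  {p | (∃ i, p = (FreeMonoid.of i * FreeMonoid.of i, FreeMonoid.of i)) ∨
       (∃ i j, i.1 + 2 ≤ j.1 ∧
          p = (FreeMonoid.of i * FreeMonoid.of j, FreeMonoid.of j * FreeMonoid.of i)) ∨
       (∃ i j, j.1 = i.1 + 1 ∧
          p = (FreeMonoid.of i * FreeMonoid.of j * FreeMonoid.of i,
               FreeMonoid.of j * FreeMonoid.of i * FreeMonoid.of j))}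

/-- The congruence on the free monoid generated by the 0-Hecke relations. -/
def heckeCon (n : ℕ) : Con (FreeMonoid (Fin (n - 1))) :=
  conGen (fun a b => (a, b) ∈ heckeRels n)

/-- The 0-Hecke monoid `H_n`. -/
abbrev Hecke (n : ℕ) := (heckeCon n).Quotient

/-- The generator `e_i` of the 0-Hecke monoid. -/
def heckeGen (n : ℕ) (i : Fin (n - 1)) : Hecke n := (heckeCon n).mk' (FreeMonoid.of i)

/-- Binary relations on `Fin n` (equivalently, `n × n` Boolean matrices),
with `ξ i j` meaning the `(i,j)` entry is `1`. -/
abbrev BRel (n : ℕ) := Fin n → Fin n → Prop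

/-- The monoid of binary relations / Boolean matrices, under relational
composition (= Boolean matrix multiplication). -/
instance BRel.instMonoid (n : ℕ) : Monoid (BRel n) where
  mul r s := fun i j => ∃ k, r i k ∧ s k j
  one := fun i j => i = j
  mul_assoc r s t := by
    funext i j
    show (∃ k, (∃ m, r i m ∧ s m k) ∧ t k j) = (∃ m, r i m ∧ ∃ k, s m k ∧ t k j)
    apply propext; tauto
  one_mul r := by
    funext i j
    show (∃ k, i = k ∧ r k j) = r i j
    apply propext
    constructor
    · rintro ⟨k, rfl, h⟩; exact h
    · intro h; exact ⟨i, rfl, h⟩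
  mul_one r := by
    funext i j
    show (∃ k, r i k ∧ k = j) = r i j
    apply propext
    constructor
    · rintro ⟨k, h, rfl⟩; exact h
    · intro h; exact ⟨j, h, rfl⟩

theorem BRel.mul_def {n : ℕ} (r s : BRel n) (i j : Fin n) :
    (r * s) i j ↔ ∃ k, r i k ∧ s k j := Iff.rfl

theorem BRel.one_def {n : ℕ} (i j : Fin n) : (1 : BRel n) i j ↔ i = j := Iff.rfl

/-- The generator `ε_i = Φ(id) + Φ(s_i)` of the double Catalan monoid:
the identity matrix plus extra `1` entries at `(i, i+1)` and `(i+1, i)`. -/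
def eps {n : ℕ} (i : Fin (n - 1)) : BRel n := fun a b => a = b ∨ a = simpleT i b

/-- The double Catalan monoid `DC_n`, the submonoid of Boolean matrices
generated by the `ε_i`. -/
def DC (n : ℕ) : Submonoid (BRel n) := Submonoid.closure (Set.range (eps (n := n)))

open Classical in
/-- `max(ξ)(j)` : the largest row index `i` with `ξ i j` (for a reflexive
relation; the diagonal element `j` is thrown in to guarantee nonemptiness). -/
noncomputable def maxF {n : ℕ} (ξ : BRel n) (j : Fin n) : Fin n :=
  (insert j (Finset.univ.filter fun i => ξ i j)).max' (Finset.insert_nonempty _ _)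

open Classical in
/-- `min(ξ)(j)` : the smallest row index `i` with `ξ i j`. -/
noncomputable def minF {n : ℕ} (ξ : BRel n) (j : Fin n) : Fin n :=
  (insert j (Finset.univ.filter fun i => ξ i j)).min' (Finset.insert_nonempty _ _)

/-- A set of `Fin n` is an interval of consecutive integers. -/
def IsIntervalSet {n : ℕ} (S : Set (Fin n)) : Prop :=
  ∀ ⦃a b c : Fin n⦄, a ≤ b → b ≤ c → a ∈ S → c ∈ S → b ∈ S

/-- A binary relation is convex if it is reflexive and all its rows and
columns are intervals. -/
def IsConvexRel {n : ℕ} (ξ : BRel n) : Prop :=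
  (∀ i, ξ i i) ∧ (∀ j, IsIntervalSet {i | ξ i j}) ∧ (∀ j, IsIntervalSet {i | ξ j i})

/-- The left-to-right maximum function `α_w`. -/
def lrMax {n : ℕ} (w : Equiv.Perm (Fin n)) (j : Fin n) : Fin n :=
  (Finset.Iic j).sup' ⟨j, Finset.mem_Iic.2 le_rfl⟩ (fun k => w k)

/-- The right-to-left minimum function `β_w`. -/
def rlMin {n : ℕ} (w : Equiv.Perm (Fin n)) (j : Fin n) : Fin n :=
  (Finset.Ici j).inf' ⟨j, Finset.mem_Ici.2 le_rfl⟩ (fun k => w k)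

/-- The Boolean matrix `Ψ(z_w)`, the image of `w` in the double Catalan
monoid: the `(i,j)` entry is `1` iff `β_w(j) ≤ i ≤ α_w(j)`. -/
def psiMat {n : ℕ} (w : Equiv.Perm (Fin n)) : BRel n :=
  fun i j => rlMin w j ≤ i ∧ i ≤ lrMax w j

/-- `l` is a reduced word for the permutation `w`. -/
def IsRedWord {n : ℕ} (w : Equiv.Perm (Fin n)) (l : List (Fin (n - 1))) : Prop :=
  (l.map simpleT).prod = w ∧
    ∀ l' : List (Fin (n - 1)), (l'.map simpleT).prod = w → l.length ≤ l'.length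

/-- The Bruhat order on the symmetric group, via the subword property. -/
def bruhatLE {n : ℕ} (u w : Equiv.Perm (Fin n)) : Prop :=
  ∃ lw, IsRedWord w lw ∧ ∃ lu, lu.Sublist lw ∧ IsRedWord u lu

/-- `w` is 321-avoiding. -/
def Avoids321 {n : ℕ} (w : Equiv.Perm (Fin n)) : Prop :=
  ¬ ∃ i j k : Fin n, i < j ∧ j < k ∧ w k < w j ∧ w j < w i

/-- `w` is 312-avoiding. -/
def Avoids312 {n : ℕ} (w : Equiv.Perm (Fin n)) : Prop :=
  ¬ ∃ i j k : Fin n, i < j ∧ j < k ∧ w j < w k ∧ w k < w i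

/-- `w` is 4321-avoiding. -/
def Avoids4321 {n : ℕ} (w : Equiv.Perm (Fin n)) : Prop :=
  ¬ ∃ i j k l : Fin n, i < j ∧ j < k ∧ k < l ∧ w l < w k ∧ w k < w j ∧ w j < w i

/-- The monoid `C_n^+` of order-preserving non-decreasing transformations. -/
def Cplus (n : ℕ) : Submonoid (Function.End (Fin n)) where
  carrier := {f | Monotone f ∧ ∀ i, i ≤ f i}
  one_mem' := ⟨monotone_id, fun _ => le_rfl⟩
  mul_mem' := by
    rintro f g ⟨hf1, hf2⟩ ⟨hg1, hg2⟩
    exact ⟨hf1.comp hg1, fun i => (hg2 i).trans (hf2 (g i))⟩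

/-- The monoid `C_n^-` of order-preserving non-increasing transformations. -/
def Cminus (n : ℕ) : Submonoid (Function.End (Fin n)) where
  carrier := {f | Monotone f ∧ ∀ i, f i ≤ i}
  one_mem' := ⟨monotone_id, fun _ => le_rfl⟩
  mul_mem' := by
    rintro f g ⟨hf1, hf2⟩ ⟨hg1, hg2⟩
    exact ⟨hf1.comp hg1, fun i => (hf2 (g i)).trans (hg2 i)⟩

namespace S8
variable {n : ℕ}

/-- The set of inversions of a permutation. -/
def invF (v : Equiv.Perm (Fin n)) : Finset (Fin n × Fin n) :=
  Finset.univ.filter (fun p => p.1 < p.2 ∧ v p.2 < v p.1)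

def invN (v : Equiv.Perm (Fin n)) : ℕ := (invF v).card

lemma mem_invF {v : Equiv.Perm (Fin n)} {p : Fin n × Fin n} :
    p ∈ invF v ↔ p.1 < p.2 ∧ v p.2 < v p.1 := by
  simp [invF]

lemma invN_one : invN (1 : Equiv.Perm (Fin n)) = 0 := by
  rw [invN, Finset.card_eq_zero, invF, Finset.filter_eq_empty_iff]
  rintro p - ⟨h1, h2⟩
  simp only [Equiv.Perm.one_apply] at h2
  exact absurd h2 (not_lt.2 h1.le)

lemma mul_swap_eq (v : Equiv.Perm (Fin n)) (a b : Fin n) :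
    v * Equiv.swap a b = Equiv.swap (v a) (v b) * v := by
  rw [Equiv.swap_apply_apply]; group

end S8

section Cover
variable {n : ℕ}

def Fmap (a b : Fin n) (p : Fin n × Fin n) : Fin n × Fin n :=
  if p.2 = a ∧ p.1 < a then (p.1, b)
  else if p.2 = b ∧ p.1 < a then (p.1, a)
  else if p.1 = a ∧ b < p.2 then (b, p.2)
  else if p.1 = b ∧ b < p.2 then (a, p.2)
  else p

lemma swap_ne_ne {a b x : Fin n} (h1 : x ≠ a) (h2 : x ≠ b) : Equiv.swap a b x = x :=
  Equiv.swap_apply_of_ne_of_ne h1 h2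

lemma Fmap_eq1 {a b x : Fin n} (hx : x < a) : Fmap a b (x, a) = (x, b) := by
  simp [Fmap, hx]

lemma Fmap_eq2 {a b x : Fin n} (hab : a < b) (hx : x < a) : Fmap a b (x, b) = (x, a) := by
  have : ¬ (b = a) := hab.ne'
  simp [Fmap, hx, this]

lemma Fmap_eq3 {a b y : Fin n} (hab : a < b) (hy : b < y) : Fmap a b (a, y) = (b, y) := by
  have h1 : ¬ (y = a) := (hab.trans hy).ne'
  have h2 : ¬ (y = b) := hy.ne'
  simp [Fmap, h1, h2, hy]

lemma Fmap_eq4 {a b y : Fin n} (hab : a < b) (hy : b < y) : Fmap a b (b, y) = (a, y) := by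
  have h1 : ¬ (y = a) := (hab.trans hy).ne'
  have h2 : ¬ (y = b) := hy.ne'
  have h3 : ¬ (b = a) := hab.ne'
  simp [Fmap, h1, h2, h3, hy]

lemma Fmap_eq5 {a b : Fin n} {x y : Fin n} (c1 : ¬(y = a ∧ x < a)) (c2 : ¬(y = b ∧ x < a))
    (c3 : ¬(x = a ∧ b < y)) (c4 : ¬(x = b ∧ b < y)) : Fmap a b (x, y) = (x, y) := by
  simp only [Fmap]
  rw [if_neg c1, if_neg c2, if_neg c3, if_neg c4]

lemma Fmap_invol {a b : Fin n} (hab : a < b) (p : Fin n × Fin n) (hp : p.1 < p.2) :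
    Fmap a b (Fmap a b p) = p := by
  obtain ⟨x, y⟩ := p
  simp only at hp
  by_cases h1 : y = a ∧ x < a
  · obtain ⟨rfl, hx⟩ := h1
    rw [Fmap_eq1 hx, Fmap_eq2 hab hx]
  by_cases h2 : y = b ∧ x < a
  · obtain ⟨rfl, hx⟩ := h2
    rw [Fmap_eq2 hab hx, Fmap_eq1 hx]
  by_cases h3 : x = a ∧ b < y
  · obtain ⟨rfl, hy⟩ := h3
    rw [Fmap_eq3 hab hy, Fmap_eq4 hab hy]
  by_cases h4 : x = b ∧ b < y
  · obtain ⟨rfl, hy⟩ := h4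
    rw [Fmap_eq4 hab hy, Fmap_eq3 hab hy]
  rw [Fmap_eq5 h1 h2 h3 h4, Fmap_eq5 h1 h2 h3 h4]

lemma Fmap_mem_forward {v : Equiv.Perm (Fin n)} {a b : Fin n} (hab : a < b) (hv : v b < v a)
    {p : Fin n × Fin n} (hp : p ∈ S8.invF (v * Equiv.swap a b)) :
    Fmap a b p ∈ (S8.invF v).erase (a, b) := by
  obtain ⟨x, y⟩ := p
  obtain ⟨hxy, hvp⟩ := S8.mem_invF.1 hp
  simp only at hxy
  simp only [Equiv.Perm.mul_apply] at hvp
  by_cases h1 : y = a ∧ x < a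
  · obtain ⟨rfl, hxa⟩ := h1
    rw [Fmap_eq1 hxa]
    rw [Equiv.swap_apply_left, swap_ne_ne hxa.ne (hxa.trans hab).ne] at hvp
    exact Finset.mem_erase.2 ⟨fun h => hxa.ne (congrArg Prod.fst h),
      S8.mem_invF.2 ⟨hxa.trans hab, hvp⟩⟩
  by_cases h2 : y = b ∧ x < a
  · obtain ⟨rfl, hxa⟩ := h2
    rw [Fmap_eq2 hab hxa]
    rw [Equiv.swap_apply_right, swap_ne_ne hxa.ne (hxa.trans hab).ne] at hvp
    exact Finset.mem_erase.2 ⟨fun h => hab.ne (congrArg Prod.snd h),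
      S8.mem_invF.2 ⟨hxa, hvp⟩⟩
  by_cases h3 : x = a ∧ b < y
  · obtain ⟨rfl, hby⟩ := h3
    rw [Fmap_eq3 hab hby]
    rw [Equiv.swap_apply_left, swap_ne_ne (hab.trans hby).ne' hby.ne'] at hvp
    exact Finset.mem_erase.2 ⟨fun h => hab.ne' (congrArg Prod.fst h),
      S8.mem_invF.2 ⟨hby, hvp⟩⟩
  by_cases h4 : x = b ∧ b < y
  · obtain ⟨rfl, hby⟩ := h4
    rw [Fmap_eq4 hab hby]
    rw [Equiv.swap_apply_right, swap_ne_ne (hab.trans hby).ne' hby.ne'] at hvp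
    exact Finset.mem_erase.2 ⟨fun h => hby.ne' (congrArg Prod.snd h),
      S8.mem_invF.2 ⟨hab.trans hby, hvp⟩⟩
  rw [Fmap_eq5 h1 h2 h3 h4]
  have hya : y ≠ a := fun h => h1 ⟨h, h ▸ hxy⟩
  have hxb : x ≠ b := fun h => h4 ⟨h, h ▸ hxy⟩
  have key : v y < v x := by
    by_cases hyb : y = b
    · subst hyb
      have hxa : ¬ x < a := fun h => h2 ⟨rfl, h⟩
      have hxa' : x ≠ a := by
        intro h
        rw [h, Equiv.swap_apply_right, Equiv.swap_apply_left] at hvp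
        exact absurd hvp (not_lt.2 hv.le)
      rw [Equiv.swap_apply_right, swap_ne_ne hxa' hxb] at hvp
      exact hv.trans hvp
    · by_cases hxa : x = a
      · subst hxa
        rw [Equiv.swap_apply_left, swap_ne_ne hya hyb] at hvp
        exact hvp.trans hv
      · rw [swap_ne_ne hya hyb, swap_ne_ne hxa hxb] at hvp
        exact hvp
  refine Finset.mem_erase.2 ⟨?_, S8.mem_invF.2 ⟨hxy, key⟩⟩
  intro h
  have hx : x = a := congrArg Prod.fst h
  have hy : y = b := congrArg Prod.snd h
  subst hx; subst hy
  rw [Equiv.swap_apply_left, Equiv.swap_apply_right] at hvp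
  exact absurd hvp (not_lt.2 hv.le)

lemma Fmap_mem_backward {v : Equiv.Perm (Fin n)} {a b : Fin n} (hab : a < b) (hv : v b < v a)
    (hbet : ∀ m, a < m → m < b → v m < v b ∨ v a < v m)
    {p : Fin n × Fin n} (hp : p ∈ (S8.invF v).erase (a, b)) :
    Fmap a b p ∈ S8.invF (v * Equiv.swap a b) := by
  obtain ⟨x, y⟩ := p
  obtain ⟨hne, hmem⟩ := Finset.mem_erase.1 hp
  obtain ⟨hxy, hvp⟩ := S8.mem_invF.1 hmem
  simp only at hxy hvp
  by_cases h1 : y = a ∧ x < a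
  · obtain ⟨rfl, hxa⟩ := h1
    rw [Fmap_eq1 hxa]
    refine S8.mem_invF.2 ⟨hxa.trans hab, ?_⟩
    simp only [Equiv.Perm.mul_apply]
    rw [Equiv.swap_apply_right, swap_ne_ne hxa.ne (hxa.trans hab).ne]
    exact hvp
  by_cases h2 : y = b ∧ x < a
  · obtain ⟨rfl, hxa⟩ := h2
    rw [Fmap_eq2 hab hxa]
    refine S8.mem_invF.2 ⟨hxa, ?_⟩
    simp only [Equiv.Perm.mul_apply]
    rw [Equiv.swap_apply_left, swap_ne_ne hxa.ne (hxa.trans hab).ne]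
    exact hvp
  by_cases h3 : x = a ∧ b < y
  · obtain ⟨rfl, hby⟩ := h3
    rw [Fmap_eq3 hab hby]
    refine S8.mem_invF.2 ⟨hby, ?_⟩
    simp only [Equiv.Perm.mul_apply]
    rw [Equiv.swap_apply_right, swap_ne_ne (hab.trans hby).ne' hby.ne']
    exact hvp
  by_cases h4 : x = b ∧ b < y
  · obtain ⟨rfl, hby⟩ := h4
    rw [Fmap_eq4 hab hby]
    refine S8.mem_invF.2 ⟨hab.trans hby, ?_⟩
    simp only [Equiv.Perm.mul_apply]
    rw [Equiv.swap_apply_left, swap_ne_ne (hab.trans hby).ne' hby.ne']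
    exact hvp
  rw [Fmap_eq5 h1 h2 h3 h4]
  refine S8.mem_invF.2 ⟨hxy, ?_⟩
  simp only [Equiv.Perm.mul_apply]
  have hya : y ≠ a := fun h => h1 ⟨h, h ▸ hxy⟩
  have hxb : x ≠ b := fun h => h4 ⟨h, h ▸ hxy⟩
  by_cases hyb : y = b
  · subst hyb
    have hxa : ¬ x < a := fun h => h2 ⟨rfl, h⟩
    have hxa' : x ≠ a := fun h => hne (by rw [h])
    rw [Equiv.swap_apply_right, swap_ne_ne hxa' hxb]
    rcases hbet x (lt_of_le_of_ne (not_lt.1 hxa) (Ne.symm hxa')) hxy with h | h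
    · exact absurd hvp (not_lt.2 h.le)
    · exact h
  · by_cases hxa : x = a
    · subst hxa
      have hby : ¬ b < y := fun h => h3 ⟨rfl, h⟩
      rw [Equiv.swap_apply_left, swap_ne_ne hya hyb]
      rcases hbet y hxy (lt_of_le_of_ne (not_lt.1 hby) hyb) with h | h
      · exact h
      · exact absurd hvp (not_lt.2 h.le)
    · rw [swap_ne_ne hya hyb, swap_ne_ne hxa hxb]
      exact hvp

lemma cover_invN {v : Equiv.Perm (Fin n)} {a b : Fin n} (hab : a < b) (hv : v b < v a)
    (hbet : ∀ m, a < m → m < b → v m < v b ∨ v a < v m) :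
    S8.invN (v * Equiv.swap a b) + 1 = S8.invN v := by
  have hcard : (S8.invF (v * Equiv.swap a b)).card = ((S8.invF v).erase (a, b)).card := by
    apply Finset.card_bij' (fun p _ => Fmap a b p) (fun p _ => Fmap a b p)
    · intro p hp; exact Fmap_mem_forward hab hv hp
    · intro p hp; exact Fmap_mem_backward hab hv hbet hp
    · intro p hp
      exact Fmap_invol hab p (S8.mem_invF.1 hp).1
    · intro p hp
      exact Fmap_invol hab p (S8.mem_invF.1 (Finset.mem_erase.1 hp).2).1
  have hmem : (a, b) ∈ S8.invF v := S8.mem_invF.2 ⟨hab, hv⟩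
  rw [S8.invN, S8.invN, hcard, Finset.card_erase_add_one hmem]

end Cover

section Words
variable {n : ℕ}

lemma adj_flip {P Q x y : Fin n} (hQ : Q.1 = P.1 + 1) (hxy : x < y)
    (h : Equiv.swap P Q y < Equiv.swap P Q x) : x = P ∧ y = Q := by
  have hs : ∀ z : Fin n, ((Equiv.swap P Q) z).1 =
      if z.1 = P.1 then Q.1 else if z.1 = Q.1 then P.1 else z.1 := by
    intro z
    by_cases h1 : z = P
    · rw [h1, Equiv.swap_apply_left, if_pos rfl]
    · have h1' : z.1 ≠ P.1 := fun hh => h1 (Fin.ext hh)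
      by_cases h2 : z = Q
      · rw [h2, Equiv.swap_apply_right, if_neg (by omega), if_pos rfl]
      · have h2' : z.1 ≠ Q.1 := fun hh => h2 (Fin.ext hh)
        rw [swap_ne_ne h1 h2, if_neg h1', if_neg h2']
  have hxy' : x.1 < y.1 := hxy
  have h' : ((Equiv.swap P Q) y).1 < ((Equiv.swap P Q) x).1 := h
  rw [hs x, hs y] at h'
  refine ⟨Fin.ext ?_, Fin.ext ?_⟩ <;> (split_ifs at h' <;> omega)

lemma simpleT_eq_swap (i : Fin (n - 1)) :
    simpleT i = Equiv.swap (⟨i.1, by have := i.2; omega⟩ : Fin n) ⟨i.1 + 1, by have := i.2; omega⟩ :=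
  rfl

lemma strong_exchange (l : List (Fin (n - 1))) (a b : Fin n) (hab : a < b)
    (hv : (l.map simpleT).prod b < (l.map simpleT).prod a) :
    ∃ j < l.length,
      ((l.eraseIdx j).map simpleT).prod = (l.map simpleT).prod * Equiv.swap a b := by
  induction l with
  | nil =>
    exfalso
    simp only [List.map_nil, List.prod_nil, Equiv.Perm.one_apply] at hv
    exact absurd hv (not_lt.2 hab.le)
  | cons i l ih =>
    have hprod : ((i :: l).map simpleT).prod = simpleT i * (l.map simpleT).prod := by
      simp [List.prod_cons]
    set u := (l.map simpleT).prod with hu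
    rcases lt_trichotomy (u b) (u a) with hlt | heq | hgt
    · obtain ⟨j, hj, he⟩ := ih hlt
      refine ⟨j + 1, by simpa using Nat.succ_lt_succ hj, ?_⟩
      rw [List.eraseIdx_cons_succ, hprod]
      simp only [List.map_cons, List.prod_cons]
      rw [he, mul_assoc]
    · exact absurd (u.injective (heq ▸ rfl : u b = u a)) hab.ne'
    · -- the first letter swaps u a, u b
      rw [hprod] at hv
      simp only [Equiv.Perm.mul_apply, simpleT_eq_swap] at hv
      obtain ⟨hP, hQ⟩ := adj_flip (by simp) hgt hv
      refine ⟨0, by simp, ?_⟩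
      rw [List.eraseIdx_cons_zero, hprod, mul_assoc, S8.mul_swap_eq, hP, hQ,
        ← simpleT_eq_swap, ← mul_assoc]
      rw [simpleT_eq_swap i, Equiv.swap_mul_self, one_mul]

lemma invF_subset (i : Fin (n - 1)) (u : Equiv.Perm (Fin n)) :
    S8.invF (simpleT i * u) ⊆
      insert (u⁻¹ ⟨i.1, by have := i.2; omega⟩, u⁻¹ ⟨i.1 + 1, by have := i.2; omega⟩)
        (S8.invF u) := by
  intro p hp
  obtain ⟨x, y⟩ := p
  obtain ⟨hxy, hvp⟩ := S8.mem_invF.1 hp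
  simp only at hxy
  simp only [Equiv.Perm.mul_apply] at hvp
  rcases lt_trichotomy (u y) (u x) with hlt | heq | hgt
  · exact Finset.mem_insert_of_mem (S8.mem_invF.2 ⟨hxy, hlt⟩)
  · exact absurd (u.injective heq) hxy.ne'
  · rw [simpleT_eq_swap] at hvp
    obtain ⟨hP, hQ⟩ := adj_flip (by simp) hgt hvp
    have hx : x = u⁻¹ ⟨i.1, by have := i.2; omega⟩ := Equiv.Perm.eq_inv_iff_eq.2 hP
    have hy : y = u⁻¹ ⟨i.1 + 1, by have := i.2; omega⟩ := Equiv.Perm.eq_inv_iff_eq.2 hQ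
    rw [hx, hy]
    exact Finset.mem_insert_self _ _

lemma invN_mul_simpleT_le (i : Fin (n - 1)) (u : Equiv.Perm (Fin n)) :
    S8.invN (simpleT i * u) ≤ S8.invN u + 1 := by
  calc S8.invN (simpleT i * u) ≤ _ := Finset.card_le_card (invF_subset i u)
  _ ≤ S8.invN u + 1 := Finset.card_insert_le _ _

lemma invN_le_length (l : List (Fin (n - 1))) :
    S8.invN ((l.map simpleT).prod) ≤ l.length := by
  induction l with
  | nil => simp [S8.invN_one]
  | cons i l ih =>
    simp only [List.map_cons, List.prod_cons, List.length_cons]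
    calc S8.invN (simpleT i * (l.map simpleT).prod) ≤ _ := invN_mul_simpleT_le _ _
    _ ≤ l.length + 1 := by omega

lemma fin_le_apply {f : Fin n → Fin n} (hf : StrictMono f) (x : Fin n) : x ≤ f x := by
  obtain ⟨k, hk⟩ : ∃ k, x.1 = k := ⟨x.1, rfl⟩
  induction k using Nat.strong_induction_on generalizing x with
  | _ k ih =>
    rcases le_or_gt x (f x) with h | h
    · exact h
    · exfalso
      have hlt : (f x).1 < k := by have := Fin.lt_def.1 h; omega
      have h2 := ih (f x).1 hlt (f x) rfl
      exact absurd (h2.trans_lt (hf h)) (lt_irrefl _)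

lemma strictMono_perm_eq_one {v : Equiv.Perm (Fin n)} (hsm : StrictMono (v : Fin n → Fin n)) :
    v = 1 := by
  have hsm' : StrictMono (v.symm : Fin n → Fin n) := by
    intro x y hxy
    rcases lt_trichotomy (v.symm x) (v.symm y) with h1 | h1 | h1
    · exact h1
    · exact absurd (v.symm.injective h1) hxy.ne
    · exfalso
      have := hsm h1
      simp only [Equiv.apply_symm_apply] at this
      exact absurd hxy (not_lt.2 this.le)
  ext x
  have h1 : x ≤ v x := fin_le_apply hsm x
  have h2 : v x ≤ v.symm (v x) := fin_le_apply hsm' (v x)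
  simp only [Equiv.symm_apply_apply] at h2
  simp only [Equiv.Perm.one_apply]
  exact le_antisymm h2 h1

lemma eq_one_of_invN_zero {v : Equiv.Perm (Fin n)} (h : S8.invN v = 0) : v = 1 := by
  apply strictMono_perm_eq_one
  intro x y hxy
  rcases lt_trichotomy (v x) (v y) with h1 | h1 | h1
  · exact h1
  · exact absurd (v.injective h1) hxy.ne
  · exfalso
    have hmem : (x, y) ∈ S8.invF v := S8.mem_invF.2 ⟨hxy, h1⟩
    rw [S8.invN, Finset.card_eq_zero] at h
    simp [h] at hmem

lemma exists_adj_descent {v : Equiv.Perm (Fin n)} (hv : v ≠ 1) :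
    ∃ i : Fin (n - 1), v⁻¹ ⟨i.1 + 1, by have := i.2; omega⟩ < v⁻¹ ⟨i.1, by have := i.2; omega⟩ := by
  by_contra hcon
  push_neg at hcon
  apply hv
  have hsm : StrictMono (v⁻¹ : Equiv.Perm (Fin n)) := by
    have step : ∀ k : ℕ, ∀ (hk : k + 1 < n),
        (v⁻¹ : Equiv.Perm (Fin n)) ⟨k, by omega⟩ < v⁻¹ ⟨k + 1, hk⟩ := by
      intro k hk
      have hkn : k < n - 1 := by omega
      have h := hcon ⟨k, hkn⟩
      have hne : (v⁻¹ : Equiv.Perm (Fin n)) ⟨k, by omega⟩ ≠ v⁻¹ ⟨k + 1, hk⟩ := by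
        intro hh
        have := v⁻¹.injective hh
        simp [Fin.ext_iff] at this
      exact lt_of_le_of_ne h hne
    have key : ∀ d : ℕ, ∀ x y : Fin n, y.1 = x.1 + d + 1 →
        (v⁻¹ : Equiv.Perm (Fin n)) x < v⁻¹ y := by
      intro d
      induction d with
      | zero =>
        intro x y hxy'
        have hyn : y.1 < n := y.isLt
        have hx1 : x.1 + 1 < n := by omega
        have hy : y = ⟨x.1 + 1, hx1⟩ := Fin.ext (by simp only [Fin.val_mk]; omega)
        rw [hy]
        exact step x.1 hx1
      | succ d ihd =>
        intro x y hxy'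
        have hyn : y.1 < n := y.isLt
        have hy1 : y.1 - 1 < n := by omega
        have h1 : (v⁻¹ : Equiv.Perm (Fin n)) x < v⁻¹ ⟨y.1 - 1, hy1⟩ :=
          ihd x ⟨y.1 - 1, hy1⟩ (by simp only [Fin.val_mk]; omega)
        have hsn : y.1 - 1 + 1 < n := by omega
        have h3 := step (y.1 - 1) hsn
        have hy : y = ⟨y.1 - 1 + 1, hsn⟩ := Fin.ext (by simp only [Fin.val_mk]; omega)
        rw [← hy] at h3
        exact h1.trans h3
    intro x y hxy
    exact key (y.1 - x.1 - 1) x y (by have : x.1 < y.1 := hxy; omega)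
  have := strictMono_perm_eq_one (v := v⁻¹) hsm
  rwa [inv_eq_one] at this

end Words

section RedWords
variable {n : ℕ}

lemma exists_word_invN (v : Equiv.Perm (Fin n)) :
    ∃ l : List (Fin (n - 1)), (l.map simpleT).prod = v ∧ l.length = S8.invN v := by
  obtain ⟨k, hk⟩ : ∃ k, S8.invN v = k := ⟨_, rfl⟩
  induction k using Nat.strong_induction_on generalizing v with
  | _ k ih =>
  subst hk
  by_cases h1 : S8.invN v = 0
  · exact ⟨[], by simp [eq_one_of_invN_zero h1], by simp [h1]⟩
  · have hv : v ≠ 1 := fun h => h1 (by rw [h, S8.invN_one])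
    obtain ⟨i, hi⟩ := exists_adj_descent hv
    obtain ⟨P, hP⟩ : ∃ P : Fin n, P = ⟨i.1, by have := i.2; omega⟩ := ⟨_, rfl⟩
    obtain ⟨Q, hQ⟩ : ∃ Q : Fin n, Q = ⟨i.1 + 1, by have := i.2; omega⟩ := ⟨_, rfl⟩
    obtain ⟨a, ha⟩ : ∃ a, a = v⁻¹ Q := ⟨_, rfl⟩
    obtain ⟨b, hb⟩ : ∃ b, b = v⁻¹ P := ⟨_, rfl⟩
    have hab : a < b := by rw [ha, hb, hP, hQ]; exact hi
    have hva : v a = Q := by rw [ha]; exact v.apply_symm_apply Q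
    have hvb : v b = P := by rw [hb]; exact v.apply_symm_apply P
    have hPQ : P < Q := Fin.lt_def.2 (by rw [hP, hQ]; simp)
    have hvv : v b < v a := by rw [hva, hvb]; exact hPQ
    have hbet : ∀ m, a < m → m < b → v m < v b ∨ v a < v m := by
      intro m h1' h2'
      have hma : m ≠ a := h1'.ne'
      have hmb : m ≠ b := h2'.ne
      have h3 : v m ≠ P := fun hh => hmb (by rw [← hvb] at hh; exact v.injective hh)
      have h4 : v m ≠ Q := fun hh => hma (by rw [← hva] at hh; exact v.injective hh)
      rw [hva, hvb]
      rcases h3.lt_or_gt with h | h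
      · exact Or.inl h
      · right
        have hh1 : P.1 < (v m).1 := h
        have hh2 : (v m).1 ≠ Q.1 := fun hh => h4 (Fin.ext hh)
        have hh3 : Q.1 = P.1 + 1 := by rw [hP, hQ]
        exact Fin.lt_def.2 (by omega)
    have hcov := cover_invN hab hvv hbet
    have hswap : v * Equiv.swap a b = simpleT i * v := by
      rw [S8.mul_swap_eq, hva, hvb, simpleT_eq_swap i, ← hP, ← hQ, Equiv.swap_comm]
    obtain ⟨l, hl1, hl2⟩ := ih (S8.invN (v * Equiv.swap a b)) (by omega) _ rfl
    refine ⟨i :: l, ?_, ?_⟩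
    · simp only [List.map_cons, List.prod_cons, hl1, hswap]
      rw [← mul_assoc, simpleT_eq_swap i, ← hP, ← hQ, Equiv.swap_mul_self, one_mul]
    · simp only [List.length_cons, hl2]
      omega

lemma isRedWord_iff {v : Equiv.Perm (Fin n)} {l : List (Fin (n - 1))} :
    IsRedWord v l ↔ (l.map simpleT).prod = v ∧ l.length = S8.invN v := by
  constructor
  · rintro ⟨h1, h2⟩
    refine ⟨h1, le_antisymm ?_ ?_⟩
    · obtain ⟨l0, hl0, hlen⟩ := exists_word_invN v
      exact (h2 l0 hl0).trans hlen.le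
    · rw [← h1]; exact invN_le_length l
  · rintro ⟨h1, h2⟩
    refine ⟨h1, fun l' hl' => ?_⟩
    rw [h2, ← hl']
    exact invN_le_length l'

lemma exists_redWord (v : Equiv.Perm (Fin n)) : ∃ l, IsRedWord v l := by
  obtain ⟨l, h1, h2⟩ := exists_word_invN v
  exact ⟨l, isRedWord_iff.2 ⟨h1, h2⟩⟩

def le' {n : ℕ} (u w : Equiv.Perm (Fin n)) : Prop :=
  ∀ l, IsRedWord w l → ∃ l', l'.Sublist l ∧ IsRedWord u l'

lemma le'_refl (u : Equiv.Perm (Fin n)) : le' u u := fun l hl => ⟨l, List.Sublist.refl l, hl⟩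

lemma le'_trans {u v w : Equiv.Perm (Fin n)} (h1 : le' u v) (h2 : le' v w) : le' u w := by
  intro l hl
  obtain ⟨l1, hs1, hr1⟩ := h2 l hl
  obtain ⟨l2, hs2, hr2⟩ := h1 l1 hr1
  exact ⟨l2, hs2.trans hs1, hr2⟩

lemma le'_bruhat {u w : Equiv.Perm (Fin n)} (h : le' u w) : bruhatLE u w := by
  obtain ⟨l, hl⟩ := exists_redWord w
  obtain ⟨l', hs, hr⟩ := h l hl
  exact ⟨l, hl, l', hs, hr⟩

lemma le'_step {v : Equiv.Perm (Fin n)} {a b : Fin n} (hab : a < b) (hv : v b < v a)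
    (hcov : S8.invN (v * Equiv.swap a b) + 1 = S8.invN v) :
    le' (v * Equiv.swap a b) v := by
  intro l hl
  obtain ⟨h1, h2⟩ := isRedWord_iff.1 hl
  obtain ⟨j, hj, he⟩ := strong_exchange l a b hab (by rw [h1]; exact hv)
  refine ⟨l.eraseIdx j, List.eraseIdx_sublist l j,
    isRedWord_iff.2 ⟨by rw [he, h1], ?_⟩⟩
  have hlen := List.length_eraseIdx_add_one (by simpa using hj)
  omega

end RedWords

section Fiber
variable {n : ℕ}

lemma fib_le {v : Equiv.Perm (Fin n)} {α : Fin n → Fin n} (hfib : lrMax v = α) (j : Fin n) :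
    v j ≤ α j := by
  rw [← hfib]; exact Finset.le_sup' _ (Finset.mem_Iic.2 le_rfl)

lemma fib_le' {v : Equiv.Perm (Fin n)} {α : Fin n → Fin n} (hfib : lrMax v = α) {p j : Fin n}
    (h : p ≤ j) : v p ≤ α j := by
  rw [← hfib]; exact Finset.le_sup' _ (Finset.mem_Iic.2 h)

lemma fib_attain {v : Equiv.Perm (Fin n)} {α : Fin n → Fin n} (hfib : lrMax v = α) (j : Fin n) :
    ∃ p, p ≤ j ∧ v p = α j := by
  rw [← hfib]
  obtain ⟨p, hp, he⟩ := Finset.exists_mem_eq_sup' (⟨j, Finset.mem_Iic.2 le_rfl⟩ :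
    (Finset.Iic j).Nonempty) (fun k => v k)
  exact ⟨p, Finset.mem_Iic.1 hp, he.symm⟩

lemma down_move {v : Equiv.Perm (Fin n)} {α : Fin n → Fin n} (hmono : Monotone α)
    (hfib : lrMax v = α) {a b : Fin n} (hab : a < b) (hvv : v b < v a) (hva : v a < α a) :
    lrMax (v * Equiv.swap a b) = α := by
  funext m
  apply le_antisymm
  · apply Finset.sup'_le
    intro x hx
    have hxm : x ≤ m := Finset.mem_Iic.1 hx
    show v (Equiv.swap a b x) ≤ α m
    by_cases h1 : x = a
    · rw [h1, Equiv.swap_apply_left]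
      exact le_trans (le_trans hvv.le hva.le) (hmono (h1 ▸ hxm))
    · by_cases h2 : x = b
      · rw [h2, Equiv.swap_apply_right]
        exact le_trans (fib_le hfib a) (hmono (le_trans hab.le (h2 ▸ hxm)))
      · rw [swap_ne_ne h1 h2]
        exact le_trans (fib_le hfib x) (hmono hxm)
  · obtain ⟨p, hpm, hp⟩ := fib_attain hfib m
    have hpa : p ≠ a := by
      rintro rfl
      have h5 : v p < α m := hva.trans_le (hmono hpm)
      rw [hp] at h5
      exact absurd h5 (lt_irrefl _)
    have hpb : p ≠ b := by
      rintro rfl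
      have h1 : v p ≤ α a := le_trans hvv.le (fib_le hfib a)
      have h2 : α a ≤ α p := hmono hab.le
      have h3 : α p ≤ α m := hmono hpm
      rw [hp] at h1
      -- α m ≤ α a ≤ α p... v b < v a ≤ α a; v b = α m; α a ≤ α m so α m < α m
      exact absurd (lt_of_lt_of_le (lt_of_lt_of_le hvv (fib_le hfib a)) (le_trans h2 h3))
        (by rw [hp]; exact lt_irrefl _)
    have : v (Equiv.swap a b p) = α m := by rw [swap_ne_ne hpa hpb, hp]
    calc α m = (v * Equiv.swap a b) p := this.symm
    _ ≤ _ := Finset.le_sup' _ (Finset.mem_Iic.2 hpm)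

lemma up_move {v : Equiv.Perm (Fin n)} {α : Fin n → Fin n} (hmono : Monotone α)
    (hfib : lrMax v = α) {a b : Fin n} (hab : a < b) (hvv : v a < v b) (hvb : v b ≤ α a) :
    lrMax (v * Equiv.swap a b) = α := by
  funext m
  apply le_antisymm
  · apply Finset.sup'_le
    intro x hx
    have hxm : x ≤ m := Finset.mem_Iic.1 hx
    show v (Equiv.swap a b x) ≤ α m
    by_cases h1 : x = a
    · rw [h1, Equiv.swap_apply_left]
      exact le_trans hvb (hmono (h1 ▸ hxm))
    · by_cases h2 : x = b
      · rw [h2, Equiv.swap_apply_right]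
        exact le_trans (le_trans hvv.le hvb) (hmono (le_trans hab.le (h2 ▸ hxm)))
      · rw [swap_ne_ne h1 h2]
        exact le_trans (fib_le hfib x) (hmono hxm)
  · obtain ⟨p, hpm, hp⟩ := fib_attain hfib m
    by_cases hpa : p = a
    · -- v a = α m, but v a < v b ≤ α a ≤ α m
      exfalso
      have h1 : v b ≤ α m := le_trans hvb (hmono (hpa ▸ hpm))
      rw [← hp, hpa] at h1
      exact absurd (hvv.trans_le h1) (lt_irrefl _)
    · by_cases hpb : p = b
      · -- α m = v b; use position a : (v * swap) a = v b
        have ham : a ≤ m := le_trans hab.le (hpb ▸ hpm)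
        have : v (Equiv.swap a b a) = α m := by rw [Equiv.swap_apply_left, ← hpb, hp]
        calc α m = (v * Equiv.swap a b) a := this.symm
        _ ≤ _ := Finset.le_sup' _ (Finset.mem_Iic.2 ham)
      · have : v (Equiv.swap a b p) = α m := by rw [swap_ne_ne hpa hpb, hp]
        calc α m = (v * Equiv.swap a b) p := this.symm
        _ ≤ _ := Finset.le_sup' _ (Finset.mem_Iic.2 hpm)

def StuckD {n : ℕ} (α : Fin n → Fin n) (v : Equiv.Perm (Fin n)) : Prop :=
  ∀ a b : Fin n, a < b → v b < v a → ¬ v a < α a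

def StuckU {n : ℕ} (α : Fin n → Fin n) (v : Equiv.Perm (Fin n)) : Prop :=
  ∀ a b : Fin n, a < b → v a < v b → ¬ v b ≤ α a

lemma stuckD_iff {v : Equiv.Perm (Fin n)} {α : Fin n → Fin n} (hmono : Monotone α)
    (hfib : lrMax v = α) : StuckD α v ↔ Avoids321 v := by
  constructor
  · rintro hst ⟨i, j, k, hij, hjk, h1, h2⟩
    have h3 : ¬ v j < α j := hst j k hjk h1
    have h4 : v j = α j := le_antisymm (fib_le hfib j) (not_lt.1 h3)
    exact absurd (h2.trans_le (fib_le' hfib hij.le)) (by rw [h4]; exact not_lt.2 le_rfl)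
  · intro hav a b hab hvb hva
    obtain ⟨p, hpa, hp⟩ := fib_attain hfib a
    have hpa' : p ≠ a := by rintro rfl; exact absurd (hp ▸ hva) (lt_irrefl _)
    exact hav ⟨p, a, b, lt_of_le_of_ne hpa hpa', hab, hvb, hp ▸ hva⟩

lemma stuckU_iff {v : Equiv.Perm (Fin n)} {α : Fin n → Fin n} (hmono : Monotone α)
    (hfib : lrMax v = α) : StuckU α v ↔ Avoids312 v := by
  constructor
  · rintro hst ⟨i, j, k, hij, hjk, h1, h2⟩
    have h3 : ¬ v k ≤ α j := hst j k hjk h1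
    exact h3 (le_trans h2.le (fib_le' hfib hij.le))
  · intro hav a b hab hvv hvb
    have hva : v a < α a := lt_of_lt_of_le hvv hvb
    obtain ⟨p, hpa, hp⟩ := fib_attain hfib a
    have hpa' : p ≠ a := by rintro rfl; exact absurd (hp ▸ hva) (lt_irrefl _)
    have hpk : v p ≠ v b := fun hh => (hab.trans_le' hpa).ne (v.injective hh)
    exact hav ⟨p, a, b, lt_of_le_of_ne hpa hpa', hab, hvv,
      lt_of_le_of_ne (hp ▸ hvb) (hp ▸ hpk.symm)⟩

lemma down_aux {v v' : Equiv.Perm (Fin n)} {α : Fin n → Fin n} (hmono : Monotone α)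
    (hfib : lrMax v = α) (hfib' : lrMax v' = α) (hst : StuckD α v) {j : Fin n}
    (hagree : ∀ m, m < j → v m = v' m) (hlt : v' j < v j) : False := by
  obtain ⟨k, hk⟩ : ∃ k, k = v⁻¹ (v' j) := ⟨_, rfl⟩
  have hvk : v k = v' j := by rw [hk]; exact v.apply_symm_apply _
  have hkj : k ≠ j := fun hh => absurd (hh ▸ hvk) hlt.ne'
  have hjk : j < k := by
    rcases lt_or_gt_of_ne hkj with h | h
    · exact absurd (v'.injective ((hagree k h).symm.trans hvk)) hkj
    · exact h
  have hvlt : v k < v j := hvk ▸ hlt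
  have hvj : v j = α j := le_antisymm (fib_le hfib j) (not_lt.1 (hst j k hjk hvlt))
  obtain ⟨p, hpj, hp⟩ := fib_attain hfib' j
  have hpj' : p ≠ j := fun hh => absurd (hh ▸ hp ▸ hvj ▸ hlt) (lt_irrefl _)
  have hplt : p < j := lt_of_le_of_ne hpj hpj'
  have : v p = v j := by rw [hagree p hplt, hp, hvj]
  exact absurd (v.injective this) hplt.ne

lemma up_aux {v v' : Equiv.Perm (Fin n)} {α : Fin n → Fin n} (hmono : Monotone α)
    (hfib : lrMax v = α) (hfib' : lrMax v' = α) (hst : StuckU α v) {j : Fin n}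
    (hagree : ∀ m, m < j → v m = v' m) (hlt : v j < v' j) : False := by
  obtain ⟨k, hk⟩ : ∃ k, k = v⁻¹ (v' j) := ⟨_, rfl⟩
  have hvk : v k = v' j := by rw [hk]; exact v.apply_symm_apply _
  have hkj : k ≠ j := fun hh => absurd (hh ▸ hvk) hlt.ne
  have hjk : j < k := by
    rcases lt_or_gt_of_ne hkj with h | h
    · exact absurd (v'.injective ((hagree k h).symm.trans hvk)) hkj
    · exact h
  have hvlt : v j < v k := hvk ▸ hlt
  exact hst j k hjk hvlt (hvk ▸ fib_le hfib' j)

lemma agree_of_min {v v' : Equiv.Perm (Fin n)} (hne : v ≠ v') :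
    ∃ j, v j ≠ v' j ∧ ∀ m, m < j → v m = v' m := by
  have hne' : ∃ x, v x ≠ v' x := by
    by_contra hc
    push_neg at hc
    exact hne (Equiv.ext hc)
  classical
  obtain ⟨x, hx⟩ := hne'
  set D := Finset.univ.filter (fun y => v y ≠ v' y) with hD
  have hDne : D.Nonempty := ⟨x, by simp [hD, hx]⟩
  refine ⟨D.min' hDne, by have := D.min'_mem hDne; simpa [hD] using this, ?_⟩
  intro m hm
  by_contra hc
  exact absurd (D.min'_le m (by simp [hD, hc])) (not_le.2 hm)

lemma stuckD_unique {v v' : Equiv.Perm (Fin n)} {α : Fin n → Fin n} (hmono : Monotone α)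
    (hfib : lrMax v = α) (hfib' : lrMax v' = α) (hst : StuckD α v) (hst' : StuckD α v') :
    v = v' := by
  by_contra hne
  obtain ⟨j, hj, hagree⟩ := agree_of_min hne
  rcases hj.lt_or_gt with h | h
  · exact down_aux hmono hfib' hfib hst' (fun m hm => (hagree m hm).symm) h
  · exact down_aux hmono hfib hfib' hst hagree h

lemma stuckU_unique {v v' : Equiv.Perm (Fin n)} {α : Fin n → Fin n} (hmono : Monotone α)
    (hfib : lrMax v = α) (hfib' : lrMax v' = α) (hst : StuckU α v) (hst' : StuckU α v') :
    v = v' := by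
  by_contra hne
  obtain ⟨j, hj, hagree⟩ := agree_of_min hne
  rcases hj.lt_or_gt with h | h
  · exact up_aux hmono hfib hfib' hst hagree h
  · exact up_aux hmono hfib' hfib hst' (fun m hm => (hagree m hm).symm) h

end Fiber

section Reach
variable {n : ℕ}

lemma exists_min_down {v : Equiv.Perm (Fin n)} {α : Fin n → Fin n}
    (h : ∃ a b : Fin n, a < b ∧ v b < v a ∧ v a < α a) :
    ∃ a b : Fin n, (a < b ∧ v b < v a ∧ v a < α a) ∧
      ∀ m, a < m → m < b → v m < v b ∨ v a < v m := by
  classical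
  set S : Finset (Fin n × Fin n) :=
    Finset.univ.filter (fun p => p.1 < p.2 ∧ v p.2 < v p.1 ∧ v p.1 < α p.1) with hS
  obtain ⟨a0, b0, hp⟩ := h
  have hSne : S.Nonempty := ⟨(a0, b0), by simp [hS]; exact hp⟩
  obtain ⟨p, hpS, hmin⟩ := S.exists_min_image (fun p => p.2.1 - p.1.1) hSne
  obtain ⟨a, b⟩ := p
  have hv : a < b ∧ v b < v a ∧ v a < α a := by simpa [hS] using hpS
  refine ⟨a, b, hv, ?_⟩
  intro m h1 h2
  by_cases hcase : v m < v a
  · exfalso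
    have hmem : (a, m) ∈ S := by simp [hS]; exact ⟨h1, hcase, hv.2.2⟩
    have := hmin (a, m) hmem
    simp only at this
    have ha1 : a.1 < m.1 := h1
    have hb1 : m.1 < b.1 := h2
    omega
  · right
    have : v m ≠ v a := fun hh => h1.ne' (v.injective hh)
    exact lt_of_le_of_ne (not_lt.1 hcase) (Ne.symm this)

lemma exists_min_up {v : Equiv.Perm (Fin n)} {α : Fin n → Fin n}
    (h : ∃ a b : Fin n, a < b ∧ v a < v b ∧ v b ≤ α a) :
    ∃ a b : Fin n, (a < b ∧ v a < v b ∧ v b ≤ α a) ∧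
      ∀ m, a < m → m < b → v m < v a ∨ v b < v m := by
  classical
  set S : Finset (Fin n × Fin n) :=
    Finset.univ.filter (fun p => p.1 < p.2 ∧ v p.1 < v p.2 ∧ v p.2 ≤ α p.1) with hS
  obtain ⟨a0, b0, hp⟩ := h
  have hSne : S.Nonempty := ⟨(a0, b0), by simp [hS]; exact hp⟩
  obtain ⟨p, hpS, hmin⟩ := S.exists_min_image (fun p => p.2.1 - p.1.1) hSne
  obtain ⟨a, b⟩ := p
  have hv : a < b ∧ v a < v b ∧ v b ≤ α a := by simpa [hS] using hpS
  refine ⟨a, b, hv, ?_⟩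
  intro m h1 h2
  by_cases hcase : v b < v m
  · exact Or.inr hcase
  · left
    -- v m < v b; if v a < v m then (a, m) would be smaller
    have hmb : v m ≠ v b := fun hh => h2.ne (v.injective hh)
    have hmb' : v m < v b := lt_of_le_of_ne (not_lt.1 hcase) hmb
    by_contra hc
    push_neg at hc
    have hma : v m ≠ v a := fun hh => h1.ne' (v.injective hh)
    have hma' : v a < v m := lt_of_le_of_ne hc (Ne.symm hma)
    have hmem : (a, m) ∈ S := by simp [hS]; exact ⟨h1, hma', hmb'.le.trans hv.2.2⟩
    have := hmin (a, m) hmem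
    simp only at this
    have ha1 : a.1 < m.1 := h1
    have hb1 : m.1 < b.1 := h2
    omega

lemma invN_le_sq (v : Equiv.Perm (Fin n)) : S8.invN v ≤ n * n := by
  calc S8.invN v ≤ (Finset.univ : Finset (Fin n × Fin n)).card := Finset.card_filter_le _ _
  _ = n * n := by simp [Finset.card_univ]

lemma reach_down {α : Fin n → Fin n} (hmono : Monotone α) :
    ∀ v : Equiv.Perm (Fin n), lrMax v = α →
      ∃ w, lrMax w = α ∧ StuckD α w ∧ le' w v := by
  intro v hfib
  obtain ⟨k, hk⟩ : ∃ k, S8.invN v = k := ⟨_, rfl⟩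
  induction k using Nat.strong_induction_on generalizing v with
  | _ k ih =>
  subst hk
  by_cases hst : StuckD α v
  · exact ⟨v, hfib, hst, le'_refl v⟩
  · have hex : ∃ a b : Fin n, a < b ∧ v b < v a ∧ v a < α a := by
      simp only [StuckD, not_forall, not_not] at hst
      obtain ⟨a, b, h1, h2, h3⟩ := hst
      exact ⟨a, b, h1, h2, h3⟩
    obtain ⟨a, b, ⟨hab, hvv, hva⟩, hbet⟩ := exists_min_down hex
    have hcov := cover_invN hab hvv hbet
    have hfib' := down_move hmono hfib hab hvv hva
    obtain ⟨w, hw1, hw2, hw3⟩ := ih (S8.invN (v * Equiv.swap a b)) (by omega) _ hfib' rfl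
    exact ⟨w, hw1, hw2, le'_trans hw3 (le'_step hab hvv hcov)⟩

lemma reach_up {α : Fin n → Fin n} (hmono : Monotone α) :
    ∀ v : Equiv.Perm (Fin n), lrMax v = α →
      ∃ w, lrMax w = α ∧ StuckU α w ∧ le' v w := by
  intro v hfib
  obtain ⟨k, hk⟩ : ∃ k, n * n - S8.invN v = k := ⟨_, rfl⟩
  induction k using Nat.strong_induction_on generalizing v with
  | _ k ih =>
  subst hk
  by_cases hst : StuckU α v
  · exact ⟨v, hfib, hst, le'_refl v⟩
  · have hex : ∃ a b : Fin n, a < b ∧ v a < v b ∧ v b ≤ α a := by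
      simp only [StuckU, not_forall, not_not] at hst
      obtain ⟨a, b, h1, h2, h3⟩ := hst
      exact ⟨a, b, h1, h2, h3⟩
    obtain ⟨a, b, ⟨hab, hvv, hvb⟩, hbet⟩ := exists_min_up hex
    obtain ⟨v', hv'⟩ : ∃ v', v' = v * Equiv.swap a b := ⟨_, rfl⟩
    have hva' : v' a = v b := by rw [hv']; simp [Equiv.Perm.mul_apply]
    have hvb' : v' b = v a := by rw [hv']; simp [Equiv.Perm.mul_apply]
    have hvm' : ∀ m, m ≠ a → m ≠ b → v' m = v m := by
      intro m h1 h2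
      rw [hv']
      simp only [Equiv.Perm.mul_apply]
      rw [swap_ne_ne h1 h2]
    have hback : v' * Equiv.swap a b = v := by
      rw [hv', mul_assoc, Equiv.swap_mul_self, mul_one]
    have hdesc : v' b < v' a := by rw [hva', hvb']; exact hvv
    have hbet' : ∀ m, a < m → m < b → v' m < v' b ∨ v' a < v' m := by
      intro m h1 h2
      rw [hvm' m h1.ne' h2.ne, hva', hvb']
      exact hbet m h1 h2
    have hcov := cover_invN hab hdesc hbet'
    rw [hback] at hcov
    have hfib' : lrMax v' = α := by rw [hv']; exact up_move hmono hfib hab hvv hvb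
    have hbound := invN_le_sq v'
    obtain ⟨w, hw1, hw2, hw3⟩ := ih (n * n - S8.invN v') (by omega) v' hfib' rfl
    have hstep : le' v v' := by
      have := le'_step (v := v') hab hdesc (by rw [hback]; omega)
      rwa [hback] at this
    exact ⟨w, hw1, hw2, le'_trans hstep hw3⟩

end Reach

section Construct
variable {n : ℕ}

/-- `j` is a jump position of `α`. -/
def IsJ (α : Fin n → Fin n) (j : Fin n) : Prop := ∀ p, p < j → α p < α j

instance (α : Fin n → Fin n) : DecidablePred (IsJ α) := fun _ => by
  unfold IsJ; infer_instance

def Jset (α : Fin n → Fin n) : Finset (Fin n) := Finset.univ.filter (IsJ α)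
def Vset (α : Fin n → Fin n) : Finset (Fin n) := (Jset α).image α
def NVset (α : Fin n → Fin n) : Finset (Fin n) := Finset.univ.filter (fun c => c ∉ Vset α)

lemma mem_Jset {α : Fin n → Fin n} {j : Fin n} : j ∈ Jset α ↔ IsJ α j := by
  simp [Jset]

lemma mem_NVset {α : Fin n → Fin n} {c : Fin n} : c ∈ NVset α ↔ c ∉ Vset α := by
  simp [NVset]

lemma claimC {α : Fin n → Fin n} (hmono : Monotone α) (p : Fin n) :
    ∃ j, j ≤ p ∧ IsJ α j ∧ α j = α p := by
  obtain ⟨k, hk⟩ : ∃ k, p.1 = k := ⟨_, rfl⟩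
  induction k using Nat.strong_induction_on generalizing p with
  | _ k ih =>
  subst hk
  by_cases hj : IsJ α p
  · exact ⟨p, le_rfl, hj, rfl⟩
  · simp only [IsJ, not_forall] at hj
    obtain ⟨q, hq1, hq2⟩ := hj
    have heq : α q = α p := le_antisymm (hmono hq1.le) (not_lt.1 hq2)
    obtain ⟨j, h1, h2, h3⟩ := ih q.1 hq1 q rfl
    exact ⟨j, le_trans h1 hq1.le, h2, h3.trans heq⟩

lemma jump_inj {α : Fin n → Fin n} {j j' : Fin n} (hj : IsJ α j) (hj' : IsJ α j')
    (h : α j = α j') : j = j' := by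
  rcases lt_trichotomy j j' with h1 | h1 | h1
  · exact absurd (hj' j h1) (by rw [h]; exact lt_irrefl _)
  · exact h1
  · exact absurd (hj j' h1) (by rw [h]; exact lt_irrefl _)

lemma card_V {α : Fin n → Fin n} : (Vset α).card = (Jset α).card := by
  apply Finset.card_image_of_injOn
  intro x hx y hy h
  exact jump_inj (mem_Jset.1 (Finset.mem_coe.1 hx)) (mem_Jset.1 (Finset.mem_coe.1 hy)) h

lemma card_sum_J {α : Fin n → Fin n} :
    (Jset α).card + (Finset.univ.filter (fun j => ¬ IsJ α j)).card = n := by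
  have := Finset.card_filter_add_card_filter_not
    (s := (Finset.univ : Finset (Fin n))) (p := IsJ α)
  simpa [Jset] using this

lemma card_sum_V {α : Fin n → Fin n} : (Vset α).card + (NVset α).card = n := by
  have := Finset.card_filter_add_card_filter_not
    (s := (Finset.univ : Finset (Fin n))) (p := fun c => c ∈ Vset α)
  have h1 : Finset.univ.filter (fun c => c ∈ Vset α) = Vset α := by
    ext c; simp
  rw [h1] at this
  simpa [NVset] using this

lemma card_NJ_NV {α : Fin n → Fin n} :
    (Finset.univ.filter (fun j => ¬ IsJ α j)).card = (NVset α).card := by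
  have h1 := card_sum_J (α := α)
  have h2 := card_sum_V (α := α)
  have h3 := card_V (α := α)
  omega

def rankNJ (α : Fin n → Fin n) (p : Fin n) : ℕ :=
  ((Finset.Iio p).filter (fun q => ¬ IsJ α q)).card

lemma rank_lt {α : Fin n → Fin n} {p : Fin n} (hp : ¬ IsJ α p) :
    rankNJ α p < (NVset α).card := by
  rw [← card_NJ_NV]
  apply Finset.card_lt_card
  constructor
  · intro c hc
    simp only [Finset.mem_filter, Finset.mem_Iio] at hc
    simp [hc.2]
  · intro hsub
    have := hsub (by simp [hp] : p ∈ Finset.univ.filter (fun j => ¬ IsJ α j))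
    simp only [Finset.mem_filter, Finset.mem_Iio] at this
    exact absurd this.1 (lt_irrefl _)

/-- The minimal element of the fiber, as a function. -/
noncomputable def wminFun (α : Fin n → Fin n) (p : Fin n) : Fin n :=
  if h : IsJ α p then α p
  else (NVset α).orderEmbOfFin rfl ⟨rankNJ α p, rank_lt h⟩

lemma wminFun_jump {α : Fin n → Fin n} {p : Fin n} (h : IsJ α p) : wminFun α p = α p := by
  rw [wminFun, dif_pos h]

lemma wminFun_nonjump_mem {α : Fin n → Fin n} {p : Fin n} (h : ¬ IsJ α p) :
    wminFun α p ∈ NVset α := by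
  rw [wminFun, dif_neg h]
  exact Finset.orderEmbOfFin_mem _ rfl _

lemma rank_strictMono {α : Fin n → Fin n} {p q : Fin n} (hp : ¬ IsJ α p) (hpq : p < q) :
    rankNJ α p < rankNJ α q := by
  apply Finset.card_lt_card
  constructor
  · intro c hc
    simp only [Finset.mem_filter, Finset.mem_Iio] at hc ⊢
    exact ⟨hc.1.trans hpq, hc.2⟩
  · intro hsub
    have := hsub (by simp [hp, hpq] : p ∈ (Finset.Iio q).filter (fun q => ¬ IsJ α q))
    simp only [Finset.mem_filter, Finset.mem_Iio] at this
    exact absurd this.1 (lt_irrefl _)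

lemma wminFun_injective {α : Fin n → Fin n} : Function.Injective (wminFun α) := by
  intro p q h
  by_cases hp : IsJ α p <;> by_cases hq : IsJ α q
  · rw [wminFun_jump hp, wminFun_jump hq] at h
    exact jump_inj hp hq h
  · exfalso
    rw [wminFun_jump hp] at h
    have h1 : α p ∈ Vset α := Finset.mem_image_of_mem α (mem_Jset.2 hp)
    have h2 := wminFun_nonjump_mem hq
    rw [← h] at h2
    exact (mem_NVset.1 h2) h1
  · exfalso
    rw [wminFun_jump hq] at h
    have h1 : α q ∈ Vset α := Finset.mem_image_of_mem α (mem_Jset.2 hq)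
    have h2 := wminFun_nonjump_mem hp
    rw [h] at h2
    exact (mem_NVset.1 h2) h1
  · rw [wminFun, dif_neg hp, wminFun, dif_neg hq] at h
    have := ((NVset α).orderEmbOfFin rfl).injective h
    have hr : rankNJ α p = rankNJ α q := congrArg Fin.val this
    by_contra hne
    rcases lt_or_gt_of_ne hne with h1 | h1
    · exact absurd hr (rank_strictMono hp h1).ne
    · exact absurd hr.symm (rank_strictMono hq h1).ne

-- counting: for a nonjump position p, the rank-th smallest non-value is < α p
lemma jumps_le_eq {α : Fin n → Fin n} {p : Fin n} (hp : ¬ IsJ α p) :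
    (Jset α).filter (· ≤ p) = (Finset.Iio p).filter (IsJ α) := by
  ext j
  simp only [Finset.mem_filter, Finset.mem_Iio, Jset, Finset.mem_univ, true_and]
  constructor
  · rintro ⟨h1, h2⟩
    refine ⟨lt_of_le_of_ne h2 ?_, h1⟩
    rintro rfl; exact hp h1
  · rintro ⟨h1, h2⟩
    exact ⟨h2, h1.le⟩

lemma vfilter_eq {α : Fin n → Fin n} (hmono : Monotone α) {p j0 : Fin n} (hj0 : IsJ α j0)
    (hj0p : j0 ≤ p) (hj0v : α j0 = α p) :
    (Finset.Iio (α p)).filter (fun c => c ∈ Vset α) =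
      (((Jset α).filter (· ≤ p)).erase j0).image α := by
  ext c
  simp only [Finset.mem_filter, Finset.mem_Iio, Finset.mem_image, Finset.mem_erase,
    Vset, Jset, Finset.mem_univ, true_and]
  constructor
  · rintro ⟨hlt, j, hj, rfl⟩
    refine ⟨j, ⟨?_, hj, ?_⟩, rfl⟩
    · rintro rfl
      rw [hj0v] at hlt
      exact absurd hlt (lt_irrefl _)
    · -- α j < α p implies j ≤ p
      by_contra hc
      push_neg at hc
      exact absurd (hj p hc) (not_lt.2 hlt.le)
  · rintro ⟨j, ⟨hne, hj, hjp⟩, rfl⟩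
    refine ⟨?_, j, hj, rfl⟩
    apply lt_of_le_of_ne (hmono hjp)
    intro hh
    exact hne (jump_inj hj hj0 (hh.trans hj0v.symm))

lemma count_key {α : Fin n → Fin n} (hmono : Monotone α) (hge : ∀ i, i ≤ α i) {p : Fin n}
    (hp : ¬ IsJ α p) :
    rankNJ α p + 1 ≤ ((Finset.Iio (α p)).filter (fun c => c ∉ Vset α)).card := by
  obtain ⟨j0, hj0p, hj0, hj0v⟩ := claimC hmono p
  have hj0mem : j0 ∈ (Jset α).filter (· ≤ p) := by
    simp only [Finset.mem_filter]
    exact ⟨mem_Jset.2 hj0, hj0p⟩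
  -- e1
  have e1 : ((Finset.Iio p).filter (IsJ α)).card + rankNJ α p = p.1 := by
    have := Finset.card_filter_add_card_filter_not
      (s := Finset.Iio p) (p := IsJ α)
    rw [Fin.card_Iio] at this
    exact this
  -- e2
  have e2 : ((Finset.Iio (α p)).filter (fun c => c ∈ Vset α)).card +
      ((Finset.Iio (α p)).filter (fun c => c ∉ Vset α)).card = (α p).1 := by
    have := Finset.card_filter_add_card_filter_not
      (s := Finset.Iio (α p)) (p := fun c => c ∈ Vset α)
    rw [Fin.card_Iio] at this
    exact this
  -- e3
  have e3 : ((Finset.Iio (α p)).filter (fun c => c ∈ Vset α)).card + 1 =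
      ((Jset α).filter (· ≤ p)).card := by
    rw [vfilter_eq hmono hj0 hj0p hj0v]
    rw [Finset.card_image_of_injOn]
    · exact Finset.card_erase_add_one hj0mem
    · intro x hx y hy h
      have hx' := Finset.mem_coe.1 hx
      have hy' := Finset.mem_coe.1 hy
      rw [Finset.mem_erase, Finset.mem_filter] at hx' hy'
      exact jump_inj (mem_Jset.1 hx'.2.1) (mem_Jset.1 hy'.2.1) h
  have e5 : ((Jset α).filter (· ≤ p)).card = ((Finset.Iio p).filter (IsJ α)).card := by
    rw [jumps_le_eq hp]
  have hgep : p.1 ≤ (α p).1 := hge p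
  omega

lemma wmin_bound {α : Fin n → Fin n} (hmono : Monotone α) (hge : ∀ i, i ≤ α i) {p : Fin n}
    (hp : ¬ IsJ α p) : wminFun α p < α p := by
  rw [wminFun, dif_neg hp]
  by_contra hc
  push_neg at hc
  -- α p ≤ e ⟨rank p⟩
  set N := (NVset α).card with hN
  set e := (NVset α).orderEmbOfFin rfl with he
  set T := (Finset.Iio (α p)).filter (fun c => c ∉ Vset α) with hT
  have hsub : T ⊆ Finset.image (fun k : Fin N => e k)
      (Finset.univ.filter (fun k : Fin N => k.1 < rankNJ α p)) := by
    intro c hc'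
    simp only [hT, Finset.mem_filter, Finset.mem_Iio] at hc'
    have hcNV : c ∈ NVset α := mem_NVset.2 hc'.2
    have : c ∈ Set.range e := by rw [he, Finset.range_orderEmbOfFin]; exact hcNV
    obtain ⟨k, hk⟩ := this
    have hlt : e k < e ⟨rankNJ α p, rank_lt hp⟩ := by
      rw [hk]
      exact lt_of_lt_of_le hc'.1 hc
    have hklt : k < (⟨rankNJ α p, rank_lt hp⟩ : Fin N) := e.strictMono.lt_iff_lt.1 hlt
    simp only [Finset.mem_image, Finset.mem_filter, Finset.mem_univ, true_and]
    exact ⟨k, hklt, hk⟩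
  have hcard1 : T.card ≤ (Finset.univ.filter (fun k : Fin N => k.1 < rankNJ α p)).card := by
    calc T.card ≤ _ := Finset.card_le_card hsub
    _ ≤ _ := Finset.card_image_le
  have hcard2 : (Finset.univ.filter (fun k : Fin N => k.1 < rankNJ α p)).card ≤ rankNJ α p := by
    have : (Finset.univ.filter (fun k : Fin N => k.1 < rankNJ α p)).card ≤
        (Finset.range (rankNJ α p)).card := by
      apply Finset.card_le_card_of_injOn Fin.val
      · intro k hk
        simp only [Finset.mem_coe, Finset.mem_filter] at hk
        simp [hk.2]
      · intro x _ y _ h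
        exact Fin.ext h
    simpa using this
  have := count_key hmono hge hp
  rw [← hT] at this
  omega

lemma fiber_nonempty {α : Fin n → Fin n} (hmono : Monotone α) (hge : ∀ i, i ≤ α i) :
    ∃ v : Equiv.Perm (Fin n), lrMax v = α := by
  have hbij : Function.Bijective (wminFun α) :=
    Finite.injective_iff_bijective.1 wminFun_injective
  refine ⟨Equiv.ofBijective _ hbij, ?_⟩
  funext m
  apply le_antisymm
  · apply Finset.sup'_le
    intro x hx
    have hxm : x ≤ m := Finset.mem_Iic.1 hx
    show wminFun α x ≤ α m
    by_cases h : IsJ α x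
    · rw [wminFun_jump h]; exact hmono hxm
    · exact le_trans (wmin_bound hmono hge h).le (hmono hxm)
  · obtain ⟨j0, hj0m, hj0, hj0v⟩ := claimC hmono m
    have : wminFun α j0 = α m := by rw [wminFun_jump hj0, hj0v]
    calc α m = (Equiv.ofBijective _ hbij) j0 := this.symm
    _ ≤ _ := Finset.le_sup' _ (Finset.mem_Iic.2 hj0m)

end Construct


/-- In the fiber `{w : α_w = α}`, the unique 321-avoiding element is
the unique Bruhat-minimal element; the fiber also contains a unique 312-avoiding
element, which is the unique Bruhat-maximal element. -/
theorem stmt_8 (n : ℕ) (α : Fin n → Fin n) (hmono : Monotone α) (hge : ∀ i, i ≤ α i) :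
    (∃! w : Equiv.Perm (Fin n), lrMax w = α ∧ Avoids321 w) ∧
    (∀ w : Equiv.Perm (Fin n), lrMax w = α → Avoids321 w →
      ∀ v : Equiv.Perm (Fin n), lrMax v = α → bruhatLE w v) ∧
    (∃! w : Equiv.Perm (Fin n), lrMax w = α ∧ Avoids312 w) ∧
    (∀ w : Equiv.Perm (Fin n), lrMax w = α → Avoids312 w →
      ∀ v : Equiv.Perm (Fin n), lrMax v = α → bruhatLE v w) := by
  obtain ⟨v0, hv0⟩ := fiber_nonempty hmono hge
  obtain ⟨wD, hD1, hD2, _⟩ := reach_down hmono v0 hv0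
  obtain ⟨wU, hU1, hU2, _⟩ := reach_up hmono v0 hv0
  refine ⟨⟨wD, ⟨hD1, (stuckD_iff hmono hD1).1 hD2⟩, ?_⟩, ?_, ⟨wU, ⟨hU1, (stuckU_iff hmono hU1).1 hU2⟩, ?_⟩, ?_⟩
  · rintro w ⟨hfib, hav⟩
    exact stuckD_unique hmono hfib hD1 ((stuckD_iff hmono hfib).2 hav) hD2
  · intro w hwfib hwav v hvfib
    obtain ⟨w', h1, h2, h3⟩ := reach_down hmono v hvfib
    have heq : w = w' := stuckD_unique hmono hwfib h1 ((stuckD_iff hmono hwfib).2 hwav) h2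
    exact le'_bruhat (heq ▸ h3)
  · rintro w ⟨hfib, hav⟩
    exact stuckU_unique hmono hfib hU1 ((stuckU_iff hmono hfib).2 hav) hU2
  · intro w hwfib hwav v hvfib
    obtain ⟨w', h1, h2, h3⟩ := reach_up hmono v hvfib
    have heq : w = w' := stuckU_unique hmono hwfib h1 ((stuckU_iff hmono hwfib).2 hwav) h2
    exact le'_bruhat (heq ▸ h3)
end

section
/- The fiber {w ∈ S_n : α_w = α} of the left-to-right-maximum map over any order-preserving non-decreasing transformation α is a Bruhat interval: it equals the set of permutations lying between its unique 321-avoiding member and its unique 312-avoiding member in the Bruhat order. -/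
open Pointwise

namespace Stmt9


variable {n : ℕ}

/-- position `i` as element of `Fin n`. -/
def pa (i : Fin (n - 1)) : Fin n := ⟨i.1, by have := i.2; omega⟩
def pb (i : Fin (n - 1)) : Fin n := ⟨i.1 + 1, by have := i.2; omega⟩

lemma simpleT_eq (i : Fin (n - 1)) : simpleT i = Equiv.swap (pa i) (pb i) := rfl

lemma simpleT_val (i : Fin (n - 1)) (k : Fin n) :
    ((simpleT i) k).1 = if k.1 = i.1 then i.1 + 1 else if k.1 = i.1 + 1 then i.1 else k.1 := by
  rw [simpleT_eq, Equiv.swap_apply_def]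
  split_ifs with h1 h2 h3 h4 h5 <;>
    simp only [Fin.ext_iff, pa, pb] at * <;> omega

lemma simpleT_sq (i : Fin (n - 1)) : simpleT i * simpleT i = 1 :=
  Equiv.swap_mul_self _ _

lemma mul_simpleT_apply (w : Equiv.Perm (Fin n)) (i : Fin (n - 1)) (k : Fin n) :
    (w * simpleT i) k = w (simpleT i k) := rfl

lemma simpleT_pa (i : Fin (n - 1)) : simpleT i (pa i) = pb i := Equiv.swap_apply_left _ _
lemma simpleT_pb (i : Fin (n - 1)) : simpleT i (pb i) = pa i := Equiv.swap_apply_right _ _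

lemma pa_lt_pb (i : Fin (n - 1)) : pa i < pb i := by simp [pa, pb, Fin.lt_def]

/-! ### The dominance matrix `D` -/

/-- `D w p q` = number of positions `k < p` whose value is `≥ q`. -/
def D (w : Equiv.Perm (Fin n)) (p q : ℕ) : ℕ :=
  (Finset.univ.filter fun k : Fin n => k.1 < p ∧ q ≤ (w k).1).card

lemma D_zero (w : Equiv.Perm (Fin n)) (q : ℕ) : D w 0 q = 0 := by
  simp [D]

lemma D_succ (w : Equiv.Perm (Fin n)) {p : ℕ} (hp : p < n) (q : ℕ) :
    D w (p + 1) q = D w p q + if q ≤ (w ⟨p, hp⟩).1 then 1 else 0 := by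
  classical
  unfold D
  have hsplit : (Finset.univ.filter fun k : Fin n => k.1 < p + 1 ∧ q ≤ (w k).1)
      = (Finset.univ.filter fun k : Fin n => k.1 < p ∧ q ≤ (w k).1) ∪
        (Finset.univ.filter fun k : Fin n => k = ⟨p, hp⟩ ∧ q ≤ (w k).1) := by
    ext k
    simp only [Finset.mem_union, Finset.mem_filter, Finset.mem_univ, true_and, Fin.ext_iff]
    constructor
    · rintro ⟨hk, hq⟩
      rcases Nat.lt_or_ge k.1 p with h | h
      · exact Or.inl ⟨h, hq⟩
      · exact Or.inr ⟨by omega, hq⟩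
    · rintro (⟨hk, hq⟩ | ⟨hk, hq⟩) <;> exact ⟨by omega, hq⟩
  rw [hsplit, Finset.card_union_of_disjoint]
  · congr 1
    by_cases hq : q ≤ (w ⟨p, hp⟩).1
    · rw [if_pos hq]
      rw [Finset.card_eq_one]
      refine ⟨⟨p, hp⟩, ?_⟩
      ext k
      simp only [Finset.mem_filter, Finset.mem_univ, true_and, Finset.mem_singleton]
      constructor
      · rintro ⟨rfl, _⟩; rfl
      · rintro rfl; exact ⟨rfl, hq⟩
    · rw [if_neg hq]
      rw [Finset.card_eq_zero]
      ext k
      simp only [Finset.mem_filter, Finset.mem_univ, true_and, Finset.notMem_empty, iff_false,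
        not_and]
      rintro rfl; exact hq
  · rw [Finset.disjoint_filter]
    rintro k _ ⟨hk, _⟩ ⟨rfl, _⟩
    simp at hk

lemma D_succ_ge (w : Equiv.Perm (Fin n)) {p : ℕ} (hp : n ≤ p) (q : ℕ) :
    D w (p + 1) q = D w p q := by
  unfold D
  congr 1
  ext k
  simp only [Finset.mem_filter, Finset.mem_univ, true_and]
  have := k.2
  constructor <;> rintro ⟨h1, h2⟩ <;> exact ⟨by omega, h2⟩

lemma D_mul_eq (w : Equiv.Perm (Fin n)) (i : Fin (n - 1)) {p : ℕ}
    (h : p ≤ i.1 ∨ i.1 + 2 ≤ p) (q : ℕ) :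
    D (w * simpleT i) p q = D w p q := by
  classical
  unfold D
  apply Finset.card_bij' (fun k _ => simpleT i k) (fun k _ => simpleT i k)
  · intro k hk
    simp only [Finset.mem_filter, Finset.mem_univ, true_and] at hk ⊢
    have hv := simpleT_val i k
    have hi2 := i.2
    constructor
    · split_ifs at hv <;> omega
    · rw [mul_simpleT_apply] at hk; exact hk.2
  · intro k hk
    simp only [Finset.mem_filter, Finset.mem_univ, true_and] at hk ⊢
    have hv := simpleT_val i k
    have hi2 := i.2
    constructor
    · split_ifs at hv <;> omega
    · rw [mul_simpleT_apply]
      have : simpleT i (simpleT i k) = k := by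
        rw [← mul_simpleT_apply, simpleT_sq]; rfl
      rw [this]; exact hk.2
  · intro k _
    rw [← mul_simpleT_apply, simpleT_sq]; rfl
  · intro k _
    rw [← mul_simpleT_apply, simpleT_sq]; rfl

lemma D_mul_row (w : Equiv.Perm (Fin n)) (i : Fin (n - 1)) (q : ℕ) :
    D (w * simpleT i) (i.1 + 1) q = D w i.1 q + if q ≤ (w (pb i)).1 then 1 else 0 := by
  have hp : i.1 < n := by have := i.2; omega
  rw [D_succ _ hp, D_mul_eq w i (Or.inl le_rfl)]
  congr 2
  rw [mul_simpleT_apply]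
  have h : (simpleT i) (⟨i.1, hp⟩ : Fin n) = pb i := simpleT_pa i
  rw [h]

lemma D_row_two (w : Equiv.Perm (Fin n)) (i : Fin (n - 1)) (q : ℕ) :
    D w (i.1 + 2) q = D w i.1 q
      + (if q ≤ (w (pa i)).1 then 1 else 0) + (if q ≤ (w (pb i)).1 then 1 else 0) := by
  have h1 : i.1 < n := by have := i.2; omega
  have h2 : i.1 + 1 < n := by have := i.2; omega
  rw [show i.1 + 2 = (i.1 + 1) + 1 by ring, D_succ _ h2, D_succ _ h1]
  rfl

/-- Dominance order. -/
def Dom (u w : Equiv.Perm (Fin n)) : Prop := ∀ p q, D u p q ≤ D w p q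

lemma Dom.refl (w : Equiv.Perm (Fin n)) : Dom w w := fun _ _ => le_rfl

lemma Dom.trans {u v w : Equiv.Perm (Fin n)} (h1 : Dom u v) (h2 : Dom v w) : Dom u w :=
  fun p q => (h1 p q).trans (h2 p q)

end Stmt9

namespace Stmt9
variable {n : ℕ}

/-! ### Inversions -/

/-- The set of inversions of `w`. -/
def invSet (w : Equiv.Perm (Fin n)) : Finset (Fin n × Fin n) :=
  Finset.univ.filter fun pr => pr.1 < pr.2 ∧ w pr.2 < w pr.1

/-- Number of inversions. -/
def invOf (w : Equiv.Perm (Fin n)) : ℕ := (invSet w).card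

lemma invOf_one : invOf (1 : Equiv.Perm (Fin n)) = 0 := by
  unfold invOf invSet
  rw [Finset.card_eq_zero]
  ext pr
  simp only [Finset.mem_filter, Finset.mem_univ, true_and, Finset.notMem_empty, iff_false,
    not_and, Equiv.Perm.one_apply]
  intro h
  obtain ⟨-, h1, h2⟩ := Finset.mem_filter.1 h
  exact absurd h2 (asymm h1)

/-- `simpleT i` preserves the order of any pair other than `(pa i, pb i)`. -/
lemma simpleT_lt {i : Fin (n - 1)} {a b : Fin n} (hab : a < b) (hne : ¬(a = pa i ∧ b = pb i)) :
    simpleT i a < simpleT i b := by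
  have ha := simpleT_val i a
  have hb := simpleT_val i b
  rw [Fin.lt_def] at hab ⊢
  simp only [Fin.ext_iff, pa, pb] at hne
  have hab' : a.1 ≠ b.1 := Nat.ne_of_lt hab
  split_ifs at ha hb <;> omega

/-- descent case: right-multiplying at a descent removes exactly one inversion. -/
lemma invOf_descent (w : Equiv.Perm (Fin n)) (i : Fin (n - 1))
    (hd : w (pb i) < w (pa i)) : invOf w = invOf (w * simpleT i) + 1 := by
  classical
  have hmem : (pa i, pb i) ∈ invSet w := by
    simp only [invSet, Finset.mem_filter, Finset.mem_univ, true_and]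
    exact ⟨pa_lt_pb i, hd⟩
  have hcard : ((invSet w).erase (pa i, pb i)).card = (invSet w).card - 1 :=
    Finset.card_erase_of_mem hmem
  have hbij : (invSet (w * simpleT i)).card = ((invSet w).erase (pa i, pb i)).card := by
    apply Finset.card_bij' (fun pr _ => (simpleT i pr.1, simpleT i pr.2))
      (fun pr _ => (simpleT i pr.1, simpleT i pr.2))
    · -- maps into
      rintro ⟨a, b⟩ hab
      simp only [invSet, Finset.mem_filter, Finset.mem_univ, true_and, Finset.mem_erase] at hab ⊢
      obtain ⟨h1, h2⟩ := hab
      have hne : ¬(a = pa i ∧ b = pb i) := by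
        rintro ⟨rfl, rfl⟩
        rw [mul_simpleT_apply, mul_simpleT_apply, simpleT_pa, simpleT_pb] at h2
        exact absurd hd (asymm h2)
      refine ⟨?_, simpleT_lt h1 hne, ?_⟩
      · -- image ≠ (pa i, pb i)
        rintro h
        have h1' : simpleT i a = pa i := congrArg Prod.fst h
        have h2' : simpleT i b = pb i := congrArg Prod.snd h
        have hss : ∀ c : Fin n, simpleT i (simpleT i c) = c := fun c => by
          rw [← Equiv.Perm.mul_apply, simpleT_sq, Equiv.Perm.one_apply]
        have haa : a = pb i := by
          have := congrArg (simpleT i) h1'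
          rwa [hss, simpleT_pa] at this
        have hbb : b = pa i := by
          have := congrArg (simpleT i) h2'
          rwa [hss, simpleT_pb] at this
        rw [haa, hbb] at h1
        exact absurd h1 (asymm (pa_lt_pb i))
      · rw [mul_simpleT_apply, mul_simpleT_apply] at h2
        exact h2
    · -- maps back
      rintro ⟨a, b⟩ hab
      simp only [invSet, Finset.mem_filter, Finset.mem_univ, true_and, Finset.mem_erase] at hab ⊢
      obtain ⟨hne0, h1, h2⟩ := hab
      have hne : ¬(a = pa i ∧ b = pb i) := by
        rintro ⟨rfl, rfl⟩; exact hne0 rfl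
      refine ⟨simpleT_lt h1 hne, ?_⟩
      have hss : ∀ c : Fin n, simpleT i (simpleT i c) = c := fun c => by
        rw [← Equiv.Perm.mul_apply, simpleT_sq, Equiv.Perm.one_apply]
      rw [Equiv.Perm.mul_apply, Equiv.Perm.mul_apply, hss, hss]
      exact h2
    · rintro ⟨a, b⟩ _
      have hss : ∀ c : Fin n, simpleT i (simpleT i c) = c := fun c => by
        rw [← Equiv.Perm.mul_apply, simpleT_sq, Equiv.Perm.one_apply]
      simp [hss]
    · rintro ⟨a, b⟩ _
      have hss : ∀ c : Fin n, simpleT i (simpleT i c) = c := fun c => by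
        rw [← Equiv.Perm.mul_apply, simpleT_sq, Equiv.Perm.one_apply]
      simp [hss]
  unfold invOf
  rw [hbij, hcard]
  have : 0 < (invSet w).card := Finset.card_pos.2 ⟨_, hmem⟩
  omega

lemma apply_ne (w : Equiv.Perm (Fin n)) (i : Fin (n - 1)) : w (pa i) ≠ w (pb i) := by
  intro h
  have := w.injective h
  have := pa_lt_pb i
  omega

lemma invOf_ascent (w : Equiv.Perm (Fin n)) (i : Fin (n - 1))
    (ha : w (pa i) < w (pb i)) : invOf (w * simpleT i) = invOf w + 1 := by
  have hd : (w * simpleT i) (pb i) < (w * simpleT i) (pa i) := by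
    rw [mul_simpleT_apply, mul_simpleT_apply, simpleT_pa, simpleT_pb]
    exact ha
  have := invOf_descent (w * simpleT i) i hd
  rwa [mul_assoc, simpleT_sq, mul_one] at this

lemma invOf_mul_le (w : Equiv.Perm (Fin n)) (i : Fin (n - 1)) :
    invOf (w * simpleT i) ≤ invOf w + 1 := by
  rcases lt_or_gt_of_ne (apply_ne w i) with h | h
  · exact le_of_eq (invOf_ascent w i h)
  · have := invOf_descent w i h
    omega

/-! ### Words -/

/-- Product of a word of simple transpositions. -/
def wp (l : List (Fin (n - 1))) : Equiv.Perm (Fin n) := (l.map simpleT).prod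

lemma wp_nil : wp ([] : List (Fin (n - 1))) = 1 := rfl

lemma wp_concat (l : List (Fin (n - 1))) (i : Fin (n - 1)) :
    wp (l ++ [i]) = wp l * simpleT i := by
  unfold wp
  rw [List.map_append, List.prod_append, List.map_singleton, List.prod_singleton]

lemma invOf_wp_le (l : List (Fin (n - 1))) : invOf (wp l) ≤ l.length := by
  induction l using List.reverseRecOn with
  | nil => rw [wp_nil, invOf_one]; exact Nat.zero_le _
  | append_singleton l i ih =>
    rw [wp_concat]
    calc invOf (wp l * simpleT i) ≤ invOf (wp l) + 1 := invOf_mul_le _ _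
    _ ≤ l.length + 1 := by omega
    _ = (l ++ [i]).length := by simp

/-- A permutation with no inversions is the identity. -/
lemma eq_one_of_invOf_zero (w : Equiv.Perm (Fin n)) (h : invOf w = 0) : w = 1 := by
  have hsm : StrictMono w := by
    intro a b hab
    rcases lt_trichotomy (w a) (w b) with h' | h' | h'
    · exact h'
    · exact absurd (w.injective h') (Nat.ne_of_lt (Fin.lt_def.1 hab) ∘ congrArg Fin.val)
    · exfalso
      have : (a, b) ∈ invSet w := by
        simp only [invSet, Finset.mem_filter, Finset.mem_univ, true_and]
        exact ⟨hab, h'⟩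
      rw [invOf, Finset.card_eq_zero] at h
      rw [h] at this
      exact absurd this (Finset.notMem_empty _)
  have hsm' : StrictMono ⇑(w⁻¹) := by
    intro a b hab
    rcases lt_trichotomy (w⁻¹ a) (w⁻¹ b) with h' | h' | h'
    · exact h'
    · exfalso
      have : a = b := by
        have := congrArg w h'
        simpa using this
      exact absurd hab (this ▸ lt_irrefl _)
    · exfalso
      have := hsm h'
      simp only [Equiv.Perm.coe_inv, Equiv.apply_symm_apply] at this
      exact absurd hab (asymm this)
  haveI : WellFoundedLT (Fin n) := inferInstance
  ext a
  have h1 : a ≤ w a := StrictMono.le_apply hsm (x := a)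
  have h2 : w a ≤ w⁻¹ (w a) := StrictMono.le_apply hsm' (x := w a)
  simp only [Equiv.Perm.coe_inv, Equiv.symm_apply_apply] at h2
  simp only [Equiv.Perm.one_apply]
  exact le_antisymm h2 h1

end Stmt9

namespace Stmt9
variable {n : ℕ}

/-- A nontrivial permutation has an (adjacent) descent. -/
lemma exists_descent (w : Equiv.Perm (Fin n)) (hw : w ≠ 1) :
    ∃ i : Fin (n - 1), w (pb i) < w (pa i) := by
  by_contra hno
  push_neg at hno
  apply hw
  apply eq_one_of_invOf_zero
  -- adjacent ascents everywhere
  have hadj : ∀ i : Fin (n - 1), w (pa i) < w (pb i) := by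
    intro i
    rcases lt_or_gt_of_ne (apply_ne w i) with h | h
    · exact h
    · exact absurd h (not_lt.2 (hno i))
  -- hence strictly monotone
  have hsm : ∀ d : ℕ, ∀ a b : Fin n, b.1 = a.1 + d + 1 → w a < w b := by
    intro d
    induction d with
    | zero =>
      intro a b hab
      have hia : a.1 < n - 1 := by have := b.2; omega
      have h := hadj ⟨a.1, hia⟩
      have ha' : a = pa ⟨a.1, hia⟩ := rfl
      have hb' : b = pb ⟨a.1, hia⟩ := Fin.ext (by simpa [pb] using hab)
      rw [ha', hb']
      exact h
    | succ d ih =>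
      intro a b hab
      have hm : (a.1 + d + 1) < n := by have := b.2; omega
      have h1 := ih a ⟨a.1 + d + 1, hm⟩ rfl
      have hia : a.1 + d + 1 < n - 1 := by have := b.2; omega
      have h2 := hadj ⟨a.1 + d + 1, hia⟩
      have hb' : b = pb ⟨a.1 + d + 1, hia⟩ := Fin.ext (by simp [pb]; omega)
      rw [hb']
      exact h1.trans h2
  unfold invOf
  rw [Finset.card_eq_zero]
  ext pr
  simp only [invSet, Finset.mem_filter, Finset.mem_univ, true_and, Finset.notMem_empty,
    iff_false, not_and]
  intro hlt
  have : pr.2.1 = pr.1.1 + (pr.2.1 - pr.1.1 - 1) + 1 := by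
    have := Fin.lt_def.1 hlt; omega
  exact not_lt.2 (le_of_lt (hsm _ pr.1 pr.2 this))

/-- Every permutation has a word of length `invOf`. -/
lemma exists_word (w : Equiv.Perm (Fin n)) :
    ∃ l : List (Fin (n - 1)), wp l = w ∧ l.length = invOf w := by
  suffices h : ∀ N : ℕ, ∀ w : Equiv.Perm (Fin n), invOf w ≤ N →
      ∃ l : List (Fin (n - 1)), wp l = w ∧ l.length = invOf w from h (invOf w) w le_rfl
  intro N
  induction N with
  | zero =>
    intro w hw
    have h0 : invOf w = 0 := Nat.le_zero.1 hw
    refine ⟨[], ?_, by simp [h0]⟩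
    rw [wp_nil, eq_one_of_invOf_zero w h0]
  | succ N ih =>
    intro w hw
    rcases eq_or_ne w 1 with rfl | hne
    · exact ⟨[], by rw [wp_nil], by simp [invOf_one]⟩
    · obtain ⟨i, hi⟩ := exists_descent w hne
      have hdec := invOf_descent w i hi
      obtain ⟨l, hl, hlen⟩ := ih (w * simpleT i) (by omega)
      refine ⟨l ++ [i], ?_, ?_⟩
      · rw [wp_concat, hl, mul_assoc, simpleT_sq, mul_one]
      · simp only [List.length_append, List.length_singleton, hlen]; omega

/-- Characterization of reduced words. -/
lemma isRedWord_iff (w : Equiv.Perm (Fin n)) (l : List (Fin (n - 1))) :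
    IsRedWord w l ↔ wp l = w ∧ l.length = invOf w := by
  constructor
  · rintro ⟨h1, h2⟩
    refine ⟨h1, le_antisymm ?_ ?_⟩
    · obtain ⟨l', hl', hlen'⟩ := exists_word w
      have := h2 l' hl'
      omega
    · have := invOf_wp_le l
      rw [show wp l = w from h1] at this
      exact this
  · rintro ⟨h1, h2⟩
    refine ⟨h1, ?_⟩
    intro l' hl'
    have := invOf_wp_le l'
    rw [show wp l' = w from hl'] at this
    omega

end Stmt9

namespace Stmt9
variable {n : ℕ}

/-- The three-way case split on rows used below. -/
lemma dom_of_rows {u w : Equiv.Perm (Fin n)} {i : Fin (n - 1)}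
    (hrow : ∀ q, D u (i.1 + 1) q ≤ D w (i.1 + 1) q)
    (hother : ∀ p q, p ≤ i.1 ∨ i.1 + 2 ≤ p → D u p q ≤ D w p q) : Dom u w := by
  intro p q
  rcases Nat.lt_trichotomy p (i.1 + 1) with h | h | h
  · exact hother p q (Or.inl (by omega))
  · rw [h]; exact hrow q
  · exact hother p q (Or.inr (by omega))

lemma ite_le {q a b : ℕ} (h : a ≤ b) :
    (if q ≤ a then (1:ℕ) else 0) ≤ if q ≤ b then 1 else 0 := by
  split_ifs with h1 h2 <;> omega

/-- Ascent: `w ≤ w * s_i` in dominance. -/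
lemma dom_mul_of_ascent (w : Equiv.Perm (Fin n)) (i : Fin (n - 1))
    (ha : w (pa i) < w (pb i)) : Dom w (w * simpleT i) := by
  apply dom_of_rows
  · intro q
    rw [D_mul_row]
    have h1 : i.1 < n := by have := i.2; omega
    rw [D_succ w h1 q]
    exact Nat.add_le_add_left (ite_le (le_of_lt ha)) _
  · intro p q h
    rw [D_mul_eq w i h]

end Stmt9

namespace Stmt9
variable {n : ℕ}

lemma ite_ge_one {q a : ℕ} (h : q ≤ a) : (if q ≤ a then (1:ℕ) else 0) = 1 := if_pos h
lemma ite_eq_zero {q a : ℕ} (h : ¬ q ≤ a) : (if q ≤ a then (1:ℕ) else 0) = 0 := if_neg h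

/-- transporting dominance along a common ascent of `w`. -/
lemma dom_mul_mul_of_ascent {u w : Equiv.Perm (Fin n)} (i : Fin (n - 1))
    (ha : w (pa i) < w (pb i)) (hdom : Dom u w) :
    Dom (u * simpleT i) (w * simpleT i) := by
  apply dom_of_rows
  · intro q
    rw [D_mul_row, D_mul_row]
    by_cases hb : (if q ≤ (u (pb i)).1 then (1:ℕ) else 0) ≤ (if q ≤ (w (pb i)).1 then 1 else 0)
    · exact Nat.add_le_add (hdom i.1 q) hb
    · -- bad case : q ≤ u (pb i), w (pb i) < q
      have h1 : q ≤ (u (pb i)).1 := by by_contra h; simp [h] at hb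
      have h2 : ¬ q ≤ (w (pb i)).1 := by by_contra h; simp [h1, h] at hb
      have key := hdom (i.1 + 2) q
      rw [D_row_two, D_row_two] at key
      have hwa : ¬ q ≤ (w (pa i)).1 := by
        intro h; exact h2 (le_trans h (le_of_lt ha))
      rw [ite_eq_zero hwa, ite_eq_zero h2, ite_ge_one h1] at key
      rw [ite_ge_one h1, ite_eq_zero h2]
      omega
  · intro p q h
    rw [D_mul_eq w i h, D_mul_eq u i h]
    exact hdom p q

/-- L1: double descent transport. -/
lemma dom_mul_mul_of_descent {u w : Equiv.Perm (Fin n)} (i : Fin (n - 1))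
    (_hdw : w (pb i) < w (pa i)) (hdu : u (pb i) < u (pa i)) (hdom : Dom u w) :
    Dom (u * simpleT i) (w * simpleT i) := by
  apply dom_of_rows
  · intro q
    rw [D_mul_row, D_mul_row]
    by_cases hb : (if q ≤ (u (pb i)).1 then (1:ℕ) else 0) ≤ (if q ≤ (w (pb i)).1 then 1 else 0)
    · exact Nat.add_le_add (hdom i.1 q) hb
    · have h1 : q ≤ (u (pb i)).1 := by by_contra h; simp [h] at hb
      have h2 : ¬ q ≤ (w (pb i)).1 := by by_contra h; simp [h1, h] at hb
      have key := hdom (i.1 + 2) q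
      rw [D_row_two, D_row_two] at key
      have hua : q ≤ (u (pa i)).1 := le_trans h1 (le_of_lt hdu)
      rw [ite_ge_one h1, ite_ge_one hua, ite_eq_zero h2] at key
      rw [ite_ge_one h1, ite_eq_zero h2]
      have : (if q ≤ (w (pa i)).1 then (1:ℕ) else 0) ≤ 1 := by split_ifs <;> omega
      omega
  · intro p q h
    rw [D_mul_eq w i h, D_mul_eq u i h]
    exact hdom p q

/-- L2: descent of `w`, ascent of `u`. -/
lemma dom_mul_of_descent_ascent {u w : Equiv.Perm (Fin n)} (i : Fin (n - 1))
    (_hdw : w (pb i) < w (pa i)) (hau : u (pa i) < u (pb i)) (hdom : Dom u w) :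
    Dom u (w * simpleT i) := by
  apply dom_of_rows
  · intro q
    have h1 : i.1 < n := by have := i.2; omega
    rw [D_mul_row, D_succ u h1 q]
    have hpa : (⟨i.1, h1⟩ : Fin n) = pa i := rfl
    rw [hpa]
    by_cases hb : (if q ≤ (u (pa i)).1 then (1:ℕ) else 0) ≤ (if q ≤ (w (pb i)).1 then 1 else 0)
    · exact Nat.add_le_add (hdom i.1 q) hb
    · have h1' : q ≤ (u (pa i)).1 := by by_contra h; simp [h] at hb
      have h2 : ¬ q ≤ (w (pb i)).1 := by by_contra h; simp [h1', h] at hb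
      have hub : q ≤ (u (pb i)).1 := le_trans h1' (le_of_lt hau)
      have key := hdom (i.1 + 2) q
      rw [D_row_two, D_row_two] at key
      rw [ite_ge_one h1', ite_ge_one hub, ite_eq_zero h2] at key
      rw [ite_ge_one h1', ite_eq_zero h2]
      have : (if q ≤ (w (pa i)).1 then (1:ℕ) else 0) ≤ 1 := by split_ifs <;> omega
      omega
  · intro p q h
    rw [D_mul_eq w i h]
    exact hdom p q

/-- Subword of a reduced word implies dominance. -/
lemma sublist_dom : ∀ lw : List (Fin (n - 1)), lw.length = invOf (wp lw) →
    ∀ lu : List (Fin (n - 1)), lu.Sublist lw → Dom (wp lu) (wp lw) := by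
  intro lw
  induction lw using List.reverseRecOn with
  | nil =>
    intro _ lu hsub
    rw [List.sublist_nil.1 hsub]
    exact Dom.refl _
  | append_singleton l i ih =>
    intro hred lu hsub
    rw [wp_concat] at hred ⊢
    have hlen : (l ++ [i]).length = l.length + 1 := by simp
    have hl1 : invOf (wp l) ≤ l.length := invOf_wp_le l
    have hl2 : invOf (wp l * simpleT i) ≤ invOf (wp l) + 1 := invOf_mul_le _ _
    have hlred : l.length = invOf (wp l) := by omega
    have hasc : (wp l) (pa i) < (wp l) (pb i) := by
      rcases lt_or_gt_of_ne (apply_ne (wp l) i) with h | h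
      · exact h
      · exfalso
        have := invOf_descent (wp l) i h
        omega
    rcases List.sublist_append_iff.1 hsub with ⟨r1, r2, hl, hs1, hs2⟩
    rcases List.sublist_singleton.1 hs2 with rfl | rfl
    · rw [hl, List.append_nil]
      exact (ih hlred r1 hs1).trans (dom_mul_of_ascent _ i hasc)
    · rw [hl, wp_concat]
      exact dom_mul_mul_of_ascent i hasc (ih hlred r1 hs1)

lemma bruhat_dom {u w : Equiv.Perm (Fin n)} (h : bruhatLE u w) : Dom u w := by
  obtain ⟨lw, hlw, lu, hsub, hlu⟩ := h
  rw [isRedWord_iff] at hlw hlu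
  obtain ⟨hw1, hw2⟩ := hlw
  obtain ⟨hu1, hu2⟩ := hlu
  rw [← hw1, ← hu1]
  exact sublist_dom lw (by rw [hw1]; omega) lu hsub

lemma dom_one {u : Equiv.Perm (Fin n)} (h : Dom u 1) : u = 1 := by
  -- first : u k ≤ k for all k
  have hle : ∀ k : Fin n, (u k).1 ≤ k.1 := by
    intro k
    by_contra hgt
    push_neg at hgt
    have h1 : 1 ≤ D u (k.1 + 1) (k.1 + 1) := by
      rw [Nat.succ_le_iff, D, Finset.card_pos]
      exact ⟨k, by simp only [Finset.mem_filter, Finset.mem_univ, true_and]; omega⟩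
    have h2 : D (1 : Equiv.Perm (Fin n)) (k.1 + 1) (k.1 + 1) = 0 := by
      rw [D, Finset.card_eq_zero]
      ext m
      simp only [Finset.mem_filter, Finset.mem_univ, true_and, Finset.notMem_empty, iff_false,
        not_and, Equiv.Perm.one_apply]
      intro h
      obtain ⟨-, h1, h2⟩ := Finset.mem_filter.1 h
      exact absurd h2 (by show ¬ (k.1 + 1 ≤ m.1); omega)
    have := h (k.1 + 1) (k.1 + 1)
    omega
  -- then u = 1 by downward induction
  have key : ∀ m : ℕ, ∀ k : Fin n, k.1 = m → u k = k := by
    intro m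
    induction m using Nat.strong_induction_on with
    | _ m ih =>
      intro k hk
      rcases lt_or_eq_of_le (hle k) with hlt | heq
      · exfalso
        set j := u k with hj
        have hjk : u j = j := ih j.1 (by omega) j rfl
        have : u j = u k := by rw [hjk, hj]
        have := u.injective this
        omega
      · exact Fin.ext heq
  ext k
  simp only [Equiv.Perm.one_apply]
  exact congrArg Fin.val (key k.1 k rfl)

lemma bruhatLE_one_one : bruhatLE (1 : Equiv.Perm (Fin n)) 1 := by
  have hred : IsRedWord (1 : Equiv.Perm (Fin n)) [] := by
    rw [isRedWord_iff]
    exact ⟨rfl, by simp [invOf_one]⟩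
  exact ⟨[], hred, [], List.Sublist.refl _, hred⟩

/-- Dominance implies Bruhat. -/
lemma dom_bruhat : ∀ N : ℕ, ∀ u w : Equiv.Perm (Fin n), invOf w ≤ N → Dom u w →
    bruhatLE u w := by
  intro N
  induction N with
  | zero =>
    intro u w hw hdom
    have hw1 : w = 1 := eq_one_of_invOf_zero w (Nat.le_zero.1 hw)
    subst hw1
    rw [dom_one hdom]
    exact bruhatLE_one_one
  | succ N ih =>
    intro u w hw hdom
    rcases eq_or_ne w 1 with rfl | hne
    · rw [dom_one hdom]
      exact bruhatLE_one_one
    · obtain ⟨i, hi⟩ := exists_descent w hne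
      have hinv := invOf_descent w i hi
      rcases lt_or_gt_of_ne (apply_ne u i) with hau | hdu
      · -- u has ascent at i : u ≤ w s < w
        have hdom' : Dom u (w * simpleT i) := dom_mul_of_descent_ascent i hi hau hdom
        obtain ⟨lws, hlws, lu, hsub, hlu⟩ := ih u (w * simpleT i) (by omega) hdom'
        refine ⟨lws ++ [i], ?_, lu, hsub.trans (List.sublist_append_left _ _), hlu⟩
        rw [isRedWord_iff] at hlws ⊢
        constructor
        · rw [wp_concat, hlws.1, mul_assoc, simpleT_sq, mul_one]
        · simp only [List.length_append, List.length_singleton]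
          omega
      · -- u has descent at i
        have hdom' : Dom (u * simpleT i) (w * simpleT i) :=
          dom_mul_mul_of_descent i hi hdu hdom
        have hinvu := invOf_descent u i hdu
        obtain ⟨lws, hlws, lus, hsub, hlus⟩ := ih (u * simpleT i) (w * simpleT i)
          (by omega) hdom'
        refine ⟨lws ++ [i], ?_, lus ++ [i], hsub.append (List.Sublist.refl _), ?_⟩
        · rw [isRedWord_iff] at hlws ⊢
          refine ⟨?_, by simp only [List.length_append, List.length_singleton]; omega⟩
          rw [wp_concat, hlws.1, mul_assoc, simpleT_sq, mul_one]
        · rw [isRedWord_iff] at hlus ⊢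
          refine ⟨?_, by simp only [List.length_append, List.length_singleton]; omega⟩
          rw [wp_concat, hlus.1, mul_assoc, simpleT_sq, mul_one]

end Stmt9

namespace Stmt9
variable {n : ℕ}

/-! ### Left-to-right maxima facts -/

lemma le_lrMax (w : Equiv.Perm (Fin n)) {k j : Fin n} (h : k ≤ j) : w k ≤ lrMax w j :=
  Finset.le_sup' _ (Finset.mem_Iic.2 h)

lemma self_le_lrMax (w : Equiv.Perm (Fin n)) (j : Fin n) : w j ≤ lrMax w j :=
  le_lrMax w le_rfl

lemma exists_eq_lrMax (w : Equiv.Perm (Fin n)) (j : Fin n) :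
    ∃ k, k ≤ j ∧ w k = lrMax w j := by
  obtain ⟨k, hk, he⟩ := Finset.exists_mem_eq_sup' (⟨j, Finset.mem_Iic.2 le_rfl⟩ :
    (Finset.Iic j).Nonempty) (fun k => w k)
  exact ⟨k, Finset.mem_Iic.1 hk, he.symm⟩

lemma lrMax_mono (w : Equiv.Perm (Fin n)) {j j' : Fin n} (h : j ≤ j') :
    lrMax w j ≤ lrMax w j' := by
  apply Finset.sup'_le
  intro k hk
  exact le_lrMax w (le_trans (Finset.mem_Iic.1 hk) h)

lemma lrMax_le_of_dom {u w : Equiv.Perm (Fin n)} (h : Dom u w) (j : Fin n) :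
    lrMax u j ≤ lrMax w j := by
  obtain ⟨k, hk, he⟩ := exists_eq_lrMax u j
  have h1 : 1 ≤ D u (j.1 + 1) (lrMax u j).1 := by
    rw [Nat.succ_le_iff, D, Finset.card_pos]
    refine ⟨k, ?_⟩
    simp only [Finset.mem_filter, Finset.mem_univ, true_and]
    have : k.1 ≤ j.1 := hk
    rw [he]
    omega
  have h2 := h (j.1 + 1) (lrMax u j).1
  have h3 : 1 ≤ D w (j.1 + 1) (lrMax u j).1 := le_trans h1 h2
  rw [Nat.succ_le_iff, D, Finset.card_pos] at h3
  obtain ⟨m, hm⟩ := h3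
  simp only [Finset.mem_filter, Finset.mem_univ, true_and] at hm
  calc lrMax u j ≤ w m := hm.2
  _ ≤ lrMax w j := le_lrMax w (by rw [Fin.le_def]; omega)

/-! ### Records -/

/-- `j` is a record position (w.r.t. the profile of `v`). -/
def IsRec (v : Equiv.Perm (Fin n)) (j : Fin n) : Prop :=
  ∀ k, k < j → lrMax v k < lrMax v j

/-- `y` is a record value. -/
def IsRecVal (v : Equiv.Perm (Fin n)) (y : Fin n) : Prop :=
  ∃ j, IsRec v j ∧ lrMax v j = y

instance (v : Equiv.Perm (Fin n)) : DecidablePred (IsRec v) := fun _ =>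
  inferInstanceAs (Decidable (∀ _, _))

instance (v : Equiv.Perm (Fin n)) : DecidablePred (IsRecVal v) := fun _ =>
  inferInstanceAs (Decidable (∃ _, _))

/-- At a record position every fiber element takes the value `lrMax v j`. -/
lemma rec_apply {v w : Equiv.Perm (Fin n)} (hw : lrMax w = lrMax v) {j : Fin n}
    (hj : IsRec v j) : w j = lrMax v j := by
  obtain ⟨k, hk, he⟩ := exists_eq_lrMax w j
  rw [hw] at he
  rcases lt_or_eq_of_le hk with hlt | rfl
  · exfalso
    have h1 := hj k hlt
    have h2 : lrMax v j = w k := he.symm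
    have h3 : w k ≤ lrMax w k := self_le_lrMax w k
    rw [hw] at h3
    rw [h2] at h1
    exact absurd (lt_of_le_of_lt h3 h1) (lt_irrefl _)
  · exact he

/-- At a non-record position every fiber element is strictly below the running max. -/
lemma nonrec_apply {v w : Equiv.Perm (Fin n)} (hw : lrMax w = lrMax v) {j : Fin n}
    (hj : ¬ IsRec v j) : w j < lrMax v j := by
  unfold IsRec at hj
  push_neg at hj
  obtain ⟨k, hk, hge⟩ := hj
  have heq : lrMax v k = lrMax v j := le_antisymm (lrMax_mono v (le_of_lt hk)) hge
  obtain ⟨m, hm, he⟩ := exists_eq_lrMax w k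
  rw [hw, heq] at he
  have hle : w j ≤ lrMax v j := by rw [← hw]; exact self_le_lrMax w j
  rcases lt_or_eq_of_le hle with h | h
  · exact h
  · exfalso
    have : w j = w m := by rw [h, he]
    have := w.injective this
    subst this
    exact absurd (lt_of_le_of_lt hm hk) (lt_irrefl _)

/-- Every running-max value is a record value. -/
lemma isRecVal_lrMax (v : Equiv.Perm (Fin n)) (t : Fin n) : IsRecVal v (lrMax v t) := by
  obtain ⟨m, hm, he⟩ := exists_eq_lrMax v t
  have hmax : lrMax v m = lrMax v t := by
    apply le_antisymm (lrMax_mono v hm)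
    rw [← he]
    exact self_le_lrMax v m
  refine ⟨m, ?_, hmax⟩
  intro k hk
  rcases lt_or_eq_of_le (lrMax_mono v (le_of_lt hk)) with h | h
  · exact h
  · exfalso
    obtain ⟨m', hm', he'⟩ := exists_eq_lrMax v k
    have : v m' = v m := by rw [he', h, hmax, he]
    have := v.injective this
    subst this
    exact absurd (lt_of_le_of_lt hm' hk) (lt_irrefl _)

/-! ### Value-set form of `D` -/

/-- The set of values in the first `p` positions. -/
def U (w : Equiv.Perm (Fin n)) (p : ℕ) : Finset (Fin n) :=
  (Finset.univ.filter fun k : Fin n => k.1 < p).image w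

lemma D_eq_U (w : Equiv.Perm (Fin n)) (p q : ℕ) :
    D w p q = ((U w p).filter fun y => q ≤ y.1).card := by
  rw [U, Finset.filter_image, Finset.card_image_of_injective _ w.injective,
    Finset.filter_filter, D]

lemma card_U (w : Equiv.Perm (Fin n)) (p : ℕ) :
    (U w p).card = (Finset.univ.filter fun k : Fin n => k.1 < p).card :=
  Finset.card_image_of_injective _ w.injective

lemma mem_U {w : Equiv.Perm (Fin n)} {p : ℕ} {y : Fin n} :
    y ∈ U w p ↔ ((w⁻¹ : Equiv.Perm (Fin n)) y).1 < p := by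
  constructor
  · rintro hy
    rw [U, Finset.mem_image] at hy
    obtain ⟨k, hk, rfl⟩ := hy
    simp only [Finset.mem_filter, Finset.mem_univ, true_and] at hk
    rwa [Equiv.Perm.coe_inv, Equiv.symm_apply_apply]
  · intro hy
    rw [U, Finset.mem_image]
    exact ⟨w⁻¹ y, by simp only [Finset.mem_filter, Finset.mem_univ, true_and]; exact hy,
      Equiv.apply_symm_apply w y⟩

/-- The record values used so far are the same for all fiber members. -/
lemma U_filter_recVal {v w : Equiv.Perm (Fin n)} (hw : lrMax w = lrMax v) (p : ℕ) :
    (U w p).filter (fun y => IsRecVal v y) =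
      (Finset.univ.filter fun j : Fin n => IsRec v j ∧ j.1 < p).image (lrMax v) := by
  ext y
  simp only [Finset.mem_filter, Finset.mem_image, Finset.mem_univ, true_and]
  constructor
  · rintro ⟨hyU, j, hj, rfl⟩
    refine ⟨j, ⟨hj, ?_⟩, rfl⟩
    have hwj : w j = lrMax v j := rec_apply hw hj
    rw [U, Finset.mem_image] at hyU
    obtain ⟨k, hk, hke⟩ := hyU
    simp only [Finset.mem_filter, Finset.mem_univ, true_and] at hk
    have : k = j := w.injective (by rw [hke, hwj])
    omega
  · rintro ⟨j, ⟨hj, hjp⟩, rfl⟩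
    refine ⟨?_, j, hj, rfl⟩
    rw [← rec_apply hw hj, U, Finset.mem_image]
    exact ⟨j, by simp only [Finset.mem_filter, Finset.mem_univ, true_and]; exact hjp, rfl⟩

end Stmt9

namespace Stmt9
variable {n : ℕ}

lemma count_D_split (v w : Equiv.Perm (Fin n)) (p q : ℕ) :
    D w p q = ((U w p).filter fun y => IsRecVal v y ∧ q ≤ y.1).card
      + ((U w p).filter fun y => ¬ IsRecVal v y ∧ q ≤ y.1).card := by
  rw [D_eq_U]
  rw [← Finset.card_filter_add_card_filter_not (s := (U w p).filter fun y => q ≤ y.1)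
    (p := fun y => IsRecVal v y)]
  congr 1
  · rw [Finset.filter_filter]
    congr 1
    apply Finset.filter_congr
    intro y _
    tauto
  · rw [Finset.filter_filter]
    congr 1
    apply Finset.filter_congr
    intro y _
    tauto

lemma rec_part_eq {v w : Equiv.Perm (Fin n)} (hw : lrMax w = lrMax v) (p : ℕ)
    (pred : Fin n → Prop) [DecidablePred pred] :
    ((U w p).filter fun y => IsRecVal v y ∧ pred y).card
      = ((U v p).filter fun y => IsRecVal v y ∧ pred y).card := by
  have hset : ∀ u : Equiv.Perm (Fin n), lrMax u = lrMax v →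
      ((U u p).filter fun y => IsRecVal v y ∧ pred y)
        = ((U u p).filter fun y => IsRecVal v y).filter pred := by
    intro u hu
    rw [Finset.filter_filter]
  rw [hset w hw, hset v rfl, U_filter_recVal hw, U_filter_recVal (v := v) rfl]

/-- Key counting lemma for the 321-avoiding minimum. -/
lemma keyM {v wmin : Equiv.Perm (Fin n)} (hvw : lrMax wmin = lrMax v)
    (h2 : Avoids321 wmin) {p : ℕ} (hp : p < n) {q : ℕ}
    (hq : (v ⟨p, hp⟩).1 < q) (hq' : q ≤ (wmin ⟨p, hp⟩).1) : D wmin p q < D v p q := by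
  set P : Fin n := ⟨p, hp⟩ with hP
  -- P is not a record position
  have hPnr : ¬ IsRec v P := by
    intro hrec
    have hv := rec_apply (v := v) rfl hrec
    have h3 : (wmin P).1 ≤ (lrMax v P).1 := by
      rw [← hvw]; exact self_le_lrMax wmin P
    rw [hv] at hq
    omega
  set x := v P with hx
  have hxnr : ¬ IsRecVal v x := by
    rintro ⟨j, hj, hjv⟩
    have := rec_apply (v := v) rfl hj
    have : v j = v P := by rw [this, hjv]
    have := v.injective this
    subst this
    exact hPnr hj
  have hxU : x ∉ U v p := by
    rw [mem_U]
    simp only [hx, Equiv.Perm.coe_inv, Equiv.symm_apply_apply, Fin.val_mk]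
    exact lt_irrefl p
  set A : Finset (Fin n) := Finset.univ.filter fun y => ¬ IsRecVal v y ∧ y.1 < q with hA
  have hxA : x ∈ A := by
    simp only [hA, Finset.mem_filter, Finset.mem_univ, true_and]
    exact ⟨hxnr, hq⟩
  -- every non-record value < q is already used by wmin
  have hAU : A ⊆ U wmin p := by
    intro y hy
    simp only [hA, Finset.mem_filter, Finset.mem_univ, true_and] at hy
    obtain ⟨hynr, hyq⟩ := hy
    rw [mem_U]
    set b := (wmin⁻¹ : Equiv.Perm (Fin n)) y with hb
    have hby : wmin b = y := Equiv.apply_symm_apply wmin y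
    by_contra hbp
    push_neg at hbp
    rcases eq_or_lt_of_le hbp with heq | hlt
    · -- b = P
      have : b = P := Fin.ext heq.symm
      rw [this] at hby
      rw [← hby] at hyq
      omega
    · -- b > P : find a 321 pattern
      have hPb : P < b := by rw [Fin.lt_def]; exact hlt
      have hminP : wmin P < lrMax v P := nonrec_apply hvw hPnr
      obtain ⟨r, hr, hre⟩ := exists_eq_lrMax wmin P
      rw [hvw] at hre
      have hrP : r < P := by
        rcases lt_or_eq_of_le hr with h | h
        · exact h
        · exfalso
          rw [h] at hre
          rw [hre] at hminP
          exact lt_irrefl _ hminP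
      apply h2
      refine ⟨r, P, b, hrP, hPb, ?_, ?_⟩
      · rw [hby, Fin.lt_def]; omega
      · rw [hre]; exact hminP
  -- counting
  have split1 := count_D_split v wmin p q
  have split2 := count_D_split v v p q
  have recEq := rec_part_eq hvw p (fun y => q ≤ y.1)
  -- full-card equality
  have cardEq : (U wmin p).card = (U v p).card := by rw [card_U, card_U]
  -- low parts
  have lowsplit : ∀ u : Equiv.Perm (Fin n),
      (U u p).card = D u p q + (((U u p).filter fun y => IsRecVal v y ∧ y.1 < q).card
        + ((U u p).filter fun y => ¬ IsRecVal v y ∧ y.1 < q).card) := by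
    intro u
    rw [D_eq_U]
    rw [← Finset.card_filter_add_card_filter_not (s := U u p)
      (p := fun y => q ≤ y.1)]
    congr 1
    rw [← Finset.card_filter_add_card_filter_not
      (s := (U u p).filter fun y => ¬ q ≤ y.1) (p := fun y => IsRecVal v y)]
    congr 1
    · rw [Finset.filter_filter]
      congr 1
      apply Finset.filter_congr
      intro y _
      simp only [eq_iff_iff, not_le]
      tauto
    · rw [Finset.filter_filter]
      congr 1
      apply Finset.filter_congr
      intro y _
      simp only [eq_iff_iff, not_le]
      tauto
  have recEqLow := rec_part_eq hvw p (fun y => y.1 < q)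
  -- strict inequality on non-record low parts
  have hsub1 : ((U v p).filter fun y => ¬ IsRecVal v y ∧ y.1 < q) ⊆ A.erase x := by
    intro y hy
    simp only [Finset.mem_filter] at hy
    rw [Finset.mem_erase]
    refine ⟨?_, by simp only [hA, Finset.mem_filter, Finset.mem_univ, true_and]; exact hy.2⟩
    intro h
    rw [h] at hy
    exact hxU hy.1
  have hsub2 : A ⊆ ((U wmin p).filter fun y => ¬ IsRecVal v y ∧ y.1 < q) := by
    intro y hy
    rw [Finset.mem_filter]
    refine ⟨hAU hy, ?_⟩
    simp only [hA, Finset.mem_filter, Finset.mem_univ, true_and] at hy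
    exact hy
  have hc1 := Finset.card_le_card hsub1
  have hc2 := Finset.card_le_card hsub2
  have hc3 := Finset.card_erase_of_mem hxA
  have hc4 : 0 < A.card := Finset.card_pos.2 ⟨x, hxA⟩
  have e1 := lowsplit wmin
  have e2 := lowsplit v
  omega

/-- Key counting lemma for the 312-avoiding maximum. -/
lemma keyX {v wmax : Equiv.Perm (Fin n)} (hvw : lrMax wmax = lrMax v)
    (h4 : Avoids312 wmax) {p : ℕ} (hp : p < n) {q : ℕ}
    (hq : (wmax ⟨p, hp⟩).1 < q) (hq' : q ≤ (v ⟨p, hp⟩).1) : D v p q < D wmax p q := by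
  set P : Fin n := ⟨p, hp⟩ with hP
  have hPnr : ¬ IsRec v P := by
    intro hrec
    have hv := rec_apply hvw hrec
    have h3 : (v P).1 ≤ (lrMax v P).1 := self_le_lrMax v P
    rw [hv] at hq
    omega
  set x := v P with hx
  have hxlt : x < lrMax v P := nonrec_apply (v := v) rfl hPnr
  have hxnr : ¬ IsRecVal v x := by
    rintro ⟨j, hj, hjv⟩
    have := rec_apply (v := v) rfl hj
    have : v j = v P := by rw [this, hjv]
    have := v.injective this
    subst this
    exact hPnr hj
  have hxU : x ∉ U v p := by
    rw [mem_U]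
    simp only [hx, Equiv.Perm.coe_inv, Equiv.symm_apply_apply, Fin.val_mk]
    exact lt_irrefl p
  set B : Finset (Fin n) := Finset.univ.filter
    fun y => ¬ IsRecVal v y ∧ q ≤ y.1 ∧ y.1 < (lrMax v P).1 with hB
  have hxB : x ∈ B := by
    simp only [hB, Finset.mem_filter, Finset.mem_univ, true_and]
    exact ⟨hxnr, hq', hxlt⟩
  -- every non-record value in [q, α P) is already used by wmax
  have hBU : B ⊆ U wmax p := by
    intro z hz
    simp only [hB, Finset.mem_filter, Finset.mem_univ, true_and] at hz
    obtain ⟨hznr, hzq, hzlt⟩ := hz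
    rw [mem_U]
    set c := (wmax⁻¹ : Equiv.Perm (Fin n)) z with hc
    have hcz : wmax c = z := Equiv.apply_symm_apply wmax z
    by_contra hcp
    push_neg at hcp
    rcases eq_or_lt_of_le hcp with heq | hlt
    · have : c = P := Fin.ext heq.symm
      rw [this] at hcz
      rw [← hcz] at hzq
      omega
    · have hPc : P < c := by rw [Fin.lt_def]; exact hlt
      obtain ⟨r, hr, hre⟩ := exists_eq_lrMax wmax P
      rw [hvw] at hre
      have hrP : r < P := by
        rcases lt_or_eq_of_le hr with h | h
        · exact h
        · exfalso
          rw [h] at hre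
          rw [hre] at hq
          have : (lrMax v P).1 ≤ z.1 := by omega
          omega
      apply h4
      refine ⟨r, P, c, hrP, hPc, ?_, ?_⟩
      · rw [hcz, Fin.lt_def]; omega
      · rw [hcz, hre]
        rw [Fin.lt_def]
        exact hzlt
  -- counting
  have split1 := count_D_split v wmax p q
  have split2 := count_D_split v v p q
  have recEq := rec_part_eq hvw p (fun y => q ≤ y.1)
  have hsub1 : ((U v p).filter fun y => ¬ IsRecVal v y ∧ q ≤ y.1) ⊆ B.erase x := by
    intro y hy
    simp only [Finset.mem_filter] at hy
    obtain ⟨hyU, hynr, hyq⟩ := hy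
    rw [Finset.mem_erase]
    refine ⟨?_, ?_⟩
    · intro h
      rw [h] at hyU
      exact hxU hyU
    · simp only [hB, Finset.mem_filter, Finset.mem_univ, true_and]
      refine ⟨hynr, hyq, ?_⟩
      -- y < lrMax v P
      have hky : ((v⁻¹ : Equiv.Perm (Fin n)) y).1 < p := mem_U.1 hyU
      set k := (v⁻¹ : Equiv.Perm (Fin n)) y with hk
      have hkv : v k = y := Equiv.apply_symm_apply v y
      have hkP : k ≤ P := by rw [Fin.le_def]; show k.1 ≤ p; omega
      have h5 : y ≤ lrMax v P := by
        rw [← hkv]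
        exact le_trans (self_le_lrMax v k) (lrMax_mono v hkP)
      rcases lt_or_eq_of_le h5 with h | h
      · exact h
      · exfalso
        exact hynr (h ▸ isRecVal_lrMax v P)
  have hsub2 : B ⊆ ((U wmax p).filter fun y => ¬ IsRecVal v y ∧ q ≤ y.1) := by
    intro y hy
    rw [Finset.mem_filter]
    refine ⟨hBU hy, ?_⟩
    simp only [hB, Finset.mem_filter, Finset.mem_univ, true_and] at hy
    exact ⟨hy.1, hy.2.1⟩
  have hc1 := Finset.card_le_card hsub1
  have hc2 := Finset.card_le_card hsub2
  have hc3 := Finset.card_erase_of_mem hxB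
  have hc4 : 0 < B.card := Finset.card_pos.2 ⟨x, hxB⟩
  omega

end Stmt9

namespace Stmt9
variable {n : ℕ}

lemma dom_min {v wmin : Equiv.Perm (Fin n)} (hvw : lrMax wmin = lrMax v)
    (h2 : Avoids321 wmin) : Dom wmin v := by
  intro p q
  induction p with
  | zero => rw [D_zero, D_zero]
  | succ p ih =>
    rcases Nat.lt_or_ge p n with hp | hp
    · rw [D_succ wmin hp q, D_succ v hp q]
      by_cases hcase : (if q ≤ (wmin ⟨p, hp⟩).1 then (1:ℕ) else 0) ≤
          (if q ≤ (v ⟨p, hp⟩).1 then 1 else 0)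
      · exact Nat.add_le_add ih hcase
      · have hq' : q ≤ (wmin ⟨p, hp⟩).1 := by by_contra h; simp [h] at hcase
        have hq : (v ⟨p, hp⟩).1 < q := by by_contra h; push_neg at h; simp [hq', h] at hcase
        have := keyM hvw h2 hp hq hq'
        rw [ite_ge_one hq', ite_eq_zero (by omega)]
        omega
    · rw [D_succ_ge wmin hp q, D_succ_ge v hp q]
      exact ih

lemma dom_max {v wmax : Equiv.Perm (Fin n)} (hvw : lrMax wmax = lrMax v)
    (h4 : Avoids312 wmax) : Dom v wmax := by
  intro p q
  induction p with
  | zero => rw [D_zero, D_zero]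
  | succ p ih =>
    rcases Nat.lt_or_ge p n with hp | hp
    · rw [D_succ wmax hp q, D_succ v hp q]
      by_cases hcase : (if q ≤ (v ⟨p, hp⟩).1 then (1:ℕ) else 0) ≤
          (if q ≤ (wmax ⟨p, hp⟩).1 then 1 else 0)
      · exact Nat.add_le_add ih hcase
      · have hq' : q ≤ (v ⟨p, hp⟩).1 := by by_contra h; simp [h] at hcase
        have hq : (wmax ⟨p, hp⟩).1 < q := by by_contra h; push_neg at h; simp [hq', h] at hcase
        have := keyX hvw h4 hp hq hq'
        rw [ite_ge_one hq', ite_eq_zero (by omega)]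
        omega
    · rw [D_succ_ge wmax hp q, D_succ_ge v hp q]
      exact ih

end Stmt9


/-- The fiber of the left-to-right-maximum map over `α` is the Bruhat
interval between its 321-avoiding member and its 312-avoiding member. -/
theorem stmt_9 (n : ℕ) (α : Fin n → Fin n) (wmin wmax : Equiv.Perm (Fin n))
    (h1 : lrMax wmin = α) (h2 : Avoids321 wmin)
    (h3 : lrMax wmax = α) (h4 : Avoids312 wmax) :
    ∀ v : Equiv.Perm (Fin n), lrMax v = α ↔ (bruhatLE wmin v ∧ bruhatLE v wmax) := by
  intro v
  constructor
  · intro hv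
    have hmv : lrMax wmin = lrMax v := by rw [h1, hv]
    have hvx : lrMax wmax = lrMax v := by rw [h3, hv]
    have d1 : Stmt9.Dom wmin v := Stmt9.dom_min hmv h2
    have d2 : Stmt9.Dom v wmax := Stmt9.dom_max hvx h4
    exact ⟨Stmt9.dom_bruhat _ wmin v le_rfl d1, Stmt9.dom_bruhat _ v wmax le_rfl d2⟩
  · rintro ⟨b1, b2⟩
    funext j
    have l1 := Stmt9.lrMax_le_of_dom (Stmt9.bruhat_dom b1) j
    have l2 := Stmt9.lrMax_le_of_dom (Stmt9.bruhat_dom b2) j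
    rw [h1] at l1
    rw [h3] at l2
    exact le_antisymm l2 l1
end

section
/- For every element α of the double Catalan monoid DC_n, the fiber Ψ_α = {w ∈ S_n : Ψ(z_w) = α} of the canonical surjection Ψ : H_n → DC_n contains exactly one 4321-avoiding permutation. -/
open Pointwise

section Stmt10Aux

variable {n : ℕ}

theorem le_lrMax_of_le (w : Equiv.Perm (Fin n)) {i j : Fin n} (h : i ≤ j) :
    w i ≤ lrMax w j :=
  Finset.le_sup' (fun k => w k) (Finset.mem_Iic.2 h)

theorem rlMin_le_of_le (w : Equiv.Perm (Fin n)) {j l : Fin n} (h : j ≤ l) :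
    rlMin w j ≤ w l :=
  Finset.inf'_le (fun k => w k) (Finset.mem_Ici.2 h)

theorem lrMax_mono (w : Equiv.Perm (Fin n)) : Monotone (lrMax w) := by
  intro a b hab
  exact Finset.sup'_le _ _ fun i hi => le_lrMax_of_le w ((Finset.mem_Iic.1 hi).trans hab)

theorem rlMin_mono (w : Equiv.Perm (Fin n)) : Monotone (rlMin w) := by
  intro a b hab
  exact Finset.le_inf' _ _ fun i hi => rlMin_le_of_le w (hab.trans (Finset.mem_Ici.1 hi))

theorem exists_lrMax (w : Equiv.Perm (Fin n)) (j : Fin n) :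
    ∃ i, i ≤ j ∧ w i = lrMax w j := by
  obtain ⟨i, hi, h⟩ := Finset.exists_mem_eq_sup' (⟨j, Finset.mem_Iic.2 le_rfl⟩ :
    (Finset.Iic j).Nonempty) (fun k => (w k : Fin n))
  exact ⟨i, Finset.mem_Iic.1 hi, h.symm⟩

theorem exists_rlMin (w : Equiv.Perm (Fin n)) (j : Fin n) :
    ∃ l, j ≤ l ∧ w l = rlMin w j := by
  obtain ⟨i, hi, h⟩ := Finset.exists_mem_eq_inf' (⟨j, Finset.mem_Ici.2 le_rfl⟩ :
    (Finset.Ici j).Nonempty) (fun k => (w k : Fin n))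
  exact ⟨i, Finset.mem_Ici.1 hi, h.symm⟩

theorem lrMax_eq_self_iff (w : Equiv.Perm (Fin n)) (j : Fin n) :
    lrMax w j = w j ↔ ∀ i, i < j → lrMax w i < lrMax w j := by
  constructor
  · intro h i hij
    refine lt_of_le_of_ne (lrMax_mono w hij.le) fun heq => ?_
    obtain ⟨i', hi', h'⟩ := exists_lrMax w i
    have hww : w i' = w j := by rw [h', heq, h]
    have he := w.injective hww
    rw [he] at hi'
    exact absurd hij (not_lt.2 hi')
  · intro h
    obtain ⟨i, hij, hi⟩ := exists_lrMax w j
    rcases eq_or_lt_of_le hij with rfl | hlt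
    · exact hi.symm
    · have h2 : lrMax w j ≤ lrMax w i := hi ▸ le_lrMax_of_le w le_rfl
      exact absurd (h i hlt) (not_lt.2 h2)

theorem rlMin_eq_self_iff (w : Equiv.Perm (Fin n)) (j : Fin n) :
    rlMin w j = w j ↔ ∀ l, j < l → rlMin w j < rlMin w l := by
  constructor
  · intro h l hjl
    refine lt_of_le_of_ne (rlMin_mono w hjl.le) fun heq => ?_
    obtain ⟨l', hl', h'⟩ := exists_rlMin w l
    have hww : w l' = w j := by rw [h', ← heq, h]
    have he := w.injective hww
    rw [he] at hl'
    exact absurd hjl (not_lt.2 hl')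
  · intro h
    obtain ⟨l, hjl, hl⟩ := exists_rlMin w j
    rcases eq_or_lt_of_le hjl with rfl | hlt
    · exact hl.symm
    · have h2 : rlMin w l ≤ rlMin w j := hl ▸ rlMin_le_of_le w le_rfl
      exact absurd (h l hlt) (not_lt.2 h2)

theorem nonRec_iff (w : Equiv.Perm (Fin n)) (j : Fin n) :
    (rlMin w j < w j ∧ w j < lrMax w j) ↔ ¬ (lrMax w j = w j ∨ rlMin w j = w j) := by
  have h1 : rlMin w j ≤ w j := rlMin_le_of_le w le_rfl
  have h2 : w j ≤ lrMax w j := le_lrMax_of_le w le_rfl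
  constructor
  · rintro ⟨a, b⟩ (h | h)
    · exact absurd h (ne_of_gt b)
    · exact absurd h (ne_of_lt a)
  · intro h
    push_neg at h
    exact ⟨lt_of_le_of_ne h1 h.2, lt_of_le_of_ne h2 (Ne.symm h.1)⟩

theorem rec_char (w : Equiv.Perm (Fin n)) (j : Fin n) :
    (lrMax w j = w j ∨ rlMin w j = w j) ↔
      ((∀ i, i < j → lrMax w i < lrMax w j) ∨ (∀ l, j < l → rlMin w j < rlMin w l)) :=
  or_congr (lrMax_eq_self_iff w j) (rlMin_eq_self_iff w j)

theorem rec_transfer {v w : Equiv.Perm (Fin n)} (h1 : lrMax v = lrMax w)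
    (h2 : rlMin v = rlMin w) {j : Fin n} (hj : lrMax w j = w j ∨ rlMin w j = w j) :
    v j = w j := by
  rcases hj with hj | hj
  · have hv : lrMax v j = v j :=
      (lrMax_eq_self_iff v j).2 (by rw [h1]; exact (lrMax_eq_self_iff w j).1 hj)
    rw [← hv, h1, hj]
  · have hv : rlMin v j = v j :=
      (rlMin_eq_self_iff v j).2 (by rw [h2]; exact (rlMin_eq_self_iff w j).1 hj)
    rw [← hv, h2, hj]

theorem nonRec_transfer {v w : Equiv.Perm (Fin n)} (h1 : lrMax v = lrMax w)
    (h2 : rlMin v = rlMin w) (j : Fin n) :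
    (rlMin v j < v j ∧ v j < lrMax v j) ↔ (rlMin w j < w j ∧ w j < lrMax w j) := by
  rw [nonRec_iff, nonRec_iff, rec_char, rec_char, h1, h2]

theorem psiMat_eq_iff (v w : Equiv.Perm (Fin n)) :
    psiMat v = psiMat w ↔ lrMax v = lrMax w ∧ rlMin v = rlMin w := by
  constructor
  · intro h
    have key : ∀ i j : Fin n, (rlMin v j ≤ i ∧ i ≤ lrMax v j) ↔
        (rlMin w j ≤ i ∧ i ≤ lrMax w j) :=
      fun i j => iff_of_eq (congrFun (congrFun h i) j)
    have hv : ∀ j, rlMin v j ≤ lrMax v j :=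
      fun j => (rlMin_le_of_le v le_rfl).trans (le_lrMax_of_le v le_rfl)
    have hw : ∀ j, rlMin w j ≤ lrMax w j :=
      fun j => (rlMin_le_of_le w le_rfl).trans (le_lrMax_of_le w le_rfl)
    constructor <;> funext j
    · exact le_antisymm ((key _ j).1 ⟨hv j, le_rfl⟩).2 ((key _ j).2 ⟨hw j, le_rfl⟩).2
    · exact le_antisymm ((key _ j).2 ⟨le_rfl, hw j⟩).1 ((key _ j).1 ⟨le_rfl, hv j⟩).1
  · rintro ⟨h1, h2⟩
    unfold psiMat
    rw [h1, h2]

theorem avoids4321_iff (v : Equiv.Perm (Fin n)) :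
    Avoids4321 v ↔ ∀ j k : Fin n, j < k →
      rlMin v j < v j → v j < lrMax v j → rlMin v k < v k → v k < lrMax v k → v j < v k := by
  constructor
  · intro hav j k hjk h1 h2 h3 h4
    by_contra hc
    have hlt : v k < v j :=
      lt_of_le_of_ne (not_lt.1 hc) fun he => (ne_of_gt hjk) (v.injective he)
    obtain ⟨i, hij, hi⟩ := exists_lrMax v j
    have hvij : v j < v i := by rw [hi]; exact h2
    have hij' : i < j := lt_of_le_of_ne hij fun he => absurd hvij (by rw [he]; exact lt_irrefl _)
    obtain ⟨l, hkl, hl⟩ := exists_rlMin v k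
    have hvkl : v l < v k := by rw [hl]; exact h3
    have hkl' : k < l := lt_of_le_of_ne (by exact hkl) fun he =>
      absurd hvkl (by rw [← he]; exact lt_irrefl _)
    exact hav ⟨i, j, k, l, hij', hjk, hkl', hvkl, hlt, hvij⟩
  · rintro hmono ⟨i, j, k, l, hij, hjk, hkl, h1, h2, h3⟩
    have nj1 : rlMin v j < v j :=
      lt_of_le_of_lt (rlMin_le_of_le v (hjk.trans hkl).le) (h1.trans h2)
    have nj2 : v j < lrMax v j := lt_of_lt_of_le h3 (le_lrMax_of_le v hij.le)
    have nk1 : rlMin v k < v k := lt_of_le_of_lt (rlMin_le_of_le v hkl.le) h1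
    have nk2 : v k < lrMax v k :=
      lt_of_lt_of_le (h2.trans h3) (le_lrMax_of_le v (hij.trans hjk).le)
    exact absurd (hmono j k hjk nj1 nj2 nk1 nk2) (not_lt.2 h2.le)

theorem rank_lt_s10 {t : Finset (Fin n)} {y y' : Fin n} (hy' : y' ∈ t) (h : y < y') :
    (t.filter fun z => z ≤ y).card < (t.filter fun z => z ≤ y').card := by
  apply Finset.card_lt_card
  constructor
  · intro z hz
    obtain ⟨hzt, hzy⟩ := Finset.mem_filter.1 hz
    exact Finset.mem_filter.2 ⟨hzt, hzy.trans h.le⟩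
  · intro hsub
    have := hsub (Finset.mem_filter.2 ⟨hy', le_rfl⟩)
    exact absurd (Finset.mem_filter.1 this).2 (not_le.2 h)

theorem rank_inj {t : Finset (Fin n)} {y y' : Fin n} (hy : y ∈ t) (hy' : y' ∈ t)
    (h : (t.filter fun z => z ≤ y).card = (t.filter fun z => z ≤ y').card) : y = y' := by
  rcases lt_trichotomy y y' with hlt | he | hlt
  · exact absurd h (ne_of_lt (rank_lt_s10 hy' hlt))
  · exact he
  · exact absurd h.symm (ne_of_lt (rank_lt_s10 hy hlt))

theorem filter_image_rank {s : Finset (Fin n)} {f : Fin n → Fin n}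
    (hf : ∀ a ∈ s, ∀ b ∈ s, a < b → f a < f b) {j : Fin n} (hj : j ∈ s) :
    ((s.image f).filter fun z => z ≤ f j).card = (s.filter fun i => i ≤ j).card := by
  have hinj : Set.InjOn f ↑s := by
    intro a ha b hb hab
    rcases lt_trichotomy a b with h | h | h
    · exact absurd hab (ne_of_lt (hf a ha b hb h))
    · exact h
    · exact absurd hab.symm (ne_of_lt (hf b hb a ha h))
  have heq : (s.image f).filter (fun z => z ≤ f j) = (s.filter fun i => i ≤ j).image f := by
    ext y
    simp only [Finset.mem_filter, Finset.mem_image]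
    constructor
    · rintro ⟨⟨i, hi, rfl⟩, hle⟩
      refine ⟨i, ⟨hi, ?_⟩, rfl⟩
      by_contra hc
      exact absurd hle (not_le.2 (hf j hj i hi (not_le.1 hc)))
    · rintro ⟨i, ⟨hi, hij⟩, rfl⟩
      refine ⟨⟨i, hi, rfl⟩, ?_⟩
      rcases eq_or_lt_of_le hij with rfl | h
      · exact le_rfl
      · exact (hf i hi j hj h).le
  rw [heq, Finset.card_image_of_injOn (hinj.mono (Finset.coe_subset.2 (Finset.filter_subset _ _)))]

theorem smo_unique {s : Finset (Fin n)} {f g : Fin n → Fin n}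
    (hf : ∀ a ∈ s, ∀ b ∈ s, a < b → f a < f b)
    (hg : ∀ a ∈ s, ∀ b ∈ s, a < b → g a < g b)
    (him : s.image f = s.image g) : ∀ j ∈ s, f j = g j := by
  intro j hj
  have h1 := filter_image_rank hf hj
  have h2 := filter_image_rank hg hj
  rw [← him] at h2
  exact rank_inj (Finset.mem_image_of_mem f hj)
    (by rw [him]; exact Finset.mem_image_of_mem g hj) (h1.trans h2.symm)

end Stmt10Aux

section Stmt10Exist

variable {n : ℕ}

theorem exists_avoiding (w : Equiv.Perm (Fin n)) :
    ∃ v : Equiv.Perm (Fin n), lrMax v = lrMax w ∧ rlMin v = rlMin w ∧ Avoids4321 v := by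
  classical
  set s : Finset (Fin n) :=
    Finset.univ.filter (fun j => rlMin w j < w j ∧ w j < lrMax w j) with hs
  have hmem_s : ∀ j : Fin n, j ∈ s ↔ (rlMin w j < w j ∧ w j < lrMax w j) := by
    intro j; simp [hs]
  set t : Finset (Fin n) := s.image (fun i => w i) with hts
  have htc : t.card = s.card := Finset.card_image_of_injective s w.injective
  set e := s.orderIsoOfFin rfl with he
  set f := t.orderIsoOfFin htc with hf
  set vf : Fin n → Fin n :=
    (fun j => if hj : j ∈ s then (f (e.symm ⟨j, hj⟩) : Fin n) else w j) with hvf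
  have hv_mem : ∀ j (hj : j ∈ s), vf j ∈ t := by
    intro j hj
    simp only [hvf, dif_pos hj]
    exact Finset.coe_mem _
  have hv_nmem : ∀ j, j ∉ s → vf j = w j := fun j hj => dif_neg hj
  have hw_mem_t : ∀ j, w j ∈ t ↔ j ∈ s := by
    intro j
    simp only [hts, Finset.mem_image]
    constructor
    · rintro ⟨i, hi, hij⟩
      rwa [← w.injective hij]
    · intro hj; exact ⟨j, hj, rfl⟩
  have hmono : ∀ a ∈ s, ∀ b ∈ s, a < b → vf a < vf b := by
    intro a ha b hb hab
    simp only [hvf, dif_pos ha, dif_pos hb]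
    have h1 : e.symm ⟨a, ha⟩ < e.symm ⟨b, hb⟩ := e.symm.strictMono (Subtype.mk_lt_mk.2 hab)
    exact Subtype.coe_lt_coe.2 (f.strictMono h1)
  have hinj : Function.Injective vf := by
    intro a b hab
    by_cases ha : a ∈ s <;> by_cases hb : b ∈ s
    · simp only [hvf, dif_pos ha, dif_pos hb] at hab
      have h2 : (⟨a, ha⟩ : ↥s) = ⟨b, hb⟩ := e.symm.injective (f.injective (Subtype.ext hab))
      exact Subtype.ext_iff.1 h2
    · have h1 : vf a ∈ t := hv_mem a ha
      rw [hab, hv_nmem b hb] at h1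
      exact absurd ((hw_mem_t b).1 h1) hb
    · have h1 : vf b ∈ t := hv_mem b hb
      rw [← hab, hv_nmem a ha] at h1
      exact absurd ((hw_mem_t a).1 h1) ha
    · rw [hv_nmem a ha, hv_nmem b hb] at hab
      exact w.injective hab
  have himage : s.image vf = t := by
    apply Finset.eq_of_subset_of_card_le
    · intro y hy
      obtain ⟨j, hj, rfl⟩ := Finset.mem_image.1 hy
      exact hv_mem j hj
    · rw [Finset.card_image_of_injective s hinj, htc]
  have hrank : ∀ j, j ∈ s →
      (t.filter fun z => z ≤ vf j).card = (s.filter fun i => i ≤ j).card := by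
    intro j hj
    rw [← himage]
    exact filter_image_rank hmono hj
  have hclaim1 : ∀ j, j ∈ s → vf j < lrMax w j := by
    intro j hj
    by_contra hc
    push_neg at hc
    have hK : (s.filter fun i => i ≤ j).card ≤ (t.filter fun z => z < lrMax w j).card := by
      apply Finset.card_le_card_of_injOn (fun i => w i)
      · intro p hp
        obtain ⟨hps, hpj⟩ := Finset.mem_filter.1 hp
        exact Finset.mem_filter.2 ⟨(hw_mem_t p).2 hps,
          lt_of_lt_of_le ((hmem_s p).1 hps).2 (lrMax_mono w hpj)⟩
      · exact Set.injOn_of_injective w.injective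
    have hsub : (t.filter fun z => z < lrMax w j) ⊆ (t.filter fun z => z ≤ vf j).erase (vf j) := by
      intro z hz
      obtain ⟨hzt, hzlt⟩ := Finset.mem_filter.1 hz
      exact Finset.mem_erase.2 ⟨ne_of_lt (hzlt.trans_le hc),
        Finset.mem_filter.2 ⟨hzt, (hzlt.trans_le hc).le⟩⟩
    have hcard := Finset.card_le_card hsub
    have hmemf : vf j ∈ t.filter (fun z => z ≤ vf j) :=
      Finset.mem_filter.2 ⟨hv_mem j hj, le_rfl⟩
    rw [Finset.card_erase_of_mem hmemf] at hcard
    have hKpos : 0 < (s.filter fun i => i ≤ j).card :=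
      Finset.card_pos.2 ⟨j, Finset.mem_filter.2 ⟨hj, le_rfl⟩⟩
    have hr := hrank j hj
    omega
  have hclaim2 : ∀ j, j ∈ s → rlMin w j < vf j := by
    intro j hj
    by_contra hc
    push_neg at hc
    have hK : (s.filter fun i => j ≤ i).card ≤ (t.filter fun z => rlMin w j < z).card := by
      apply Finset.card_le_card_of_injOn (fun i => w i)
      · intro p hp
        obtain ⟨hps, hpj⟩ := Finset.mem_filter.1 hp
        exact Finset.mem_filter.2 ⟨(hw_mem_t p).2 hps,
          lt_of_le_of_lt (rlMin_mono w hpj) ((hmem_s p).1 hps).1⟩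
      · exact Set.injOn_of_injective w.injective
    have hsub : (t.filter fun z => rlMin w j < z) ⊆ t.filter fun z => vf j < z := by
      intro z hz
      obtain ⟨hzt, hzl⟩ := Finset.mem_filter.1 hz
      exact Finset.mem_filter.2 ⟨hzt, lt_of_le_of_lt hc hzl⟩
    have hcard := Finset.card_le_card hsub
    have e1 : (t.filter fun z => z ≤ vf j).card + (t.filter fun z => ¬ z ≤ vf j).card = t.card :=
      Finset.card_filter_add_card_filter_not _
    have e1b : (t.filter fun z => ¬ z ≤ vf j) = t.filter fun z => vf j < z :=
      Finset.filter_congr (fun z _ => by simp [not_le])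
    rw [e1b] at e1
    have e2a : (s.filter fun i => i ≤ j).card + (s.filter fun i => ¬ i ≤ j).card = s.card :=
      Finset.card_filter_add_card_filter_not _
    have e2b : (s.filter fun i => ¬ i ≤ j) = s.filter fun i => j < i :=
      Finset.filter_congr (fun i _ => by simp [not_le])
    rw [e2b] at e2a
    have e2c : (s.filter fun i => j ≤ i) = insert j (s.filter fun i => j < i) := by
      ext i
      simp only [Finset.mem_filter, Finset.mem_insert]
      constructor
      · rintro ⟨hi, hji⟩
        rcases eq_or_lt_of_le hji with rfl | h
        · exact Or.inl rfl
        · exact Or.inr ⟨hi, h⟩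
      · rintro (rfl | ⟨hi, h⟩)
        · exact ⟨hj, le_rfl⟩
        · exact ⟨hi, h.le⟩
    have e2d : (s.filter fun i => j ≤ i).card = (s.filter fun i => j < i).card + 1 := by
      rw [e2c, Finset.card_insert_of_notMem (by simp)]
    have hr := hrank j hj
    omega
  have hbij : Function.Bijective vf := Finite.injective_iff_bijective.1 hinj
  set v : Equiv.Perm (Fin n) := Equiv.ofBijective vf hbij with hv
  have hva : ∀ j, v j = vf j := fun j => rfl
  have hlr : lrMax v = lrMax w := by
    funext j
    apply le_antisymm
    · apply Finset.sup'_le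
      intro i hi
      have hij := Finset.mem_Iic.1 hi
      show v i ≤ lrMax w j
      rw [hva]
      by_cases his : i ∈ s
      · exact ((hclaim1 i his).trans_le (lrMax_mono w hij)).le
      · rw [hv_nmem i his]
        exact le_lrMax_of_le w hij
    · obtain ⟨i, hij, hi⟩ := exists_lrMax w j
      have his : i ∉ s := by
        intro hmem
        have hlt := ((hmem_s i).1 hmem).2
        have h2 : lrMax w i ≤ lrMax w j := lrMax_mono w hij
        rw [hi] at hlt
        exact absurd hlt (not_lt.2 h2)
      calc lrMax w j = w i := hi.symm
        _ = v i := by rw [hva, hv_nmem i his]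
        _ ≤ lrMax v j := le_lrMax_of_le v hij
  have hrm : rlMin v = rlMin w := by
    funext j
    apply le_antisymm
    · obtain ⟨l, hjl, hl⟩ := exists_rlMin w j
      have hls : l ∉ s := by
        intro hmem
        have hlt := ((hmem_s l).1 hmem).1
        have h2 : rlMin w j ≤ rlMin w l := rlMin_mono w hjl
        rw [hl] at hlt
        exact absurd hlt (not_lt.2 h2)
      calc rlMin v j ≤ v l := rlMin_le_of_le v hjl
        _ = w l := by rw [hva, hv_nmem l hls]
        _ = rlMin w j := hl
    · apply Finset.le_inf'
      intro i hi
      have hij := Finset.mem_Ici.1 hi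
      show rlMin w j ≤ v i
      rw [hva]
      by_cases his : i ∈ s
      · exact ((rlMin_mono w hij).trans_lt (hclaim2 i his)).le
      · rw [hv_nmem i his]
        exact rlMin_le_of_le w hij
  have hav : Avoids4321 v := by
    rw [avoids4321_iff]
    intro j k hjk h1 h2 h3 h4
    rw [hlr] at h2 h4
    rw [hrm] at h1 h3
    rw [hva] at h1 h2 h3 h4 ⊢
    have hjs : j ∈ s := by
      by_contra hjs
      rw [hv_nmem j hjs] at h1 h2
      exact hjs ((hmem_s j).2 ⟨h1, h2⟩)
    have hks : k ∈ s := by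
      by_contra hks
      rw [hv_nmem k hks] at h3 h4
      exact hks ((hmem_s k).2 ⟨h3, h4⟩)
    exact hmono j hjs k hks hjk
  exact ⟨v, hlr, hrm, hav⟩

end Stmt10Exist

/-- Every fiber of the canonical surjection onto the double Catalan
monoid contains exactly one 4321-avoiding permutation. -/
theorem stmt_10 (n : ℕ) (w : Equiv.Perm (Fin n)) :
    ∃! v : Equiv.Perm (Fin n), psiMat v = psiMat w ∧ Avoids4321 v := by
  classical
  obtain ⟨v, hlr, hrm, hav⟩ := exists_avoiding w
  refine ⟨v, ⟨(psiMat_eq_iff v w).2 ⟨hlr, hrm⟩, hav⟩, ?_⟩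
  rintro v' ⟨hps', hav'⟩
  obtain ⟨hlr', hrm'⟩ := (psiMat_eq_iff v' w).1 hps'
  set s : Finset (Fin n) :=
    Finset.univ.filter (fun j => rlMin w j < w j ∧ w j < lrMax w j) with hs
  have hmem_s : ∀ j : Fin n, j ∈ s ↔ (rlMin w j < w j ∧ w j < lrMax w j) := by
    intro j; simp [hs]
  have hrec : ∀ j, j ∉ s → v' j = v j := by
    intro j hj
    have hj' : lrMax w j = w j ∨ rlMin w j = w j := by
      by_contra hc
      exact hj ((hmem_s j).2 ((nonRec_iff w j).2 hc))
    rw [rec_transfer hlr' hrm' hj', ← rec_transfer hlr hrm hj']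
  have hmonov' : ∀ a ∈ s, ∀ b ∈ s, a < b → v' a < v' b := by
    intro a ha b hb hab
    obtain ⟨ha1, ha2⟩ := (nonRec_transfer hlr' hrm' a).2 ((hmem_s a).1 ha)
    obtain ⟨hb1, hb2⟩ := (nonRec_transfer hlr' hrm' b).2 ((hmem_s b).1 hb)
    exact (avoids4321_iff v').1 hav' a b hab ha1 ha2 hb1 hb2
  have hmonov : ∀ a ∈ s, ∀ b ∈ s, a < b → v a < v b := by
    intro a ha b hb hab
    obtain ⟨ha1, ha2⟩ := (nonRec_transfer hlr hrm a).2 ((hmem_s a).1 ha)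
    obtain ⟨hb1, hb2⟩ := (nonRec_transfer hlr hrm b).2 ((hmem_s b).1 hb)
    exact (avoids4321_iff v).1 hav a b hab ha1 ha2 hb1 hb2
  have himuniv : ∀ u : Equiv.Perm (Fin n),
      (Finset.univ : Finset (Fin n)).image (fun j => u j) = Finset.univ := by
    intro u
    apply Finset.eq_univ_of_forall
    intro y
    exact Finset.mem_image.2 ⟨u.symm y, Finset.mem_univ _, u.apply_symm_apply y⟩
  have himg : ∀ u : Equiv.Perm (Fin n),
      s.image (fun j => u j) = Finset.univ \ sᶜ.image (fun j => u j) := by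
    intro u
    have hsd : s = Finset.univ \ sᶜ := by
      ext j; simp
    conv_lhs => rw [hsd]
    rw [Finset.image_sdiff _ _ u.injective, himuniv u]
  have him : s.image (fun j => v' j) = s.image (fun j => v j) := by
    rw [himg v', himg v]
    congr 1
    apply Finset.image_congr
    intro j hj
    exact hrec j (by simpa using hj)
  have heqs := smo_unique hmonov' hmonov him
  apply Equiv.ext
  intro j
  by_cases hj : j ∈ s
  · exact heqs j hj
  · exact hrec j hj
end

section
/- Two permutations w, v ∈ S_n have equal left-to-right maximum functions and equal right-to-left minimum functions (α_w = α_v and β_w = β_v) if and only if they have the same image in the double Catalan monoid; moreover in each such equivalence class the unique 4321-avoiding permutation is Bruhat-minimal. -/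
open Pointwise

namespace DCAux

open Finset

variable {n : ℕ}

/- ### basic lrMax / rlMin lemmas -/

theorem le_lrMax (u : Equiv.Perm (Fin n)) {k j : Fin n} (h : k ≤ j) : u k ≤ lrMax u j :=
  Finset.le_sup' (fun m => u m) (Finset.mem_Iic.mpr h)

theorem lrMax_le {u : Equiv.Perm (Fin n)} {j x : Fin n} (h : ∀ k, k ≤ j → u k ≤ x) :
    lrMax u j ≤ x :=
  Finset.sup'_le _ _ fun k hk => h k (Finset.mem_Iic.mp hk)

theorem exists_lrMax_eq (u : Equiv.Perm (Fin n)) (j : Fin n) :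
    ∃ m, m ≤ j ∧ lrMax u j = u m := by
  obtain ⟨m, hm, hme⟩ := Finset.exists_mem_eq_sup' (s := Finset.Iic j)
    ⟨j, Finset.mem_Iic.mpr le_rfl⟩ (fun k => u k)
  exact ⟨m, Finset.mem_Iic.mp hm, hme⟩

theorem rlMin_le (u : Equiv.Perm (Fin n)) {k j : Fin n} (h : j ≤ k) : rlMin u j ≤ u k :=
  Finset.inf'_le (fun m => u m) (Finset.mem_Ici.mpr h)

theorem le_rlMin {u : Equiv.Perm (Fin n)} {j x : Fin n} (h : ∀ k, j ≤ k → x ≤ u k) :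
    x ≤ rlMin u j :=
  Finset.le_inf' _ _ fun k hk => h k (Finset.mem_Ici.mp hk)

theorem exists_rlMin_eq (u : Equiv.Perm (Fin n)) (j : Fin n) :
    ∃ m, j ≤ m ∧ rlMin u j = u m := by
  obtain ⟨m, hm, hme⟩ := Finset.exists_mem_eq_inf' (s := Finset.Ici j)
    ⟨j, Finset.mem_Ici.mpr le_rfl⟩ (fun k => u k)
  exact ⟨m, Finset.mem_Ici.mp hm, hme⟩

/-- Part 1 of the theorem. -/
theorem psiMat_iff (w v : Equiv.Perm (Fin n)) :
    (lrMax w = lrMax v ∧ rlMin w = rlMin v) ↔ psiMat w = psiMat v := by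
  constructor
  · rintro ⟨h1, h2⟩; unfold psiMat; rw [h1, h2]
  · intro h
    have key : ∀ (a b : Equiv.Perm (Fin n)), psiMat a = psiMat b →
        ∀ j, lrMax a j ≤ lrMax b j ∧ rlMin b j ≤ rlMin a j := by
      intro a b hab j
      have hle : rlMin a j ≤ lrMax a j :=
        (rlMin_le a le_rfl).trans (le_lrMax a le_rfl)
      have h1 : psiMat a (lrMax a j) j := ⟨hle, le_rfl⟩
      have h2 : psiMat a (rlMin a j) j := ⟨le_rfl, hle⟩
      rw [hab] at h1 h2
      exact ⟨h1.2, h2.1⟩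
    exact ⟨funext fun j => le_antisymm ((key w v h j).1) ((key v w h.symm j).1),
      funext fun j => le_antisymm ((key v w h.symm j).2) ((key w v h j).2)⟩

/- ### inversions -/

open Classical in
noncomputable def invSet (w : Equiv.Perm (Fin n)) : Finset (Fin n × Fin n) :=
  Finset.univ.filter fun p => p.1 < p.2 ∧ w p.2 < w p.1

noncomputable def invNum (w : Equiv.Perm (Fin n)) : ℕ := (invSet w).card

theorem mem_invSet {w : Equiv.Perm (Fin n)} {p : Fin n × Fin n} :
    p ∈ invSet w ↔ p.1 < p.2 ∧ w p.2 < w p.1 := by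
  simp [invSet]

theorem invNum_one : invNum (1 : Equiv.Perm (Fin n)) = 0 := by
  have : invSet (1 : Equiv.Perm (Fin n)) = ∅ := by
    ext p
    simp only [mem_invSet, Finset.notMem_empty, iff_false, not_and]
    intro h1
    simp only [Equiv.Perm.one_apply]
    exact asymm h1
  rw [invNum, this, Finset.card_empty]

theorem swap_flip_classify {b c i j : Fin n} (hbc : b < c) (hij : i < j)
    (hflip : Equiv.swap b c j < Equiv.swap b c i) :
    (i = b ∧ j = c) ∨ (i = b ∧ b < j ∧ j < c) ∨ (j = c ∧ b < i ∧ i < c) := by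
  by_cases hib : i = b
  · subst hib
    by_cases hjc : j = c
    · exact Or.inl ⟨rfl, hjc⟩
    · have hjb : j ≠ i := hij.ne'
      rw [Equiv.swap_apply_left, Equiv.swap_apply_of_ne_of_ne hjb hjc] at hflip
      exact Or.inr (Or.inl ⟨rfl, hij, hflip⟩)
  · by_cases hic : i = c
    · subst hic
      have hjc : j ≠ i := hij.ne'
      have hjb : j ≠ b := fun h => absurd hij (by rw [h]; exact asymm hbc)
      rw [Equiv.swap_apply_right, Equiv.swap_apply_of_ne_of_ne hjb hjc] at hflip
      exact absurd (hbc.trans (hij.trans hflip)) (lt_irrefl b)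
    · rw [Equiv.swap_apply_of_ne_of_ne hib hic] at hflip
      by_cases hjb : j = b
      · subst hjb
        rw [Equiv.swap_apply_left] at hflip
        exact absurd ((hij.trans hbc).trans hflip) (lt_irrefl i)
      · by_cases hjc : j = c
        · subst hjc
          rw [Equiv.swap_apply_right] at hflip
          exact Or.inr (Or.inr ⟨rfl, hflip, hij⟩)
        · rw [Equiv.swap_apply_of_ne_of_ne hjb hjc] at hflip
          exact absurd (hij.trans hflip) (lt_irrefl i)

theorem flip_of_not_lt {σ : Equiv.Perm (Fin n)} {i j : Fin n} (hij : i < j)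
    (h : ¬ σ i < σ j) : σ j < σ i :=
  lt_of_le_of_ne (not_lt.mp h) fun he => hij.ne' (σ.injective he)

theorem invNum_mul_swap_lt (v : Equiv.Perm (Fin n)) {b c : Fin n} (hbc : b < c)
    (hv : v c < v b) : invNum (v * Equiv.swap b c) < invNum v := by
  classical
  set σ := Equiv.swap b c with hσdef
  have hσb : σ b = c := Equiv.swap_apply_left b c
  have hσc : σ c = b := Equiv.swap_apply_right b c
  have hσσ : ∀ x, σ (σ x) = x := fun x => Equiv.swap_apply_self b c x
  have happ : ∀ x, (v * σ) x = v (σ x) := fun x => rfl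
  set F : Fin n × Fin n → Fin n × Fin n :=
    fun p => if σ p.1 < σ p.2 then (σ p.1, σ p.2) else p with hF
  have hclass : ∀ p ∈ invSet (v * σ), ¬ σ p.1 < σ p.2 →
      (p.1 = b ∧ b < p.2 ∧ p.2 < c) ∨ (p.2 = c ∧ b < p.1 ∧ p.1 < c) := by
    rintro ⟨i, j⟩ hp hn
    obtain ⟨hij, hvp⟩ := mem_invSet.mp hp
    rw [happ, happ] at hvp
    have hflip : σ j < σ i := flip_of_not_lt hij hn
    rcases swap_flip_classify hbc hij hflip with ⟨h1, h2⟩ | h | h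
    · subst h1; subst h2
      rw [hσb, hσc] at hvp
      exact absurd hvp (asymm hv)
    · exact Or.inl h
    · exact Or.inr h
  have hmaps : ∀ p ∈ invSet (v * σ), F p ∈ (invSet v).erase (b, c) := by
    rintro ⟨i, j⟩ hp
    obtain ⟨hij, hvp⟩ := mem_invSet.mp hp
    rw [happ, happ] at hvp
    by_cases hσij : σ i < σ j
    · have hFp : F (i, j) = (σ i, σ j) := if_pos hσij
      rw [hFp, Finset.mem_erase]
      refine ⟨?_, mem_invSet.mpr ⟨hσij, hvp⟩⟩
      intro h
      have h1 : σ i = b := congrArg Prod.fst h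
      have h2 : σ j = c := congrArg Prod.snd h
      have hi : i = c := by rw [← hσσ i, h1, hσb]
      have hj : j = b := by rw [← hσσ j, h2, hσc]
      rw [hi, hj] at hij
      exact absurd hij (asymm hbc)
    · have hFp : F (i, j) = (i, j) := if_neg hσij
      rw [hFp, Finset.mem_erase]
      rcases hclass _ hp hσij with ⟨h1, h2, h3⟩ | ⟨h1, h2, h3⟩
      · constructor
        · intro h
          exact absurd (congrArg Prod.snd h) h3.ne
        · refine mem_invSet.mpr ⟨hij, ?_⟩
          have hσj : σ j = j := Equiv.swap_apply_of_ne_of_ne h2.ne' h3.ne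
          rw [h1] at hvp ⊢
          rw [hσj, hσb] at hvp
          exact hvp.trans hv
      · constructor
        · intro h
          exact absurd (congrArg Prod.fst h) h2.ne'
        · refine mem_invSet.mpr ⟨hij, ?_⟩
          have hσi : σ i = i := Equiv.swap_apply_of_ne_of_ne h2.ne' h3.ne
          rw [h1] at hvp ⊢
          rw [hσi, hσc] at hvp
          exact hv.trans hvp
  have hinj : Set.InjOn F ↑(invSet (v * σ)) := by
    rintro ⟨i, j⟩ hp ⟨i', j'⟩ hq heq
    rw [Finset.mem_coe] at hp hq
    by_cases h1 : σ i < σ j <;> by_cases h2 : σ i' < σ j'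
    · rw [hF] at heq
      simp only [if_pos h1, if_pos h2, Prod.mk.injEq] at heq
      exact Prod.ext (σ.injective heq.1) (σ.injective heq.2)
    · exfalso
      rw [hF] at heq
      simp only [if_pos h1, if_neg h2] at heq
      have hij := (mem_invSet.mp hp).1
      rcases hclass _ hq h2 with ⟨hq1, hq2, hq3⟩ | ⟨hq1, hq2, hq3⟩
      · have hσi : σ i = b := by rw [← hq1]; exact congrArg Prod.fst heq
        have hσj : σ j = j' := congrArg Prod.snd heq
        have hi : i = c := by rw [← hσσ i, hσi, hσb]
        have hj : j = j' := by
          rw [← hσσ j, hσj]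
          exact Equiv.swap_apply_of_ne_of_ne hq2.ne' hq3.ne
        rw [hi, hj] at hij
        exact absurd (hij.trans hq3) (lt_irrefl c)
      · have hσj : σ j = c := by rw [← hq1]; exact congrArg Prod.snd heq
        have hσi : σ i = i' := congrArg Prod.fst heq
        have hj : j = b := by rw [← hσσ j, hσj, hσc]
        have hib : i < b := hj ▸ hij
        have hσi2 : σ i = i := Equiv.swap_apply_of_ne_of_ne hib.ne (hib.trans hbc).ne
        have hi : i = i' := hσi2.symm.trans hσi
        rw [hi] at hib
        exact absurd (hq2.trans hib) (lt_irrefl b)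
    · exfalso
      rw [hF] at heq
      simp only [if_neg h1, if_pos h2] at heq
      have hij := (mem_invSet.mp hq).1
      rcases hclass _ hp h1 with ⟨hq1, hq2, hq3⟩ | ⟨hq1, hq2, hq3⟩
      · have hσi : σ i' = b := by rw [← hq1]; exact (congrArg Prod.fst heq).symm
        have hσj : σ j' = j := (congrArg Prod.snd heq).symm
        have hi : i' = c := by rw [← hσσ i', hσi, hσb]
        have hj : j' = j := by
          rw [← hσσ j', hσj]
          exact Equiv.swap_apply_of_ne_of_ne hq2.ne' hq3.ne
        rw [hi, hj] at hij
        exact absurd (hij.trans hq3) (lt_irrefl c)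
      · have hσj : σ j' = c := by rw [← hq1]; exact (congrArg Prod.snd heq).symm
        have hσi : σ i' = i := (congrArg Prod.fst heq).symm
        have hj : j' = b := by rw [← hσσ j', hσj, hσc]
        have hib : i' < b := hj ▸ hij
        have hσi2 : σ i' = i' := Equiv.swap_apply_of_ne_of_ne hib.ne (hib.trans hbc).ne
        have hi : i' = i := hσi2.symm.trans hσi
        rw [hi] at hib
        exact absurd (hq2.trans hib) (lt_irrefl b)
    · rw [hF] at heq
      simp only [if_neg h1, if_neg h2] at heq
      exact heq
  have hbcmem : (b, c) ∈ invSet v := mem_invSet.mpr ⟨hbc, hv⟩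
  have hle := Finset.card_le_card_of_injOn F hmaps hinj
  have hcard := Finset.card_erase_of_mem hbcmem
  have hpos : 0 < (invSet v).card := Finset.card_pos.mpr ⟨_, hbcmem⟩
  unfold invNum
  omega

theorem invNum_mul_swap_le (v : Equiv.Perm (Fin n)) {b c : Fin n} (hbc : b < c)
    (hcons : (b : ℕ) + 1 = (c : ℕ)) :
    invNum (v * Equiv.swap b c) ≤ invNum v + 1 := by
  classical
  set σ := Equiv.swap b c with hσdef
  have hσσ : ∀ x, σ (σ x) = x := fun x => Equiv.swap_apply_self b c x
  have happ : ∀ x, (v * σ) x = v (σ x) := fun x => rfl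
  set F : Fin n × Fin n → Fin n × Fin n :=
    fun p => if σ p.1 < σ p.2 then (σ p.1, σ p.2) else p with hF
  have hclass : ∀ p ∈ invSet (v * σ), ¬ σ p.1 < σ p.2 → p.1 = b ∧ p.2 = c := by
    rintro ⟨i, j⟩ hp hn
    obtain ⟨hij, _⟩ := mem_invSet.mp hp
    have hflip : σ j < σ i := flip_of_not_lt hij hn
    rcases swap_flip_classify hbc hij hflip with ⟨h1, h2⟩ | ⟨h1, h2, h3⟩ | ⟨h1, h2, h3⟩
    · exact ⟨h1, h2⟩
    · exact absurd (Fin.lt_def.mp h3) (by have := Fin.lt_def.mp h2; omega)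
    · exact absurd (Fin.lt_def.mp h3) (by have := Fin.lt_def.mp h2; omega)
  have hmaps : ∀ p ∈ invSet (v * σ), F p ∈ insert (b, c) (invSet v) := by
    rintro ⟨i, j⟩ hp
    obtain ⟨hij, hvp⟩ := mem_invSet.mp hp
    rw [happ, happ] at hvp
    by_cases hσij : σ i < σ j
    · have hFp : F (i, j) = (σ i, σ j) := if_pos hσij
      rw [hFp]
      exact Finset.mem_insert_of_mem (mem_invSet.mpr ⟨hσij, hvp⟩)
    · have hFp : F (i, j) = (i, j) := if_neg hσij
      rw [hFp]
      obtain ⟨h1, h2⟩ := hclass _ hp hσij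
      rw [show ((i, j) : Fin n × Fin n) = (b, c) from Prod.ext h1 h2]
      exact Finset.mem_insert_self _ _
  have hinj : Set.InjOn F ↑(invSet (v * σ)) := by
    rintro ⟨i, j⟩ hp ⟨i', j'⟩ hq heq
    rw [Finset.mem_coe] at hp hq
    by_cases h1 : σ i < σ j <;> by_cases h2 : σ i' < σ j'
    · rw [hF] at heq
      simp only [if_pos h1, if_pos h2, Prod.mk.injEq] at heq
      exact Prod.ext (σ.injective heq.1) (σ.injective heq.2)
    · exfalso
      rw [hF] at heq
      simp only [if_pos h1, if_neg h2] at heq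
      obtain ⟨hi', hj'⟩ := hclass _ hq h2
      have hσi : σ i = b := by rw [← hi']; exact congrArg Prod.fst heq
      have hσj : σ j = c := by rw [← hj']; exact congrArg Prod.snd heq
      have hij := (mem_invSet.mp hp).1
      have hi : i = c := by rw [← hσσ i, hσi, Equiv.swap_apply_left]
      have hj : j = b := by rw [← hσσ j, hσj, Equiv.swap_apply_right]
      rw [hi, hj] at hij
      exact absurd hij (asymm hbc)
    · exfalso
      rw [hF] at heq
      simp only [if_neg h1, if_pos h2] at heq
      obtain ⟨hi', hj'⟩ := hclass _ hp h1
      have hσi : σ i' = b := by rw [← hi']; exact (congrArg Prod.fst heq).symm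
      have hσj : σ j' = c := by rw [← hj']; exact (congrArg Prod.snd heq).symm
      have hij := (mem_invSet.mp hq).1
      have hi : i' = c := by rw [← hσσ i', hσi, Equiv.swap_apply_left]
      have hj : j' = b := by rw [← hσσ j', hσj, Equiv.swap_apply_right]
      rw [hi, hj] at hij
      exact absurd hij (asymm hbc)
    · rw [hF] at heq
      simp only [if_neg h1, if_neg h2] at heq
      exact heq
  have hle := Finset.card_le_card_of_injOn F hmaps hinj
  have := Finset.card_insert_le ((b, c) : Fin n × Fin n) (invSet v)
  unfold invNum
  omega

/- ### words in the generators -/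

theorem simpleT_is_swap (i : Fin (n - 1)) :
    ∃ a a' : Fin n, a < a' ∧ (a : ℕ) + 1 = (a' : ℕ) ∧ simpleT i = Equiv.swap a a' := by
  refine ⟨⟨i.1, by have := i.2; omega⟩, ⟨i.1 + 1, by have := i.2; omega⟩, ?_, rfl, rfl⟩
  simp [Fin.lt_def]

theorem prod_map_append (ω : List (Fin (n - 1))) (i : Fin (n - 1)) :
    (((ω ++ [i]).map simpleT).prod : Equiv.Perm (Fin n)) = (ω.map simpleT).prod * simpleT i := by
  simp

theorem invNum_word_le (ω : List (Fin (n - 1))) :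
    invNum ((ω.map simpleT).prod : Equiv.Perm (Fin n)) ≤ ω.length := by
  induction ω using List.reverseRecOn with
  | nil => simp [invNum_one]
  | append_singleton ω₀ i ih =>
    obtain ⟨a, a', haa, hcons, hsw⟩ := simpleT_is_swap (n := n) i
    rw [prod_map_append, hsw, List.length_append]
    calc invNum ((ω₀.map simpleT).prod * Equiv.swap a a') ≤
        invNum ((ω₀.map simpleT).prod : Equiv.Perm (Fin n)) + 1 :=
        invNum_mul_swap_le _ haa hcons
      _ ≤ ω₀.length + 1 := by omega
      _ = ω₀.length + [i].length := rfl

theorem perm_eq_one_of_strictMono (u : Equiv.Perm (Fin n)) (h : StrictMono (u : Fin n → Fin n)) :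
    u = 1 := by
  have key : ∀ (f : Fin n → Fin n), StrictMono f → ∀ j : Fin n, (j : ℕ) ≤ (f j : ℕ) := by
    intro f hf j
    suffices hs : ∀ jv (hjv : jv < n), jv ≤ (f ⟨jv, hjv⟩ : ℕ) from hs j.1 j.2
    intro jv
    induction jv with
    | zero => exact fun _ => Nat.zero_le _
    | succ k ih =>
      intro hjv
      have hk : k < n := Nat.lt_of_succ_lt hjv
      have h1 : f ⟨k, hk⟩ < f ⟨k + 1, hjv⟩ := hf (by simp [Fin.lt_def])
      have h2 := ih hk
      have h3 := Fin.lt_def.mp h1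
      omega
  have hinv : StrictMono ((u⁻¹ : Equiv.Perm (Fin n)) : Fin n → Fin n) := by
    intro x y hxy
    rcases lt_trichotomy (u⁻¹ x) (u⁻¹ y) with hlt | heq | hgt
    · exact hlt
    · exfalso
      have : x = y := by
        have := congrArg u heq
        rwa [Equiv.Perm.coe_inv, Equiv.apply_symm_apply, Equiv.apply_symm_apply] at this
      exact absurd this hxy.ne
    · exfalso
      have := h hgt
      rw [Equiv.Perm.coe_inv, Equiv.apply_symm_apply, Equiv.apply_symm_apply] at this
      exact absurd (hxy.trans this) (lt_irrefl x)
  apply Equiv.ext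
  intro x
  have h1 : (x : ℕ) ≤ (u x : ℕ) := key u h x
  have h2 : (x : ℕ) ≤ ((u⁻¹ : Equiv.Perm (Fin n)) x : ℕ) := key _ hinv x
  have h3 : (u x : ℕ) ≤ ((u (u⁻¹ x)) : ℕ) := by
    rcases eq_or_lt_of_le (Fin.le_def.mpr h2) with he | hl
    · rw [← he]
    · exact (Fin.le_def.mp (h hl).le)
  rw [Equiv.Perm.coe_inv, Equiv.apply_symm_apply] at h3
  exact Fin.ext (le_antisymm h3 h1)

theorem exists_descent (u : Equiv.Perm (Fin n)) (hu : u ≠ 1) :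
    ∃ (i : Fin (n - 1)) (a a' : Fin n), a < a' ∧ (a : ℕ) + 1 = (a' : ℕ) ∧
      simpleT i = Equiv.swap a a' ∧ u a' < u a := by
  by_contra hcon
  push_neg at hcon
  apply hu
  apply perm_eq_one_of_strictMono
  match n, u, hcon with
  | 0, u, _ => exact fun x => x.elim0
  | (m + 1), u, hcon =>
    apply Fin.strictMono_iff_lt_succ.mpr
    intro i
    have hlt : i.castSucc < i.succ := Fin.castSucc_lt_succ
    have hsw : simpleT (n := m + 1) i = Equiv.swap i.castSucc i.succ := rfl
    have hle := hcon i i.castSucc i.succ hlt (by simp) hsw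
    exact hle.lt_of_ne fun he => absurd (u.injective he) (Fin.ne_of_lt hlt)

theorem exists_word (w : Equiv.Perm (Fin n)) :
    ∃ ω : List (Fin (n - 1)), (ω.map simpleT).prod = w ∧ ω.length = invNum w := by
  suffices H : ∀ k (w : Equiv.Perm (Fin n)), invNum w ≤ k →
      ∃ ω : List (Fin (n - 1)), (ω.map simpleT).prod = w ∧ ω.length = invNum w from
    H (invNum w) w le_rfl
  intro k
  induction k with
  | zero =>
    intro w hk
    have hw1 : w = 1 := by
      by_contra hne
      obtain ⟨i, a, a', haa, hcons, hsw, hdes⟩ := exists_descent w hne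
      have : (a, a') ∈ invSet w := mem_invSet.mpr ⟨haa, hdes⟩
      have := Finset.card_pos.mpr ⟨_, this⟩
      have : 0 < invNum w := this
      omega
    exact ⟨[], by simp [hw1], by simp [hw1, invNum_one]⟩
  | succ k ih =>
    intro w hk
    by_cases hne : w = 1
    · exact ⟨[], by simp [hne], by simp [hne, invNum_one]⟩
    · obtain ⟨i, a, a', haa, hcons, hsw, hdes⟩ := exists_descent w hne
      set w' := w * simpleT i with hw'
      have hw'2 : w' = w * Equiv.swap a a' := by rw [hw', hsw]
      have hlt : invNum w' < invNum w := by
        rw [hw'2]; exact invNum_mul_swap_lt w haa hdes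
      have hback : w' * simpleT i = w := by
        rw [hw', mul_assoc, hsw, Equiv.swap_mul_self, mul_one]
      have hge : invNum w ≤ invNum w' + 1 := by
        calc invNum w = invNum (w' * Equiv.swap a a') := by rw [← hsw, hback]
          _ ≤ invNum w' + 1 := invNum_mul_swap_le w' haa hcons
      obtain ⟨ω', hp, hl⟩ := ih w' (by omega)
      refine ⟨ω' ++ [i], ?_, ?_⟩
      · rw [prod_map_append, hp, hback]
      · rw [List.length_append, hl]
        simp only [List.length_singleton]
        omega

theorem isRedWord_iff {w : Equiv.Perm (Fin n)} {l : List (Fin (n - 1))} :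
    IsRedWord w l ↔ ((l.map simpleT).prod = w ∧ l.length = invNum w) := by
  constructor
  · rintro ⟨h1, h2⟩
    refine ⟨h1, le_antisymm ?_ ?_⟩
    · obtain ⟨ω, hp, hl⟩ := exists_word w
      exact (h2 ω hp).trans hl.le
    · rw [← h1]; exact invNum_word_le l
  · rintro ⟨h1, h2⟩
    refine ⟨h1, fun l' hl' => ?_⟩
    rw [h2, ← hl']
    exact invNum_word_le l'

/- ### the (strong) exchange property -/

theorem exchange (ω : List (Fin (n - 1))) : ∀ {b c : Fin n}, b < c →
    ((ω.map simpleT).prod) c < ((ω.map simpleT).prod) b →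
    ∃ j, (((ω.eraseIdx j).map simpleT).prod) = (ω.map simpleT).prod * Equiv.swap b c := by
  induction ω using List.reverseRecOn with
  | nil =>
    intro b c hbc h
    simp only [List.map_nil, List.prod_nil, Equiv.Perm.one_apply] at h
    exact absurd h (asymm hbc)
  | append_singleton ω₀ i ih =>
    intro b c hbc h
    obtain ⟨a, a', haa, hcons, hsw⟩ := simpleT_is_swap (n := n) i
    have hss : simpleT (n := n) i * simpleT i = 1 := by
      rw [hsw]; exact Equiv.swap_mul_self a a'
    rw [prod_map_append] at h
    have happ : ∀ x, ((ω₀.map simpleT).prod * simpleT i) x =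
        (ω₀.map simpleT).prod (simpleT i x) := fun _ => rfl
    rw [happ, happ] at h
    by_cases hflip : simpleT (n := n) i b < simpleT i c
    · obtain ⟨j, hj⟩ := ih hflip h
      by_cases hjlen : j < ω₀.length
      · refine ⟨j, ?_⟩
        rw [List.eraseIdx_append_of_lt_length hjlen, prod_map_append, prod_map_append, hj]
        have hconj : Equiv.swap (simpleT (n := n) i b) (simpleT i c) =
            simpleT i * Equiv.swap b c * (simpleT i)⁻¹ :=
          Equiv.swap_apply_apply (simpleT i) b c
        rw [hconj]
        group
      · exfalso
        rw [List.eraseIdx_of_length_le (not_lt.mp hjlen)] at hj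
        have h1 : (ω₀.map simpleT).prod * (1 : Equiv.Perm (Fin n)) =
            (ω₀.map simpleT).prod * Equiv.swap (simpleT i b) (simpleT i c) := by
          rw [mul_one]; exact hj
        have h2 := (mul_left_cancel h1).symm
        rw [Equiv.swap_eq_one_iff] at h2
        exact ((simpleT (n := n) i).injective.ne hbc.ne) h2
    · have hflip' : simpleT (n := n) i c < simpleT i b := flip_of_not_lt hbc hflip
      rw [hsw] at hflip'
      rcases swap_flip_classify haa hbc hflip' with ⟨h1, h2⟩ | ⟨h1, h2, h3⟩ | ⟨h1, h2, h3⟩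
      · refine ⟨ω₀.length, ?_⟩
        have he : (ω₀ ++ [i]).eraseIdx ω₀.length = ω₀ := by
          rw [List.eraseIdx_append_of_length_le le_rfl, Nat.sub_self]
          simp
        have hswbc : Equiv.swap b c = simpleT (n := n) i := by rw [h1, h2, hsw]
        rw [he, prod_map_append, hswbc, mul_assoc, hss, mul_one]
      · exact absurd (Fin.lt_def.mp h3) (by have := Fin.lt_def.mp h2; omega)
      · exact absurd (Fin.lt_def.mp h3) (by have := Fin.lt_def.mp h2; omega)

theorem exists_reduced_sublist (ω : List (Fin (n - 1))) :
    ∃ ρ : List (Fin (n - 1)), ρ.Sublist ω ∧ (ρ.map simpleT).prod = (ω.map simpleT).prod ∧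
      ρ.length = invNum ((ω.map simpleT).prod : Equiv.Perm (Fin n)) := by
  induction ω using List.reverseRecOn with
  | nil => exact ⟨[], List.Sublist.refl [], rfl, by simp [invNum_one]⟩
  | append_singleton ω₀ i ih =>
    obtain ⟨ρ, hsub, hprod, hlen⟩ := ih
    obtain ⟨a, a', haa, hcons, hsw⟩ := simpleT_is_swap (n := n) i
    have hss : simpleT (n := n) i * simpleT i = 1 := by
      rw [hsw]; exact Equiv.swap_mul_self a a'
    have hane : ((ω₀.map simpleT).prod : Equiv.Perm (Fin n)) a ≠ (ω₀.map simpleT).prod a' :=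
      ((ω₀.map simpleT).prod : Equiv.Perm (Fin n)).injective.ne haa.ne
    rcases hane.lt_or_gt with hlt | hgt
    · -- ascent case: appending i increases invNum by 1
      have hdesc : ((ω₀.map simpleT).prod * simpleT i : Equiv.Perm (Fin n)) a' <
          ((ω₀.map simpleT).prod * simpleT i) a := by
        have e1 : ((ω₀.map simpleT).prod * simpleT i : Equiv.Perm (Fin n)) a' =
            (ω₀.map simpleT).prod a := by
          rw [Equiv.Perm.mul_apply, hsw, Equiv.swap_apply_right]
        have e2 : ((ω₀.map simpleT).prod * simpleT i : Equiv.Perm (Fin n)) a =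
            (ω₀.map simpleT).prod a' := by
          rw [Equiv.Perm.mul_apply, hsw, Equiv.swap_apply_left]
        rw [e1, e2]; exact hlt
      have hlt2 : invNum ((ω₀.map simpleT).prod : Equiv.Perm (Fin n)) <
          invNum ((ω₀.map simpleT).prod * simpleT i : Equiv.Perm (Fin n)) := by
        have := invNum_mul_swap_lt ((ω₀.map simpleT).prod * simpleT i) haa hdesc
        rw [← hsw, mul_assoc, hss, mul_one] at this
        exact this
      have hle2 : invNum ((ω₀.map simpleT).prod * simpleT i : Equiv.Perm (Fin n)) ≤
          invNum ((ω₀.map simpleT).prod : Equiv.Perm (Fin n)) + 1 := by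
        have := invNum_mul_swap_le ((ω₀.map simpleT).prod : Equiv.Perm (Fin n)) haa hcons
        rw [← hsw] at this
        exact this
      refine ⟨ρ ++ [i], hsub.append_right [i], ?_, ?_⟩
      · rw [prod_map_append, prod_map_append, hprod]
      · rw [List.length_append, prod_map_append, hlen]
        simp only [List.length_singleton]
        omega
    · -- descent case: use exchange on ρ
      have hgt' : ((ρ.map simpleT).prod : Equiv.Perm (Fin n)) a' < (ρ.map simpleT).prod a := by
        rw [hprod]; exact hgt
      obtain ⟨j, hj⟩ := exchange ρ haa hgt'
      have hjprod : (((ρ.eraseIdx j).map simpleT).prod : Equiv.Perm (Fin n)) =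
          ((ω₀ ++ [i]).map simpleT).prod := by
        rw [hj, hprod, prod_map_append, ← hsw]
      have hjlen : j < ρ.length := by
        by_contra hge
        rw [List.eraseIdx_of_length_le (not_lt.mp hge)] at hj
        have h1 : (ρ.map simpleT).prod * (1 : Equiv.Perm (Fin n)) =
            (ρ.map simpleT).prod * Equiv.swap a a' := by rw [mul_one]; exact hj
        have h2 := (mul_left_cancel h1).symm
        rw [Equiv.swap_eq_one_iff] at h2
        exact haa.ne h2
      have hlt2 : invNum ((ω₀.map simpleT).prod * Equiv.swap a a' : Equiv.Perm (Fin n)) <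
          invNum ((ω₀.map simpleT).prod : Equiv.Perm (Fin n)) :=
        invNum_mul_swap_lt _ haa hgt
      have hle2 : invNum ((ω₀.map simpleT).prod : Equiv.Perm (Fin n)) ≤
          invNum ((ω₀.map simpleT).prod * Equiv.swap a a' : Equiv.Perm (Fin n)) + 1 := by
        have := invNum_mul_swap_le ((ω₀.map simpleT).prod * Equiv.swap a a' : Equiv.Perm (Fin n))
          haa hcons
        rw [mul_assoc, Equiv.swap_mul_self, mul_one] at this
        exact this
      refine ⟨ρ.eraseIdx j, (List.eraseIdx_sublist ρ j).trans
        (hsub.trans (List.sublist_append_left ω₀ [i])), hjprod, ?_⟩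
      rw [List.length_eraseIdx_of_lt hjlen, hlen]
      have he : (((ω₀ ++ [i]).map simpleT).prod : Equiv.Perm (Fin n)) =
          (ω₀.map simpleT).prod * Equiv.swap a a' := by
        rw [prod_map_append, hsw]
      rw [he]
      omega

/- ### invariance of `psiMat` under a pattern swap -/

theorem lrMax_rlMin_mul_swap {v : Equiv.Perm (Fin n)} {a b c d : Fin n}
    (hab : a < b) (hbc : b < c) (hcd : c < d)
    (h1 : v b < v a) (h2 : v c < v b) (h3 : v d < v c) :
    lrMax (v * Equiv.swap b c) = lrMax v ∧ rlMin (v * Equiv.swap b c) = rlMin v := by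
  set σ := Equiv.swap b c with hσ
  have hσb : σ b = c := Equiv.swap_apply_left b c
  have hσc : σ c = b := Equiv.swap_apply_right b c
  have hσa : σ a = a := Equiv.swap_apply_of_ne_of_ne hab.ne (hab.trans hbc).ne
  have hσd : σ d = d := Equiv.swap_apply_of_ne_of_ne (hbc.trans hcd).ne' hcd.ne'
  have hσσ : ∀ x, σ (σ x) = x := fun x => Equiv.swap_apply_self b c x
  have happ : ∀ x, (v * σ) x = v (σ x) := fun _ => rfl
  constructor
  · funext j
    apply le_antisymm
    · apply lrMax_le
      intro k hk
      by_cases hkj : σ k ≤ j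
      · rw [happ]
        exact le_lrMax v hkj
      · have hkb : k = b := by
          by_contra hkb
          by_cases hkc : k = c
          · exact hkj (by rw [hkc, hσc]; exact hbc.le.trans (hkc ▸ hk))
          · exact hkj (by rw [Equiv.swap_apply_of_ne_of_ne hkb hkc]; exact hk)
        rw [happ, hkb, hσb]
        exact h2.le.trans ((h1.le).trans (le_lrMax v ((hab.le).trans (hkb ▸ hk))))
    · apply lrMax_le
      intro k hk
      have hvk : v k = (v * σ) (σ k) := by rw [happ, hσσ]
      by_cases hkj : σ k ≤ j
      · rw [hvk]
        exact le_lrMax (v * σ) hkj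
      · have hkb : k = b := by
          by_contra hkb
          by_cases hkc : k = c
          · exact hkj (by rw [hkc, hσc]; exact hbc.le.trans (hkc ▸ hk))
          · exact hkj (by rw [Equiv.swap_apply_of_ne_of_ne hkb hkc]; exact hk)
        have hva : v a = (v * σ) a := by rw [happ, hσa]
        have : v k < v a := hkb ▸ h1
        rw [hva] at this
        exact this.le.trans (le_lrMax (v * σ) ((hab.le).trans (hkb ▸ hk)))
  · funext j
    apply le_antisymm
    · apply le_rlMin
      intro k hk
      have hvk : v k = (v * σ) (σ k) := by rw [happ, hσσ]
      by_cases hkj : j ≤ σ k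
      · rw [hvk]
        exact rlMin_le (v * σ) hkj
      · have hkc : k = c := by
          by_contra hkc
          by_cases hkb : k = b
          · exact hkj (by rw [hkb, hσb]; exact (hkb ▸ hk).trans hbc.le)
          · exact hkj (by rw [Equiv.swap_apply_of_ne_of_ne hkb hkc]; exact hk)
        have hvd : v d = (v * σ) d := by rw [happ, hσd]
        have hlt : v d < v k := hkc ▸ h3
        rw [hvd] at hlt
        exact (rlMin_le (v * σ) ((hkc ▸ hk).trans hcd.le)).trans hlt.le
    · apply le_rlMin
      intro k hk
      by_cases hkj : j ≤ σ k
      · rw [happ]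
        exact rlMin_le v hkj
      · have hkc : k = c := by
          by_contra hkc
          by_cases hkb : k = b
          · exact hkj (by rw [hkb, hσb]; exact (hkb ▸ hk).trans hbc.le)
          · exact hkj (by rw [Equiv.swap_apply_of_ne_of_ne hkb hkc]; exact hk)
        rw [happ, hkc, hσc]
        exact (rlMin_le v ((hkc ▸ hk).trans hcd.le)).trans (h3.le.trans h2.le)

/- ### uniqueness of the 4321-avoiding element in a fiber -/

theorem isMax_iff (u : Equiv.Perm (Fin n)) (j : Fin n) :
    lrMax u j = u j ↔ ∀ k < j, lrMax u k < lrMax u j := by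
  constructor
  · intro h k hk
    obtain ⟨m, hm, hme⟩ := exists_lrMax_eq u k
    have hmj : m < j := lt_of_le_of_lt hm hk
    have h1 : u m ≤ lrMax u j := le_lrMax u hmj.le
    rw [h] at h1
    have h2 : u m ≠ u j := u.injective.ne hmj.ne
    rw [hme, h]
    exact lt_of_le_of_ne h1 h2
  · intro h
    obtain ⟨m, hm, hme⟩ := exists_lrMax_eq u j
    rcases eq_or_lt_of_le hm with he | hl
    · rw [hme, he]
    · exfalso
      have := h m hl
      rw [hme] at this
      exact absurd (lt_of_le_of_lt (le_lrMax u (le_refl m)) this) (lt_irrefl (u m))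

theorem isMin_iff (u : Equiv.Perm (Fin n)) (j : Fin n) :
    rlMin u j = u j ↔ ∀ k, j < k → rlMin u j < rlMin u k := by
  constructor
  · intro h k hk
    obtain ⟨m, hm, hme⟩ := exists_rlMin_eq u k
    have hmj : j < m := lt_of_lt_of_le hk hm
    have h1 : rlMin u j ≤ u m := rlMin_le u hmj.le
    rw [h] at h1
    have h2 : u j ≠ u m := u.injective.ne hmj.ne
    rw [hme, h]
    exact lt_of_le_of_ne h1 h2
  · intro h
    obtain ⟨m, hm, hme⟩ := exists_rlMin_eq u j
    rcases eq_or_lt_of_le hm with he | hl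
    · rw [hme, ← he]
    · exfalso
      have := h m hl
      rw [hme] at this
      exact absurd (lt_of_lt_of_le this (rlMin_le u (le_refl m))) (lt_irrefl (u m))

theorem exists_gt_of_not_isMax {u : Equiv.Perm (Fin n)} {j : Fin n}
    (h : ¬ lrMax u j = u j) : ∃ a, a < j ∧ u j < u a := by
  obtain ⟨m, hm, hme⟩ := exists_lrMax_eq u j
  rcases eq_or_lt_of_le hm with he | hl
  · exact absurd (by rw [hme, he]) h
  · refine ⟨m, hl, ?_⟩
    have h1 : u j ≤ u m := hme ▸ le_lrMax u (le_refl j)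
    exact lt_of_le_of_ne h1 fun he2 => hl.ne (u.injective he2).symm

theorem exists_lt_of_not_isMin {u : Equiv.Perm (Fin n)} {j : Fin n}
    (h : ¬ rlMin u j = u j) : ∃ d, j < d ∧ u d < u j := by
  obtain ⟨m, hm, hme⟩ := exists_rlMin_eq u j
  rcases eq_or_lt_of_le hm with he | hl
  · exact absurd (by rw [hme, ← he]) h
  · refine ⟨m, hl, ?_⟩
    have h1 : u m ≤ u j := hme ▸ rlMin_le u (le_refl j)
    exact lt_of_le_of_ne h1 fun he2 => hl.ne' (u.injective he2)

theorem avoid_unique {w v : Equiv.Perm (Fin n)} (hw : Avoids4321 w) (hv : Avoids4321 v)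
    (hα : lrMax w = lrMax v) (hβ : rlMin w = rlMin v) : w = v := by
  classical
  -- membership in the "middle" set is the same for `w` and `v`
  have hmaxiff : ∀ j, lrMax w j = w j ↔ lrMax v j = v j := by
    intro j
    rw [isMax_iff, isMax_iff, hα]
  have hminiff : ∀ j, rlMin w j = w j ↔ rlMin v j = v j := by
    intro j
    rw [isMin_iff, isMin_iff, hβ]
  set M : Finset (Fin n) :=
    Finset.univ.filter (fun j => ¬ lrMax w j = w j ∧ ¬ rlMin w j = w j) with hM
  have hmemM : ∀ j, j ∈ M ↔ (¬ lrMax w j = w j ∧ ¬ rlMin w j = w j) := by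
    intro j; simp [hM]
  -- agreement off `M`
  have hoff : ∀ j, j ∉ M → w j = v j := by
    intro j hj
    rw [hmemM, not_and_or, not_not, not_not] at hj
    rcases hj with h | h
    · rw [← h, hα, (hmaxiff j).mp h]
    · rw [← h, hβ, (hminiff j).mp h]
  -- `w` and `v` are strictly increasing on `M`
  have hmono : ∀ (u : Equiv.Perm (Fin n)), Avoids4321 u →
      (∀ j ∈ M, ¬ lrMax u j = u j ∧ ¬ rlMin u j = u j) →
      ∀ j₁ ∈ M, ∀ j₂ ∈ M, j₁ < j₂ → u j₁ < u j₂ := by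
    intro u hu hMu j₁ hj₁ j₂ hj₂ h12
    by_contra hcon
    have hne : u j₂ ≠ u j₁ := u.injective.ne h12.ne'
    have hlt : u j₂ < u j₁ := lt_of_le_of_ne (not_lt.mp hcon) hne
    obtain ⟨a, ha, hva⟩ := exists_gt_of_not_isMax (hMu j₁ hj₁).1
    obtain ⟨d, hd, hvd⟩ := exists_lt_of_not_isMin (hMu j₂ hj₂).2
    exact hu ⟨a, j₁, j₂, d, ha, h12, hd, hvd, hlt, hva⟩
  have hMw : ∀ j ∈ M, ¬ lrMax w j = w j ∧ ¬ rlMin w j = w j := fun j hj => (hmemM j).mp hj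
  have hMv : ∀ j ∈ M, ¬ lrMax v j = v j ∧ ¬ rlMin v j = v j := by
    intro j hj
    obtain ⟨h1, h2⟩ := (hmemM j).mp hj
    exact ⟨fun h => h1 ((hmaxiff j).mpr h), fun h => h2 ((hminiff j).mpr h)⟩
  have hwmono := hmono w hw hMw
  have hvmono := hmono v hv hMv
  -- the images of `M` agree
  have hinvM : ∀ x, w⁻¹ x ∈ M ↔ v⁻¹ x ∈ M := by
    have key : ∀ (p q : Equiv.Perm (Fin n)), (∀ j, j ∉ M → p j = q j) →
        ∀ x, p⁻¹ x ∈ M → q⁻¹ x ∈ M := by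
      intro p q hpq x hp
      by_contra hq
      have h1 : p (q⁻¹ x) = x := by rw [hpq _ hq, Equiv.Perm.coe_inv, Equiv.apply_symm_apply]
      have h2 : q⁻¹ x = p⁻¹ x := by
        have h3 := congrArg (fun y => p⁻¹ y) h1
        simp only [Equiv.Perm.coe_inv, Equiv.symm_apply_apply] at h3
        exact h3
      rw [h2] at hq
      exact hq hp
    exact fun x => ⟨key w v hoff x, key v w (fun j hj => (hoff j hj).symm) x⟩
  have himage : M.image w = M.image v := by
    ext x
    simp only [Finset.mem_image]
    constructor
    · rintro ⟨j, hj, rfl⟩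
      refine ⟨v⁻¹ (w j), ?_, v.apply_symm_apply _⟩
      have : w⁻¹ (w j) ∈ M := by rwa [Equiv.Perm.coe_inv, Equiv.symm_apply_apply]
      exact (hinvM (w j)).mp this
    · rintro ⟨j, hj, rfl⟩
      refine ⟨w⁻¹ (v j), ?_, w.apply_symm_apply _⟩
      have : v⁻¹ (v j) ∈ M := by rwa [Equiv.Perm.coe_inv, Equiv.symm_apply_apply]
      exact (hinvM (v j)).mpr this
  -- multiset equality, then sorted-list equality
  have hmulti : M.val.map w = M.val.map v := by
    have e1 := Finset.image_val_of_injOn (f := fun j => w j) (s := M)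
      (Set.injOn_of_injective w.injective)
    have e2 := Finset.image_val_of_injOn (f := fun j => v j) (s := M)
      (Set.injOn_of_injective v.injective)
    calc M.val.map w = (M.image w).val := e1.symm
      _ = (M.image v).val := by rw [himage]
      _ = M.val.map v := e2
  set L := M.sort (· ≤ ·) with hL
  have hLcoe : (L : Multiset (Fin n)) = M.val := Finset.sort_eq M _
  have hperm : (L.map w).Perm (L.map v) := by
    rw [← Multiset.coe_eq_coe]
    have c1 : ((L.map w : List (Fin n)) : Multiset (Fin n)) = M.val.map w := by
      rw [← Multiset.map_coe, hLcoe]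
    have c2 : ((L.map v : List (Fin n)) : Multiset (Fin n)) = M.val.map v := by
      rw [← Multiset.map_coe, hLcoe]
    rw [c1, c2, hmulti]
  have hsorted : L.Pairwise (· < ·) := (Finset.sortedLT_sort M).pairwise
  haveI : Std.Antisymm (α := Fin n) (· < ·) := ⟨fun a b h1 h2 => absurd h2 (asymm h1)⟩
  have hsw : (L.map w).Pairwise (· < ·) := by
    rw [List.pairwise_map]
    exact List.Pairwise.imp_of_mem
      (fun ha hb hab => hwmono _ ((Finset.mem_sort _).mp ha) _ ((Finset.mem_sort _).mp hb) hab)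
      hsorted
  have hsv : (L.map v).Pairwise (· < ·) := by
    rw [List.pairwise_map]
    exact List.Pairwise.imp_of_mem
      (fun ha hb hab => hvmono _ ((Finset.mem_sort _).mp ha) _ ((Finset.mem_sort _).mp hb) hab)
      hsorted
  have heq : L.map w = L.map v := List.Perm.eq_of_pairwise' hsw hsv hperm
  have honM : ∀ j ∈ M, w j = v j := by
    intro j hj
    exact List.map_inj_left.mp heq j ((Finset.mem_sort _).mpr hj)
  apply Equiv.ext
  intro j
  by_cases hj : j ∈ M
  · exact honM j hj
  · exact hoff j hj

/- ### Bruhat minimality -/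

theorem bruhat_key {w : Equiv.Perm (Fin n)} (hw : Avoids4321 w) :
    ∀ k (v : Equiv.Perm (Fin n)), invNum v ≤ k →
      (lrMax w = lrMax v ∧ rlMin w = rlMin v) →
      ∀ ω : List (Fin (n - 1)), (ω.map simpleT).prod = v → ω.length = invNum v →
        ∃ ρ, ρ.Sublist ω ∧ IsRedWord w ρ := by
  have base : ∀ (v : Equiv.Perm (Fin n)), Avoids4321 v →
      (lrMax w = lrMax v ∧ rlMin w = rlMin v) →
      ∀ ω : List (Fin (n - 1)), (ω.map simpleT).prod = v → ω.length = invNum v →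
        ∃ ρ, ρ.Sublist ω ∧ IsRedWord w ρ := by
    intro v hva hαβ ω h1 h2
    have hwv : w = v := avoid_unique hw hva hαβ.1 hαβ.2
    exact ⟨ω, List.Sublist.refl ω, isRedWord_iff.mpr ⟨by rw [h1, hwv], by rw [h2, hwv]⟩⟩
  intro k
  induction k with
  | zero =>
    intro v hk hαβ ω h1 h2
    by_cases hva : Avoids4321 v
    · exact base v hva hαβ ω h1 h2
    · exfalso
      obtain ⟨a, b, c, d, hab, hbc, hcd, h3, h4, h5⟩ := not_not.mp hva
      have : (b, c) ∈ invSet v := mem_invSet.mpr ⟨hbc, h4⟩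
      have hpos : 0 < invNum v := Finset.card_pos.mpr ⟨_, this⟩
      omega
  | succ k ih =>
    intro v hk hαβ ω h1 h2
    by_cases hva : Avoids4321 v
    · exact base v hva hαβ ω h1 h2
    · obtain ⟨a, b, c, d, hab, hbc, hcd, h3, h4, h5⟩ := not_not.mp hva
      set v' := v * Equiv.swap b c with hv'
      have hlt : invNum v' < invNum v := invNum_mul_swap_lt v hbc h4
      have hswap := lrMax_rlMin_mul_swap hab hbc hcd h5 h4 h3
      have hαβ' : lrMax w = lrMax v' ∧ rlMin w = rlMin v' :=
        ⟨hαβ.1.trans hswap.1.symm, hαβ.2.trans hswap.2.symm⟩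
      obtain ⟨j, hj⟩ := exchange ω hbc (by rw [h1]; exact h4)
      rw [h1] at hj
      obtain ⟨ρ', hρ'sub, hρ'prod, hρ'len⟩ := exists_reduced_sublist (ω.eraseIdx j)
      rw [hj] at hρ'prod hρ'len
      obtain ⟨ρ, hρ, hred⟩ := ih v' (by omega) hαβ' ρ' hρ'prod hρ'len
      exact ⟨ρ, hρ.trans (hρ'sub.trans (List.eraseIdx_sublist ω j)), hred⟩

theorem bruhat_min {w v : Equiv.Perm (Fin n)} (hw : Avoids4321 w)
    (hψ : psiMat w = psiMat v) : bruhatLE w v := by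
  obtain ⟨ω, hp, hl⟩ := exists_word v
  obtain ⟨ρ, hsub, hred⟩ :=
    bruhat_key hw (invNum v) v le_rfl ((psiMat_iff w v).mpr hψ) ω hp hl
  exact ⟨ω, isRedWord_iff.mpr ⟨hp, hl⟩, ρ, hsub, hred⟩

end DCAux
/-- `α_w = α_v` and `β_w = β_v` iff `w` and `v` have the same image in
the double Catalan monoid; moreover in each such class the (unique) 4321-avoiding
permutation is Bruhat-minimal. -/
theorem stmt_11 (n : ℕ) :
    (∀ w v : Equiv.Perm (Fin n),
      (lrMax w = lrMax v ∧ rlMin w = rlMin v) ↔ psiMat w = psiMat v) ∧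
    (∀ w v : Equiv.Perm (Fin n), Avoids4321 w → psiMat w = psiMat v → bruhatLE w v) := by
  exact ⟨fun w v => DCAux.psiMat_iff w v, fun w v hw h => DCAux.bruhat_min hw h⟩
end
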